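/- arXiv:2311.11996 — 7 statements merged into one kernel-verified Lean document; each statement's English description precedes it below -/
import Mathlib

section
/- Let P be a polymatroid of rank r on [m] with rk_P({m}) = r. Then the following identity holds in ℚ[t_1,…,t_m]: Σ_{k ∈ I(P)∩ℤ^m} Π_{i=1}^{m} t_i^{(k_i)} = Σ_{k ∈ B(P)∩ℤ^m} (Π_{i=1}^{m−1} t_i^{(k_i)}) · t_m^{[k_m]}. -/
open MvPolynomial Finset

/-- The rank-function axioms of a polymatroid on a finite ground set. -/
def IsPolymatroid {α : Type*} [Fintype α] [DecidableEq α] (rk : Finset α → ℕ) : Prop :=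
  rk ∅ = 0 ∧ (∀ I J : Finset α, I ⊆ J → rk I ≤ rk J) ∧
    ∀ I J : Finset α, rk (I ∩ J) + rk (I ∪ J) ≤ rk I + rk J

/-- The base polytope `B(P)` of a polymatroid. -/
def basePolytope {α : Type*} [Fintype α] (rk : Finset α → ℕ) : Set (α → ℝ) :=
  {x | (∀ i, 0 ≤ x i) ∧ (∑ i, x i) = (rk Finset.univ : ℝ) ∧
      ∀ I : Finset α, (∑ i ∈ I, x i) ≤ (rk I : ℝ)}

/-- The independence polytope `I(P)` of a polymatroid. -/
def indepPolytope {α : Type*} [Fintype α] (rk : Finset α → ℕ) : Set (α → ℝ) :=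
  {x | (∀ i, 0 ≤ x i) ∧ ∀ I : Finset α, (∑ i ∈ I, x i) ≤ (rk I : ℝ)}

/-- `binomLower p k` is `p^{(k)} = binom(p + k - 1, k) = p(p+1)⋯(p+k-1)/k!`. -/
noncomputable def binomLower {σ K : Type*} [Field K] (p : MvPolynomial σ K) (k : ℕ) :
    MvPolynomial σ K :=
  (k.factorial : K)⁻¹ • ∏ j ∈ Finset.range k, (p + MvPolynomial.C (j : K))

/-- `binomUpper p k` is `p^{[k]} = binom(p + k, k) = (p+1)(p+2)⋯(p+k)/k!`. -/
noncomputable def binomUpper {σ K : Type*} [Field K] (p : MvPolynomial σ K) (k : ℕ) :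
    MvPolynomial σ K :=
  (k.factorial : K)⁻¹ • ∏ j ∈ Finset.range k, (p + MvPolynomial.C ((j : K) + 1))

lemma binomLower_zero {σ : Type*} (p : MvPolynomial σ ℚ) : binomLower p 0 = 1 := by
  simp [binomLower]

lemma binomUpper_zero {σ : Type*} (p : MvPolynomial σ ℚ) : binomUpper p 0 = 1 := by
  simp [binomUpper]

lemma binomUpper_succ {σ : Type*} (p : MvPolynomial σ ℚ) (k : ℕ) :
    binomUpper p (k + 1) = binomUpper p k + binomLower p (k + 1) := by
  have hb : (k.factorial : ℚ) ≠ 0 := by exact_mod_cast k.factorial_ne_zero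
  have ha : ((k + 1).factorial : ℚ) ≠ 0 := by exact_mod_cast (k + 1).factorial_ne_zero
  have key : ∀ x y : MvPolynomial σ ℚ,
      ((k + 1).factorial : ℚ) • x = ((k + 1).factorial : ℚ) • y → x = y := by
    intro x y h
    have := congrArg (fun z => (((k + 1).factorial : ℚ))⁻¹ • z) h
    simpa [inv_smul_smul₀ ha] using this
  apply key
  rw [binomUpper, binomUpper, binomLower, smul_add, smul_inv_smul₀ ha, smul_inv_smul₀ ha,
    smul_smul]
  have hfact : ((k + 1).factorial : ℚ) = ((k : ℚ) + 1) * k.factorial := by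
    rw [Nat.factorial_succ]; push_cast; ring
  rw [hfact, mul_assoc, mul_inv_cancel₀ hb, mul_one, prod_range_succ, prod_range_succ']
  have hcast : ∀ j : ℕ, ((j + 1 : ℕ) : ℚ) = (j : ℚ) + 1 := by intro j; push_cast; ring
  simp only [hcast, Nat.cast_zero, map_zero, add_zero]
  rw [smul_eq_C_mul, map_add, map_natCast, map_one]
  ring

lemma binomUpper_eq_sum {σ : Type*} (p : MvPolynomial σ ℚ) (k : ℕ) :
    binomUpper p k = ∑ j ∈ Finset.range (k + 1), binomLower p j := by
  induction k with
  | zero => simp [binomUpper_zero, binomLower_zero]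
  | succ n ih => rw [Finset.sum_range_succ, ← ih, binomUpper_succ]

/-- For a polymatroid `P` of rank `r` on a ground set `{0, …, m}` (of size `m + 1`) whose last
element has full rank `r`, one has
`Σ_{κ ∈ I(P)∩ℤ^{m+1}} Π_i t_i^{(κ_i)} = Σ_{κ ∈ B(P)∩ℤ^{m+1}} (Π_{i ≠ last} t_i^{(κ_i)}) · t_last^{[κ_last]}`
in `ℚ[t_0, …, t_m]`. -/
theorem snapper_sum_indep_eq_sum_base
    {m r : ℕ} (rk : Finset (Fin (m + 1)) → ℕ) (hP : IsPolymatroid rk)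
    (hrank : rk Finset.univ = r) (hlast : rk {Fin.last m} = r) :
    (∑ᶠ (κ : Fin (m + 1) → ℕ) (_ : (fun i => (κ i : ℝ)) ∈ indepPolytope rk),
        ∏ i, binomLower (MvPolynomial.X i : MvPolynomial (Fin (m + 1)) ℚ) (κ i)) =
      ∑ᶠ (κ : Fin (m + 1) → ℕ) (_ : (fun i => (κ i : ℝ)) ∈ basePolytope rk),
        (∏ i : Fin m, binomLower (MvPolynomial.X i.castSucc) (κ i.castSucc)) *
          binomUpper (MvPolynomial.X (Fin.last m)) (κ (Fin.last m)) := by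
  classical
  obtain ⟨hemp, hmono, hsub⟩ := hP
  have hrk_le : ∀ I : Finset (Fin (m + 1)), rk I ≤ r :=
    fun I => hrank ▸ hmono I univ (subset_univ I)
  -- every set containing the last element has full rank
  have hfull : ∀ I : Finset (Fin (m + 1)), Fin.last m ∈ I → rk I = r := by
    intro I hI
    refine le_antisymm (hrk_le I) ?_
    have h1 : I ∩ (Iᶜ ∪ {Fin.last m}) = {Fin.last m} := by
      ext a
      simp only [Finset.mem_inter, Finset.mem_union, Finset.mem_compl, Finset.mem_singleton]
      constructor
      · rintro ⟨ha, hb | hb⟩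
        · exact absurd ha hb
        · exact hb
      · rintro rfl; exact ⟨hI, Or.inr rfl⟩
    have h2 : I ∪ (Iᶜ ∪ {Fin.last m}) = univ := by
      ext a
      simp only [Finset.mem_union, Finset.mem_compl, Finset.mem_singleton, Finset.mem_univ,
        iff_true]
      by_cases h : a ∈ I
      · exact Or.inl h
      · exact Or.inr (Or.inl h)
    have hs := hsub I (Iᶜ ∪ {Fin.last m})
    rw [h1, h2, hlast, hrank] at hs
    have := hrk_le (Iᶜ ∪ {Fin.last m})
    omega
  set Q : (Fin m → ℕ) → Prop :=
    fun μ => ∀ J : Finset (Fin m), ∑ i ∈ J, μ i ≤ rk (J.map Fin.castSuccEmb) with hQdef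
  have hQsum : ∀ μ, Q μ → ∑ i, μ i ≤ r := fun μ h => (h univ).trans (hrk_le _)
  -- characterization of integer points of the independence polytope
  have hindep : ∀ κ : Fin (m + 1) → ℕ,
      ((fun i => (κ i : ℝ)) ∈ indepPolytope rk) ↔
        ((Q fun i => κ i.castSucc) ∧ ∑ i, κ i ≤ r) := by
    intro κ
    constructor
    · rintro ⟨-, h⟩
      constructor
      · intro J
        have h1 := h (J.map Fin.castSuccEmb)
        have h2 : ∑ i ∈ J.map Fin.castSuccEmb, κ i ≤ rk (J.map Fin.castSuccEmb) := by
          beta_reduce at h1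
          exact_mod_cast h1
        rwa [Finset.sum_map] at h2
      · have h1 := h univ
        rw [hrank] at h1
        beta_reduce at h1
        exact_mod_cast h1
    · rintro ⟨hq, htot⟩
      refine ⟨fun i => Nat.cast_nonneg _, fun I => ?_⟩
      by_cases hl : Fin.last m ∈ I
      · rw [hfull I hl]
        have h1 : ∑ i ∈ I, κ i ≤ ∑ i, κ i :=
          Finset.sum_le_sum_of_subset (subset_univ I)
        have h2 := h1.trans htot
        beta_reduce
        exact_mod_cast h2
      · set J : Finset (Fin m) := univ.filter (fun i => i.castSucc ∈ I) with hJ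
        have hIJ : I = J.map Fin.castSuccEmb := by
          ext a
          simp only [Finset.mem_map, hJ, Finset.mem_filter, Finset.mem_univ, true_and,
            Fin.castSuccEmb, Fin.castAddEmb, Function.Embedding.coeFn_mk]
          constructor
          · intro ha
            have hne : a ≠ Fin.last m := fun h => hl (h ▸ ha)
            refine ⟨a.castPred hne, ?_, Fin.castSucc_castPred a hne⟩
            rwa [Fin.castSucc_castPred]
          · rintro ⟨i, hi, rfl⟩; exact hi
        rw [hIJ, Finset.sum_map]
        have := hq J
        exact_mod_cast this
  -- characterization of integer points of the base polytope
  have hbase : ∀ κ : Fin (m + 1) → ℕ,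
      ((fun i => (κ i : ℝ)) ∈ basePolytope rk) ↔
        ((Q fun i => κ i.castSucc) ∧ ∑ i, κ i = r) := by
    intro κ
    constructor
    · rintro ⟨hpos, hsum, h⟩
      refine ⟨((hindep κ).mp ⟨hpos, h⟩).1, ?_⟩
      rw [hrank] at hsum
      beta_reduce at hsum
      exact_mod_cast hsum
    · rintro ⟨hq, htot⟩
      have h2 := (hindep κ).mpr ⟨hq, le_of_eq htot⟩
      refine ⟨h2.1, ?_, h2.2⟩
      rw [hrank]
      beta_reduce
      exact_mod_cast htot
  set Sμ : Finset (Fin m → ℕ) :=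
    (Fintype.piFinset fun _ => Finset.range (r + 1)).filter Q with hSμ
  have hSμ_mem : ∀ μ : Fin m → ℕ, μ ∈ Sμ ↔ Q μ := by
    intro μ
    rw [hSμ, Finset.mem_filter]
    constructor
    · exact And.right
    · intro h
      refine ⟨?_, h⟩
      rw [Fintype.mem_piFinset]
      intro i
      rw [Finset.mem_range]
      have h1 := h {i}
      rw [Finset.sum_singleton] at h1
      exact Nat.lt_succ_of_le (h1.trans (hrk_le _))
  -- the two embeddings
  have einjA : Function.Injective
      (fun p : (Fin m → ℕ) × ℕ => (Fin.snoc p.1 p.2 : Fin (m + 1) → ℕ)) := by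
    rintro ⟨a, b⟩ ⟨c, d⟩ h
    simp only at h
    have h1 : a = c := by
      funext i
      have := congrFun h i.castSucc
      simpa using this
    have h2 : b = d := by
      have := congrFun h (Fin.last m)
      simpa using this
    simp [h1, h2]
  have einjB : Function.Injective
      (fun μ : Fin m → ℕ => (Fin.snoc μ (r - ∑ i, μ i) : Fin (m + 1) → ℕ)) := by
    intro a b h
    funext i
    have := congrFun h i.castSucc
    simpa using this
  set eA : (Fin m → ℕ) × ℕ ↪ (Fin (m + 1) → ℕ) :=
    ⟨fun p => Fin.snoc p.1 p.2, einjA⟩ with heA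
  set eB : (Fin m → ℕ) ↪ (Fin (m + 1) → ℕ) :=
    ⟨fun μ => Fin.snoc μ (r - ∑ i, μ i), einjB⟩ with heB
  set DA : Finset (Fin (m + 1) → ℕ) :=
    ((Sμ ×ˢ Finset.range (r + 1)).filter fun p => (∑ i, p.1 i) + p.2 ≤ r).map eA with hDA
  set DB : Finset (Fin (m + 1) → ℕ) := Sμ.map eB with hDB
  -- set identifications
  have hsetA : {κ : Fin (m + 1) → ℕ | (fun i => (κ i : ℝ)) ∈ indepPolytope rk} = ↑DA := by
    ext κ
    rw [Set.mem_setOf_eq, hindep, Finset.mem_coe, hDA, Finset.mem_map]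
    constructor
    · rintro ⟨hq, htot⟩
      refine ⟨(fun i => κ i.castSucc, κ (Fin.last m)), ?_, ?_⟩
      · rw [Finset.mem_filter, Finset.mem_product]
        refine ⟨⟨(hSμ_mem _).mpr hq, ?_⟩, ?_⟩
        · rw [Finset.mem_range]
          exact Nat.lt_succ_of_le ((Finset.single_le_sum (f := fun i => κ i)
            (fun i _ => Nat.zero_le _) (Finset.mem_univ (Fin.last m))).trans htot)
        · rw [← Fin.sum_univ_castSucc]
          exact htot
      · exact Fin.snoc_init_self κ
    · rintro ⟨⟨μ, j⟩, hp, rfl⟩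
      rw [Finset.mem_filter, Finset.mem_product] at hp
      obtain ⟨⟨hμ, -⟩, hle⟩ := hp
      constructor
      · have hco : (fun i : Fin m => (eA (μ, j)) i.castSucc) = μ := by
          funext i
          simp [heA]
        rw [hco]
        exact (hSμ_mem μ).mp hμ
      · rw [Fin.sum_univ_castSucc]
        simpa [heA] using hle
  have hsetB : {κ : Fin (m + 1) → ℕ | (fun i => (κ i : ℝ)) ∈ basePolytope rk} = ↑DB := by
    ext κ
    rw [Set.mem_setOf_eq, hbase, Finset.mem_coe, hDB, Finset.mem_map]
    constructor
    · rintro ⟨hq, htot⟩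
      refine ⟨fun i => κ i.castSucc, (hSμ_mem _).mpr hq, ?_⟩
      have hsum : (∑ i : Fin m, κ i.castSucc) + κ (Fin.last m) = r := by
        rw [← Fin.sum_univ_castSucc]
        exact htot
      have hlasteq : r - ∑ i : Fin m, κ i.castSucc = κ (Fin.last m) := by omega
      show (Fin.snoc (fun i => κ i.castSucc) (r - ∑ i : Fin m, κ i.castSucc) : Fin (m + 1) → ℕ) = κ
      rw [hlasteq]
      exact Fin.snoc_init_self κ
    · rintro ⟨μ, hμ, rfl⟩
      have hq := (hSμ_mem μ).mp hμ
      have hqs := hQsum μ hq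
      constructor
      · have hco : (fun i : Fin m => (eB μ) i.castSucc) = μ := by
          funext i
          simp [heB]
        rw [hco]
        exact hq
      · rw [Fin.sum_univ_castSucc]
        have h1 : ∀ i : Fin m, (eB μ) i.castSucc = μ i := by intro i; simp [heB]
        have h2 : (eB μ) (Fin.last m) = r - ∑ i, μ i := by simp [heB]
        simp only [h1, h2]
        omega
  -- convert both finsums to finite sums
  have hL : (∑ᶠ (κ : Fin (m + 1) → ℕ) (_ : (fun i => (κ i : ℝ)) ∈ indepPolytope rk),
        ∏ i, binomLower (MvPolynomial.X i : MvPolynomial (Fin (m + 1)) ℚ) (κ i)) =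
      ∑ κ ∈ DA, ∏ i, binomLower (MvPolynomial.X i : MvPolynomial (Fin (m + 1)) ℚ) (κ i) := by
    rw [← finsum_mem_coe_finset, ← hsetA]
    rfl
  have hR : (∑ᶠ (κ : Fin (m + 1) → ℕ) (_ : (fun i => (κ i : ℝ)) ∈ basePolytope rk),
        (∏ i : Fin m, binomLower (MvPolynomial.X i.castSucc : MvPolynomial (Fin (m + 1)) ℚ)
          (κ i.castSucc)) * binomUpper (MvPolynomial.X (Fin.last m)) (κ (Fin.last m))) =
      ∑ κ ∈ DB, (∏ i : Fin m, binomLower (MvPolynomial.X i.castSucc :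
          MvPolynomial (Fin (m + 1)) ℚ) (κ i.castSucc)) *
        binomUpper (MvPolynomial.X (Fin.last m)) (κ (Fin.last m)) := by
    rw [← finsum_mem_coe_finset, ← hsetB]
    rfl
  rw [hL, hR, hDA, hDB, Finset.sum_map, Finset.sum_map, Finset.sum_filter,
    Finset.sum_product]
  refine Finset.sum_congr rfl ?_
  intro μ hμ
  have hqs := hQsum μ ((hSμ_mem μ).mp hμ)
  have hfsnoc : ∀ j : ℕ,
      (∏ i, binomLower (MvPolynomial.X i : MvPolynomial (Fin (m + 1)) ℚ)
        ((Fin.snoc μ j : Fin (m + 1) → ℕ) i)) =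
      (∏ i : Fin m, binomLower (MvPolynomial.X i.castSucc : MvPolynomial (Fin (m + 1)) ℚ)
        (μ i)) * binomLower (MvPolynomial.X (Fin.last m)) j := by
    intro j
    rw [Fin.prod_univ_castSucc]
    simp
  have hAside : ∀ j : ℕ, (eA (μ, j) : Fin (m + 1) → ℕ) = Fin.snoc μ j := by
    intro j; rfl
  have hBside : (eB μ : Fin (m + 1) → ℕ) = Fin.snoc μ (r - ∑ i, μ i) := rfl
  calc (∑ j ∈ Finset.range (r + 1), if (∑ i, μ i) + j ≤ r then
          ∏ i, binomLower (MvPolynomial.X i : MvPolynomial (Fin (m + 1)) ℚ) ((eA (μ, j)) i)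
        else 0)
      = ∑ j ∈ (Finset.range (r + 1)).filter (fun j => (∑ i, μ i) + j ≤ r),
          (∏ i : Fin m, binomLower (MvPolynomial.X i.castSucc :
            MvPolynomial (Fin (m + 1)) ℚ) (μ i)) *
          binomLower (MvPolynomial.X (Fin.last m)) j := by
        rw [Finset.sum_filter]
        refine Finset.sum_congr rfl ?_
        intro j _
        rw [hAside, hfsnoc]
    _ = ∑ j ∈ Finset.range (r - ∑ i, μ i + 1),
          (∏ i : Fin m, binomLower (MvPolynomial.X i.castSucc :
            MvPolynomial (Fin (m + 1)) ℚ) (μ i)) *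
          binomLower (MvPolynomial.X (Fin.last m)) j := by
        congr 1
        ext j
        simp only [Finset.mem_filter, Finset.mem_range]
        omega
    _ = (∏ i : Fin m, binomLower (MvPolynomial.X i.castSucc :
          MvPolynomial (Fin (m + 1)) ℚ) (μ i)) *
        binomUpper (MvPolynomial.X (Fin.last m)) (r - ∑ i, μ i) := by
        rw [← Finset.mul_sum, ← binomUpper_eq_sum]
    _ = (∏ i : Fin m, binomLower (MvPolynomial.X i.castSucc :
          MvPolynomial (Fin (m + 1)) ℚ) ((eB μ) i.castSucc)) *
        binomUpper (MvPolynomial.X (Fin.last m)) ((eB μ) (Fin.last m)) := by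
        rw [hBside]
        simp
end

section
/- Let P be a polymatroid of rank r on [m] with rk_P({m}) = r, and define integers a_k (for k ∈ ℤ_{≥0}^m with |k| ≤ r) by the expansion Σ_{k ∈ I(P)∩ℤ^m} t^{(k)} = Σ_k (−1)^{r−|k|} a_k t^{[k]} in ℚ[t_1,…,t_m]. Then, in ℚ[t_1,…,t_m,t_0], Σ_k a_k t^k t_0^{r−|k|} = Σ_{k ∈ B(P)∩ℤ^m} t_m^{k_m} · Π_{i=1}^{m−1} f_i(k), where f_i(k) = t_i^{k_i} + t_0·t_i^{k_i−1} if k_i ≥ 1 and f_i(k) = 1 if k_i = 0. -/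
open MvPolynomial Finset

namespace SnapAux

open MvPolynomial Finset

/-! ### Generic algebraic lemmas about `binomLower`/`binomUpper` -/

lemma binomLower_eq {σ : Type*} (p : MvPolynomial σ ℚ) (k : ℕ) :
    binomLower p k = binomUpper p k - (if k = 0 then 0 else binomUpper p (k - 1)) := by
  cases k with
  | zero => simp [binomLower, binomUpper]
  | succ n =>
    simp only [if_neg (Nat.succ_ne_zero n), Nat.succ_sub_one]
    rw [binomLower, binomUpper, binomUpper, Finset.prod_range_succ', Finset.prod_range_succ]
    have hfac : (MvPolynomial.C ((n.factorial : ℚ))⁻¹ : MvPolynomial σ ℚ)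
        = MvPolynomial.C (((n+1).factorial : ℚ))⁻¹ * MvPolynomial.C ((n : ℚ) + 1) := by
      rw [← map_mul]
      congr 1
      rw [Nat.factorial_succ]
      push_cast
      field_simp
    rw [smul_eq_C_mul, smul_eq_C_mul, smul_eq_C_mul]
    simp only [Nat.cast_add_one, Nat.cast_zero, map_zero, add_zero, Nat.cast_add, Nat.cast_one]
    rw [hfac]
    ring

lemma prod_fac (k : ℕ) : ∏ j ∈ Finset.range k, ((j : ℚ) - k) = (-1)^k * k.factorial := by
  have h1 : ∀ j ∈ Finset.range k, ((j : ℚ) - k) = (-1) * ((k : ℚ) - j) := by intros; ring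
  rw [Finset.prod_congr rfl h1, Finset.prod_mul_distrib, Finset.prod_const]
  congr 1
  · simp
  · rw [← Finset.prod_range_reflect]
    have h2 : ∀ j ∈ Finset.range k, ((k : ℚ) - ↑(k - 1 - j)) = ((j+1 : ℕ) : ℚ) := by
      intro j hj
      rw [Finset.mem_range] at hj
      push_cast [Nat.cast_sub (by omega : j ≤ k - 1), Nat.cast_sub (by omega : 1 ≤ k)]
      ring
    rw [Finset.prod_congr rfl h2, ← Nat.cast_prod, Finset.prod_range_add_one_eq_factorial]

lemma eval_binomUpper (x : ℚ) (k : ℕ) {σ : Type*} (q : σ → ℚ) (i : σ) (hx : q i = x) :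
    MvPolynomial.eval q (binomUpper (MvPolynomial.X i) k)
      = (k.factorial : ℚ)⁻¹ * ∏ j ∈ Finset.range k, (x + j + 1) := by
  rw [binomUpper, smul_eq_C_mul, map_mul, eval_C, map_prod]
  congr 1
  apply Finset.prod_congr rfl
  intro j _
  simp [hx]
  ring

lemma eval_binomUpper_zero (n k : ℕ) (hnk : n < k) {σ : Type*} (q : σ → ℚ) (i : σ)
    (hx : q i = -(n:ℚ) - 1) :
    MvPolynomial.eval q (binomUpper (MvPolynomial.X i) k) = 0 := by
  rw [eval_binomUpper (-(n:ℚ)-1) k q i hx]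
  rw [Finset.prod_eq_zero (Finset.mem_range.mpr hnk)]
  · ring
  · ring

lemma eval_binomUpper_diag (k : ℕ) {σ : Type*} (q : σ → ℚ) (i : σ)
    (hx : q i = -(k:ℚ) - 1) :
    MvPolynomial.eval q (binomUpper (MvPolynomial.X i) k) = (-1)^k := by
  rw [eval_binomUpper (-(k:ℚ)-1) k q i hx]
  have hc : ∀ j ∈ Finset.range k, (-(k:ℚ) - 1 + j + 1) = ((j:ℚ) - k) := by intros; ring
  rw [Finset.prod_congr rfl hc, prod_fac]
  have : (k.factorial : ℚ) ≠ 0 := Nat.cast_ne_zero.mpr k.factorial_ne_zero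
  field_simp

lemma lin_indep {n : ℕ} {T : Finset (Fin n → ℕ)} {c : (Fin n → ℕ) → ℚ}
    (h : ∑ κ ∈ T, MvPolynomial.C (c κ) *
        ∏ i, binomUpper (MvPolynomial.X i : MvPolynomial (Fin n) ℚ) (κ i) = 0) :
    ∀ κ ∈ T, c κ = 0 := by
  by_contra hc
  push_neg at hc
  obtain ⟨κ₁, hκ₁T, hκ₁⟩ := hc
  have hne : (T.filter (fun κ => c κ ≠ 0)).Nonempty :=
    ⟨κ₁, Finset.mem_filter.mpr ⟨hκ₁T, hκ₁⟩⟩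
  obtain ⟨κ₀, hκ₀mem, hmin⟩ : ∃ κ₀ ∈ T.filter (fun κ => c κ ≠ 0),
      ∀ κ ∈ T.filter (fun κ => c κ ≠ 0), ¬ κ < κ₀ := by
    obtain ⟨x, hx⟩ := Finset.exists_minimal hne
    exact ⟨x, hx.1, fun y hy => hx.not_lt hy⟩
  rw [Finset.mem_filter] at hκ₀mem
  set q : Fin n → ℚ := fun i => -(κ₀ i : ℚ) - 1 with hq
  have hev := congrArg (MvPolynomial.eval q) h
  rw [map_sum, map_zero, Finset.sum_eq_single κ₀ ?_ ?_] at hev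
  · rw [map_mul, eval_C, map_prod] at hev
    have heval : ∀ i, MvPolynomial.eval q (binomUpper (MvPolynomial.X i) (κ₀ i)) = (-1)^(κ₀ i) :=
      fun i => eval_binomUpper_diag (κ₀ i) q i rfl
    rw [Finset.prod_congr rfl (fun i _ => heval i), Finset.prod_pow_eq_pow_sum] at hev
    rcases mul_eq_zero.mp hev with h1 | h2
    · exact hκ₀mem.2 h1
    · exact pow_ne_zero _ (by norm_num : (-1:ℚ) ≠ 0) h2
  · intro κ hκT hne'
    by_cases hc0 : c κ = 0
    · simp [hc0]
    · have hκf : κ ∈ T.filter (fun κ => c κ ≠ 0) := Finset.mem_filter.mpr ⟨hκT, hc0⟩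
      have hnotlt := hmin κ hκf
      have hex : ∃ i, κ₀ i < κ i := by
        by_contra hle
        push_neg at hle
        exact hnotlt (lt_of_le_of_ne (fun i => hle i) hne')
      obtain ⟨i, hi⟩ := hex
      rw [map_mul, map_prod,
        Finset.prod_eq_zero (Finset.mem_univ i) (eval_binomUpper_zero (κ₀ i) (κ i) hi q i rfl)]
      ring
  · intro h'; exact absurd hκ₀mem.1 h'

/-! ### Combinatorial set-up -/

variable {m : ℕ}

def add1 (κ : Fin (m+1) → ℕ) (S : Finset (Fin (m+1))) : Fin (m+1) → ℕ :=
  fun i => κ i + (if i ∈ S then 1 else 0)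

def sub1 (κ : Fin (m+1) → ℕ) (S : Finset (Fin (m+1))) : Fin (m+1) → ℕ :=
  fun i => κ i - (if i ∈ S then 1 else 0)

def indepN (rk : Finset (Fin (m+1)) → ℕ) (κ : Fin (m+1) → ℕ) : Prop :=
  ∀ I : Finset (Fin (m+1)), ∑ i ∈ I, κ i ≤ rk I

def baseN (rk : Finset (Fin (m+1)) → ℕ) (κ : Fin (m+1) → ℕ) : Prop :=
  (∑ i, κ i = rk Finset.univ) ∧ indepN rk κ

lemma indep_iff (rk : Finset (Fin (m+1)) → ℕ) (κ : Fin (m+1) → ℕ) :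
    ((fun i => (κ i : ℝ)) ∈ indepPolytope rk) ↔ indepN rk κ := by
  simp [indepPolytope, indepN, ← Nat.cast_sum, Nat.cast_le]

lemma base_iff (rk : Finset (Fin (m+1)) → ℕ) (κ : Fin (m+1) → ℕ) :
    ((fun i => (κ i : ℝ)) ∈ basePolytope rk) ↔ baseN rk κ := by
  simp [basePolytope, baseN, indepN, ← Nat.cast_sum, Nat.cast_le, Nat.cast_inj]

lemma sub1_add1 (κ : Fin (m+1) → ℕ) (S : Finset (Fin (m+1))) : sub1 (add1 κ S) S = κ := by
  funext i; simp only [sub1, add1]; split <;> omega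

lemma add1_sub1 (κ : Fin (m+1) → ℕ) (S : Finset (Fin (m+1))) (h : ∀ i ∈ S, κ i ≠ 0) :
    add1 (sub1 κ S) S = κ := by
  funext i; simp only [sub1, add1]
  by_cases hi : i ∈ S
  · have := h i hi; simp [hi]; omega
  · simp [hi]

lemma add1_ne_zero (κ : Fin (m+1) → ℕ) (S : Finset (Fin (m+1))) {i : Fin (m+1)} (hi : i ∈ S) :
    add1 κ S i ≠ 0 := by simp [add1, hi]

lemma sum_add1 (κ : Fin (m+1) → ℕ) (S : Finset (Fin (m+1))) :
    ∑ i, add1 κ S i = (∑ i, κ i) + S.card := by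
  simp only [add1]
  rw [Finset.sum_add_distrib]
  congr 1
  rw [Finset.sum_ite_mem, Finset.univ_inter, Finset.card_eq_sum_ones]

lemma sub1_le (κ : Fin (m+1) → ℕ) (S : Finset (Fin (m+1))) (i : Fin (m+1)) :
    sub1 κ S i ≤ κ i := by simp only [sub1]; omega

def embT (T : Finset (Fin m)) : Finset (Fin (m+1)) :=
  T.map ⟨Fin.castSucc, Fin.castSucc_injective m⟩

lemma last_not_mem_embT (T : Finset (Fin m)) : Fin.last m ∉ embT T := by
  simp only [embT, Finset.mem_map]
  rintro ⟨j, -, hj⟩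
  exact absurd hj (Fin.castSucc_lt_last j).ne

lemma mem_embT {T : Finset (Fin m)} {j : Fin m} : j.castSucc ∈ embT T ↔ j ∈ T := by
  simp [embT, (Fin.castSucc_injective m).eq_iff]

lemma card_embT (T : Finset (Fin m)) : (embT T).card = T.card := Finset.card_map _

lemma sum_powerset_map {α β M : Type*} [AddCommMonoid M] (e : α ↪ β) (s : Finset α)
    (f : Finset β → M) :
    ∑ U ∈ (s.map e).powerset, f U = ∑ T ∈ s.powerset, f (T.map e) := by
  classical
  refine (Finset.sum_bij' (fun T _ => T.map e)
    (fun U _ => U.preimage e e.injective.injOn) ?_ ?_ ?_ ?_ ?_).symm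
  · intro T hT
    exact Finset.mem_powerset.mpr (Finset.map_subset_map.mpr (Finset.mem_powerset.mp hT))
  · intro U hU
    rw [Finset.mem_powerset] at hU ⊢
    intro x hx
    rw [Finset.mem_preimage] at hx
    have := hU hx
    rw [Finset.mem_map] at this
    obtain ⟨y, hy, hye⟩ := this
    rwa [← e.injective hye]
  · intro T _; exact Finset.preimage_map e T
  · intro U hU
    rw [Finset.mem_powerset] at hU
    ext b
    simp only [Finset.mem_map, Finset.mem_preimage]
    constructor
    · rintro ⟨a, ha, rfl⟩; exact ha
    · intro hb
      have := hU hb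
      rw [Finset.mem_map] at this
      obtain ⟨y, _, rfl⟩ := this
      exact ⟨y, hb, rfl⟩
  · intro T _; rfl

section Rk

variable {r : ℕ} {rk : Finset (Fin (m+1)) → ℕ}
  (hmono : ∀ I J : Finset (Fin (m+1)), I ⊆ J → rk I ≤ rk J)
  (hrank : rk Finset.univ = r) (hlast : rk {Fin.last m} = r)

include hmono hrank hlast

lemma rk_of_last_mem {I : Finset (Fin (m+1))} (h : Fin.last m ∈ I) : rk I = r :=
  le_antisymm (hrank ▸ hmono I Finset.univ (Finset.subset_univ I))
    (hlast ▸ hmono {Fin.last m} I (Finset.singleton_subset_iff.mpr h))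

lemma indepN_iff {κ : Fin (m+1) → ℕ} :
    indepN rk κ ↔ ((∑ i, κ i) ≤ r ∧
      ∀ I : Finset (Fin (m+1)), Fin.last m ∉ I → ∑ i ∈ I, κ i ≤ rk I) := by
  constructor
  · exact fun h => ⟨hrank ▸ h Finset.univ, fun I _ => h I⟩
  · rintro ⟨h1, h2⟩ I
    by_cases hI : Fin.last m ∈ I
    · rw [rk_of_last_mem hmono hrank hlast hI]
      exact le_trans (Finset.sum_le_sum_of_subset (Finset.subset_univ I)) h1
    · exact h2 I hI

lemma baseN_iff {κ : Fin (m+1) → ℕ} :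
    baseN rk κ ↔ ((∑ i, κ i) = r ∧
      ∀ I : Finset (Fin (m+1)), Fin.last m ∉ I → ∑ i ∈ I, κ i ≤ rk I) := by
  rw [baseN, hrank, indepN_iff hmono hrank hlast]
  constructor
  · rintro ⟨h1, _, h3⟩; exact ⟨h1, h3⟩
  · rintro ⟨h1, h2⟩; exact ⟨h1, le_of_eq h1, h2⟩

omit hlast in
lemma coord_le_of_indepN {κ : Fin (m+1) → ℕ} (h : indepN rk κ) (i : Fin (m+1)) : κ i ≤ r := by
  have := h {i}
  rw [Finset.sum_singleton] at this
  exact le_trans this (hrank ▸ hmono {i} Finset.univ (Finset.subset_univ _))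

open scoped Classical in
lemma comb (lam : Fin (m+1) → ℕ) :
    (∑ S ∈ (Finset.univ : Finset (Fin (m+1))).powerset,
      (if indepN rk (add1 lam S) then ((-1:ℚ)^S.card) else 0))
    = (-1)^(r - ∑ i, lam i) *
      ∑ T ∈ (Finset.univ : Finset (Fin m)).powerset,
        (if baseN rk (add1 lam (embT T)) then (1:ℚ) else 0) := by
  have huniv : (Finset.univ : Finset (Fin (m+1))) = insert (Fin.last m) (embT Finset.univ) := by
    ext i
    simp only [Finset.mem_univ, true_iff, Finset.mem_insert, embT, Finset.mem_map,
      Finset.mem_univ, true_and, Function.Embedding.coeFn_mk]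
    rcases Fin.eq_castSucc_or_eq_last i with ⟨j, rfl⟩ | h
    · exact Or.inr ⟨j, rfl⟩
    · exact Or.inl h
  obtain ⟨L, hL⟩ : ∃ L, (∑ i, lam i) = L := ⟨_, rfl⟩
  rw [hL]
  rw [huniv, Finset.sum_powerset_insert (last_not_mem_embT _), embT, sum_powerset_map,
    sum_powerset_map, ← Finset.sum_add_distrib, Finset.mul_sum]
  apply Finset.sum_congr rfl
  intro T _
  have hE : Finset.map ⟨Fin.castSucc, Fin.castSucc_injective m⟩ T = embT T := rfl
  rw [hE]
  have hlastE : Fin.last m ∉ embT T := last_not_mem_embT T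
  set s : ℕ := L + T.card with hs
  set P' : Prop := ∀ I : Finset (Fin (m+1)), Fin.last m ∉ I →
    ∑ i ∈ I, add1 lam (embT T) i ≤ rk I with hP'
  have hsumE : ∑ i, add1 lam (embT T) i = s := by rw [sum_add1, card_embT, hL]
  have hsumIns : ∑ i, add1 lam (insert (Fin.last m) (embT T)) i = s + 1 := by
    rw [sum_add1, Finset.card_insert_of_notMem hlastE, card_embT, hL]; omega
  have hagree : ∀ I : Finset (Fin (m+1)), Fin.last m ∉ I →
      ∑ i ∈ I, add1 lam (insert (Fin.last m) (embT T)) i = ∑ i ∈ I, add1 lam (embT T) i := by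
    intro I hI
    apply Finset.sum_congr rfl
    intro i hiI
    have hine : i ≠ Fin.last m := fun h => hI (h ▸ hiI)
    simp only [add1, Finset.mem_insert]
    congr 1
    simp [hine]
  have hindE : indepN rk (add1 lam (embT T)) ↔ (s ≤ r ∧ P') := by
    rw [indepN_iff hmono hrank hlast, hsumE]
  have hindIns : indepN rk (add1 lam (insert (Fin.last m) (embT T))) ↔ (s + 1 ≤ r ∧ P') := by
    rw [indepN_iff hmono hrank hlast, hsumIns]
    constructor
    · rintro ⟨h1, h2⟩
      exact ⟨h1, fun I hI => (hagree I hI) ▸ h2 I hI⟩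
    · rintro ⟨h1, h2⟩
      exact ⟨h1, fun I hI => (hagree I hI) ▸ h2 I hI⟩
  have hbaseE : baseN rk (add1 lam (embT T)) ↔ (s = r ∧ P') := by
    rw [baseN_iff hmono hrank hlast, hsumE]
  have hcardE : (embT T).card = T.card := card_embT T
  have hcardIns : (insert (Fin.last m) (embT T)).card = T.card + 1 := by
    rw [Finset.card_insert_of_notMem hlastE, hcardE]
  rw [hcardE, hcardIns]
  by_cases hp : P'
  · by_cases hsr : s + 1 ≤ r
    · rw [if_pos (hindE.mpr ⟨by omega, hp⟩), if_pos (hindIns.mpr ⟨hsr, hp⟩),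
        if_neg (fun h => by have := (hbaseE.mp h).1; omega)]
      rw [pow_succ]
      ring
    · by_cases hseq : s = r
      · rw [if_pos (hindE.mpr ⟨le_of_eq hseq, hp⟩), if_neg (fun h => hsr (hindIns.mp h).1),
          if_pos (hbaseE.mpr ⟨hseq, hp⟩)]
        have hrl : r - L = T.card := by omega
        rw [hrl, mul_one, add_zero]
      · rw [if_neg (fun h => hseq (by have := (hindE.mp h).1; omega)),
          if_neg (fun h => hsr (hindIns.mp h).1),
          if_neg (fun h => hseq (hbaseE.mp h).1)]
        ring
  · rw [if_neg (fun h => hp (hindE.mp h).2), if_neg (fun h => hp (hindIns.mp h).2),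
      if_neg (fun h => hp (hbaseE.mp h).2)]
    ring

end Rk

/-! ### Expansion of the product of `binomLower`s -/

open scoped Classical in
lemma prod_binomLower_expand (κ : Fin (m+1) → ℕ) :
    ∏ i, binomLower (MvPolynomial.X i : MvPolynomial (Fin (m+1)) ℚ) (κ i)
    = ∑ S ∈ (Finset.univ : Finset (Fin (m+1))).powerset,
        (if ∀ i ∈ S, κ i ≠ 0 then
          ((-1:ℚ)^S.card) • ∏ i, binomUpper (MvPolynomial.X i) (sub1 κ S i)
        else 0) := by
  have h1 : ∀ i : Fin (m+1), binomLower (MvPolynomial.X i : MvPolynomial (Fin (m+1)) ℚ) (κ i)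
      = (-(if κ i = 0 then 0 else binomUpper (MvPolynomial.X i) (κ i - 1)))
        + binomUpper (MvPolynomial.X i) (κ i) := by
    intro i; rw [binomLower_eq]; ring
  rw [Finset.prod_congr rfl (fun i _ => h1 i), Finset.prod_add]
  apply Finset.sum_congr rfl
  intro S _
  by_cases hS : ∀ i ∈ S, κ i ≠ 0
  · rw [if_pos hS]
    have h2 : ∀ i ∈ S,
        (-(if κ i = 0 then (0 : MvPolynomial (Fin (m+1)) ℚ)
            else binomUpper (MvPolynomial.X i) (κ i - 1)))
        = (-1) * binomUpper (MvPolynomial.X i) (sub1 κ S i) := by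
      intro i hi
      rw [if_neg (hS i hi)]
      have hsub : sub1 κ S i = κ i - 1 := by simp [sub1, hi]
      rw [hsub]; ring
    have h3 : ∏ i ∈ Finset.univ \ S,
        binomUpper (MvPolynomial.X i : MvPolynomial (Fin (m+1)) ℚ) (κ i)
        = ∏ i ∈ Finset.univ \ S, binomUpper (MvPolynomial.X i) (sub1 κ S i) := by
      apply Finset.prod_congr rfl
      intro i hi
      rw [Finset.mem_sdiff] at hi
      simp [sub1, hi.2]
    rw [Finset.prod_congr rfl h2, Finset.prod_mul_distrib, Finset.prod_const, h3,
      smul_eq_C_mul, map_pow, map_neg, map_one, mul_assoc, ← Finset.compl_eq_univ_sdiff,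
      Finset.prod_mul_prod_compl]
  · rw [if_neg hS]
    push_neg at hS
    obtain ⟨i, hiS, hi0⟩ := hS
    rw [Finset.prod_eq_zero hiS (by rw [if_pos hi0, neg_zero]), zero_mul]

/-! ### Monomials in the homogenized ring -/

noncomputable def Mn (e : ℕ) (κ : Fin (m+1) → ℕ) : MvPolynomial (Fin (m+2)) ℚ :=
  MvPolynomial.monomial (Finsupp.equivFunOnFinite.symm (Fin.cons e κ)) (1:ℚ)

lemma Mn_eq (e : ℕ) (κ : Fin (m+1) → ℕ) :
    Mn e κ = (MvPolynomial.X 0 : MvPolynomial (Fin (m+2)) ℚ) ^ e *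
      ∏ i : Fin (m+1), (MvPolynomial.X i.succ) ^ (κ i) := by
  rw [Mn, monomial_eq, map_one, one_mul,
    Finsupp.prod_fintype _ _ (fun i => pow_zero _), Fin.prod_univ_succ]
  simp [Finsupp.equivFunOnFinite]
  rfl

open scoped Classical in
lemma rhs_expand (β : Fin (m+1) → ℕ) :
    (MvPolynomial.X (Fin.last m).succ : MvPolynomial (Fin (m + 2)) ℚ) ^ β (Fin.last m) *
      ∏ j : Fin m,
        (if β j.castSucc = 0 then 1
         else MvPolynomial.X j.castSucc.succ ^ β j.castSucc +
           MvPolynomial.X 0 * MvPolynomial.X j.castSucc.succ ^ (β j.castSucc - 1))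
    = ∑ T ∈ (Finset.univ : Finset (Fin m)).powerset,
        (if ∀ j ∈ T, β j.castSucc ≠ 0 then Mn T.card (sub1 β (embT T)) else 0) := by
  have hfac : ∀ j : Fin m, (if β j.castSucc = 0 then (1 : MvPolynomial (Fin (m+2)) ℚ)
      else MvPolynomial.X j.castSucc.succ ^ β j.castSucc +
        MvPolynomial.X 0 * MvPolynomial.X j.castSucc.succ ^ (β j.castSucc - 1))
      = (if β j.castSucc = 0 then 0
          else MvPolynomial.X 0 * MvPolynomial.X j.castSucc.succ ^ (β j.castSucc - 1))
        + MvPolynomial.X j.castSucc.succ ^ β j.castSucc := by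
    intro j
    by_cases h : β j.castSucc = 0
    · rw [if_pos h, if_pos h, h, pow_zero, zero_add]
    · rw [if_neg h, if_neg h]; ring
  rw [Finset.prod_congr rfl (fun j _ => hfac j), Finset.prod_add, Finset.mul_sum]
  apply Finset.sum_congr rfl
  intro T _
  by_cases hT : ∀ j ∈ T, β j.castSucc ≠ 0
  · rw [if_pos hT]
    have h2 : ∀ j ∈ T, (if β j.castSucc = 0 then (0 : MvPolynomial (Fin (m+2)) ℚ)
        else MvPolynomial.X 0 * MvPolynomial.X j.castSucc.succ ^ (β j.castSucc - 1))
        = MvPolynomial.X 0 * MvPolynomial.X j.castSucc.succ ^ (sub1 β (embT T) j.castSucc) := by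
      intro j hj
      rw [if_neg (hT j hj)]
      have hs : sub1 β (embT T) j.castSucc = β j.castSucc - 1 := by
        simp [sub1, mem_embT, hj]
      rw [hs]
    have h4 : ∀ j ∈ Finset.univ \ T,
        (MvPolynomial.X j.castSucc.succ : MvPolynomial (Fin (m+2)) ℚ) ^ β j.castSucc
        = MvPolynomial.X j.castSucc.succ ^ (sub1 β (embT T) j.castSucc) := by
      intro j hj
      rw [Finset.mem_sdiff] at hj
      have hs : sub1 β (embT T) j.castSucc = β j.castSucc := by
        simp [sub1, mem_embT, hj.2]
      rw [hs]
    have h5 : sub1 β (embT T) (Fin.last m) = β (Fin.last m) := by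
      simp [sub1, last_not_mem_embT T]
    rw [Finset.prod_congr rfl h2, Finset.prod_congr rfl h4, Finset.prod_mul_distrib,
      Finset.prod_const, Mn_eq, Fin.prod_univ_castSucc, h5,
      ← Finset.prod_mul_prod_compl T (fun j => (MvPolynomial.X j.castSucc.succ :
          MvPolynomial (Fin (m+2)) ℚ) ^ (sub1 β (embT T) j.castSucc)),
      Finset.compl_eq_univ_sdiff]
    ring
  · rw [if_neg hT]
    push_neg at hT
    obtain ⟨j, hjT, hj0⟩ := hT
    rw [Finset.prod_eq_zero hjT (by rw [if_pos hj0]), zero_mul, mul_zero]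

end SnapAux


set_option maxHeartbeats 1000000 in
/-- For a polymatroid `P` of rank `r` on the ground set `{0, …, m}` (of size `m + 1`) whose last
element has full rank `r`, with `a_κ` defined by
`Σ_{κ ∈ I(P)∩ℤ^{m+1}} t^{(κ)} = Σ_κ (-1)^{r-|κ|} a_κ t^{[κ]}`, one has, in the polynomial ring
`ℚ[t_0, t_1, …, t_m, t_{m+1}]` (where variable `0` is the auxiliary homogenizing variable `t₀`
and variable `j.succ` corresponds to the ground set element `j`):
`Σ_κ a_κ t^κ t₀^{r-|κ|} = Σ_{κ ∈ B(P)∩ℤ^{m+1}} t_last^{κ_last} · Π_{j ≠ last} f_j(κ)`, where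
`f_j(κ) = t_j^{κ_j} + t₀ t_j^{κ_j - 1}` if `κ_j ≥ 1` and `f_j(κ) = 1` if `κ_j = 0`. -/
theorem homogenized_transformed_snapper_eq_sum_over_base
    {m r : ℕ} (rk : Finset (Fin (m + 1)) → ℕ) (hP : IsPolymatroid rk)
    (hrank : rk Finset.univ = r) (hlast : rk {Fin.last m} = r)
    (a : (Fin (m + 1) → ℕ) → ℤ)
    (ha : (∑ᶠ (κ : Fin (m + 1) → ℕ) (_ : (fun i => (κ i : ℝ)) ∈ indepPolytope rk),
            ∏ i, binomLower (MvPolynomial.X i : MvPolynomial (Fin (m + 1)) ℚ) (κ i)) =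
          ∑ᶠ (κ : Fin (m + 1) → ℕ) (_ : ∑ i, κ i ≤ r),
            MvPolynomial.C ((-1 : ℚ) ^ (r - ∑ i, κ i) * (a κ : ℚ)) *
              ∏ i, binomUpper (MvPolynomial.X i) (κ i)) :
    (∑ᶠ (κ : Fin (m + 1) → ℕ) (_ : ∑ i, κ i ≤ r),
        MvPolynomial.monomial
          (Finsupp.equivFunOnFinite.symm (Fin.cons (r - ∑ i, κ i) κ)) ((a κ : ℚ))) =
      ∑ᶠ (κ : Fin (m + 1) → ℕ) (_ : (fun i => (κ i : ℝ)) ∈ basePolytope rk),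
        (MvPolynomial.X (Fin.last m).succ : MvPolynomial (Fin (m + 2)) ℚ) ^ κ (Fin.last m) *
          ∏ j : Fin m,
            (if κ j.castSucc = 0 then 1
             else MvPolynomial.X j.castSucc.succ ^ κ j.castSucc +
               MvPolynomial.X 0 * MvPolynomial.X j.castSucc.succ ^ (κ j.castSucc - 1)) := by
  classical
  obtain ⟨-, hmono, -⟩ := hP
  -- the finite box containing all relevant lattice points
  obtain ⟨Box, mem_Box⟩ : ∃ B : Finset (Fin (m+1) → ℕ), ∀ κ, κ ∈ B ↔ ∀ i, κ i ≤ r :=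
    ⟨Fintype.piFinset (fun _ => Finset.range (r+1)), by
      intro κ; simp [Fintype.mem_piFinset, Nat.lt_succ_iff]⟩
  have coordBound : ∀ {κ : Fin (m+1) → ℕ}, SnapAux.indepN rk κ → κ ∈ Box := by
    intro κ h
    exact (mem_Box κ).mpr (fun i => SnapAux.coord_le_of_indepN hmono hrank h i)
  have sumBound : ∀ {κ : Fin (m+1) → ℕ}, (∑ i, κ i) ≤ r → κ ∈ Box := by
    intro κ h
    refine (mem_Box κ).mpr (fun i => le_trans ?_ h)
    exact Finset.single_le_sum (fun j _ => Nat.zero_le _) (Finset.mem_univ i)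
  have baseSum : ∀ {κ : Fin (m+1) → ℕ}, SnapAux.baseN rk κ → (∑ i, κ i) = r := by
    intro κ h; rw [h.1, hrank]
  -- the counting function
  obtain ⟨Nq, hNq⟩ : ∃ N : (Fin (m+1) → ℕ) → ℚ, ∀ lam, N lam =
      ∑ T ∈ (Finset.univ : Finset (Fin m)).powerset,
        if SnapAux.baseN rk (SnapAux.add1 lam (SnapAux.embT T)) then (1:ℚ) else 0 :=
    ⟨_, fun _ => rfl⟩
  -- convert the three finsums into finite sums
  have hIndConv : (∑ᶠ (κ : Fin (m + 1) → ℕ) (_ : (fun i => (κ i : ℝ)) ∈ indepPolytope rk),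
      ∏ i, binomLower (MvPolynomial.X i : MvPolynomial (Fin (m + 1)) ℚ) (κ i))
      = ∑ κ ∈ Box.filter (fun κ => SnapAux.indepN rk κ),
          ∏ i, binomLower (MvPolynomial.X i) (κ i) := by
    apply finsum_cond_eq_sum_of_cond_iff
    intro κ _
    rw [SnapAux.indep_iff, Finset.mem_filter]
    exact ⟨fun h => ⟨coordBound h, h⟩, fun h => h.2⟩
  have hKConv : (∑ᶠ (κ : Fin (m + 1) → ℕ) (_ : ∑ i, κ i ≤ r),
        MvPolynomial.C ((-1 : ℚ) ^ (r - ∑ i, κ i) * (a κ : ℚ)) *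
          ∏ i, binomUpper (MvPolynomial.X i) (κ i))
      = ∑ κ ∈ Box.filter (fun κ => (∑ i, κ i) ≤ r),
          MvPolynomial.C ((-1 : ℚ) ^ (r - ∑ i, κ i) * (a κ : ℚ)) *
            ∏ i, binomUpper (MvPolynomial.X i) (κ i) := by
    apply finsum_cond_eq_sum_of_cond_iff
    intro κ _
    rw [Finset.mem_filter]
    exact ⟨fun h => ⟨sumBound h, h⟩, fun h => h.2⟩
  -- Step A : expansion of the sum of falling binomials over independent points
  have stepA : (∑ κ ∈ Box.filter (fun κ => SnapAux.indepN rk κ),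
        ∏ i, binomLower (MvPolynomial.X i : MvPolynomial (Fin (m + 1)) ℚ) (κ i))
      = ∑ lam ∈ Box, MvPolynomial.C ((-1:ℚ)^(r - ∑ i, lam i) * Nq lam) *
          ∏ i, binomUpper (MvPolynomial.X i) (lam i) := by
    rw [Finset.sum_congr rfl (fun κ _ => SnapAux.prod_binomLower_expand κ), Finset.sum_comm]
    have e8 : ∀ S ∈ (Finset.univ : Finset (Fin (m+1))).powerset,
        (∑ κ ∈ Box.filter (fun κ => SnapAux.indepN rk κ),
          (if ∀ i ∈ S, κ i ≠ 0 then
            ((-1:ℚ)^S.card) • ∏ i, binomUpper (MvPolynomial.X i : MvPolynomial (Fin (m+1)) ℚ)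
              (SnapAux.sub1 κ S i)
          else 0))
        = ∑ lam ∈ Box,
            (if SnapAux.indepN rk (SnapAux.add1 lam S) then
              ((-1:ℚ)^S.card) • ∏ i, binomUpper (MvPolynomial.X i : MvPolynomial (Fin (m+1)) ℚ)
                (lam i)
            else 0) := by
      intro S _
      rw [← Finset.sum_filter, ← Finset.sum_filter]
      refine Finset.sum_bij' (fun κ _ => SnapAux.sub1 κ S) (fun lam _ => SnapAux.add1 lam S)
        ?_ ?_ ?_ ?_ ?_
      · intro κ hκ
        simp only [Finset.mem_filter] at hκ ⊢
        obtain ⟨⟨hκB, hκI⟩, hκ0⟩ := hκ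
        refine ⟨(mem_Box _).mpr (fun i => le_trans (SnapAux.sub1_le κ S i)
          ((mem_Box κ).mp hκB i)), ?_⟩
        rwa [SnapAux.add1_sub1 κ S hκ0]
      · intro lam hlam
        simp only [Finset.mem_filter] at hlam ⊢
        obtain ⟨hlamB, hlamI⟩ := hlam
        exact ⟨⟨(mem_Box _).mpr (fun i => SnapAux.coord_le_of_indepN hmono hrank hlamI i),
          hlamI⟩, fun i hi => SnapAux.add1_ne_zero lam S hi⟩
      · intro κ hκ
        simp only [Finset.mem_filter] at hκ
        exact SnapAux.add1_sub1 κ S hκ.2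
      · intro lam _
        exact SnapAux.sub1_add1 lam S
      · intro κ _
        rfl
    rw [Finset.sum_congr rfl e8, Finset.sum_comm]
    apply Finset.sum_congr rfl
    intro lam _
    have e3 : (∑ S ∈ (Finset.univ : Finset (Fin (m+1))).powerset,
        (if SnapAux.indepN rk (SnapAux.add1 lam S) then
          ((-1:ℚ)^S.card) • ∏ i, binomUpper (MvPolynomial.X i : MvPolynomial (Fin (m+1)) ℚ)
            (lam i)
        else 0))
        = (∑ S ∈ (Finset.univ : Finset (Fin (m+1))).powerset,
            (if SnapAux.indepN rk (SnapAux.add1 lam S) then ((-1:ℚ)^S.card) else 0)) •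
          ∏ i, binomUpper (MvPolynomial.X i : MvPolynomial (Fin (m+1)) ℚ) (lam i) := by
      rw [Finset.sum_smul]
      apply Finset.sum_congr rfl
      intro S _
      split <;> simp
    rw [e3, SnapAux.comb hmono hrank hlast lam, ← hNq, smul_eq_C_mul]
  -- put `ha` into finite-sum form and compare coefficients
  rw [hIndConv, hKConv, stepA, Finset.sum_filter] at ha
  have h0 : (∑ κ ∈ Box, MvPolynomial.C
      (((-1:ℚ)^(r - ∑ i, κ i) * Nq κ) -
        (if (∑ i, κ i) ≤ r then ((-1 : ℚ) ^ (r - ∑ i, κ i) * (a κ : ℚ)) else 0)) *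
      ∏ i, binomUpper (MvPolynomial.X i : MvPolynomial (Fin (m+1)) ℚ) (κ i)) = 0 := by
    have e4 : ∀ κ ∈ Box, MvPolynomial.C
        (((-1:ℚ)^(r - ∑ i, κ i) * Nq κ) -
          (if (∑ i, κ i) ≤ r then ((-1 : ℚ) ^ (r - ∑ i, κ i) * (a κ : ℚ)) else 0)) *
        ∏ i, binomUpper (MvPolynomial.X i : MvPolynomial (Fin (m+1)) ℚ) (κ i)
        = (MvPolynomial.C ((-1:ℚ)^(r - ∑ i, κ i) * Nq κ) *
            ∏ i, binomUpper (MvPolynomial.X i) (κ i)) -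
          (if (∑ i, κ i) ≤ r then
            MvPolynomial.C ((-1 : ℚ) ^ (r - ∑ i, κ i) * (a κ : ℚ)) *
              ∏ i, binomUpper (MvPolynomial.X i) (κ i)
          else 0) := by
      intro κ _
      by_cases h : (∑ i, κ i) ≤ r
      · rw [if_pos h, if_pos h, map_sub, sub_mul]
      · rw [if_neg h, if_neg h, sub_zero, sub_zero]
    rw [Finset.sum_congr rfl e4, Finset.sum_sub_distrib, ha, sub_self]
  have hcoeff := SnapAux.lin_indep h0
  have hNa : ∀ κ : Fin (m+1) → ℕ, (∑ i, κ i) ≤ r → (a κ : ℚ) = Nq κ := by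
    intro κ hκ
    have h1 := hcoeff κ (sumBound hκ)
    rw [if_pos hκ, ← mul_sub] at h1
    rcases mul_eq_zero.mp h1 with h2 | h3
    · exact absurd h2 (pow_ne_zero _ (by norm_num))
    · linarith [sub_eq_zero.mp h3]
  -- now prove the target identity
  have hLConv : (∑ᶠ (κ : Fin (m + 1) → ℕ) (_ : ∑ i, κ i ≤ r),
        MvPolynomial.monomial
          (Finsupp.equivFunOnFinite.symm (Fin.cons (r - ∑ i, κ i) κ)) ((a κ : ℚ)))
      = ∑ κ ∈ Box.filter (fun κ => (∑ i, κ i) ≤ r),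
          MvPolynomial.monomial
            (Finsupp.equivFunOnFinite.symm (Fin.cons (r - ∑ i, κ i) κ)) ((a κ : ℚ)) := by
    apply finsum_cond_eq_sum_of_cond_iff
    intro κ _
    rw [Finset.mem_filter]
    exact ⟨fun h => ⟨sumBound h, h⟩, fun h => h.2⟩
  have hBConv : (∑ᶠ (κ : Fin (m + 1) → ℕ) (_ : (fun i => (κ i : ℝ)) ∈ basePolytope rk),
        (MvPolynomial.X (Fin.last m).succ : MvPolynomial (Fin (m + 2)) ℚ) ^ κ (Fin.last m) *
          ∏ j : Fin m,
            (if κ j.castSucc = 0 then 1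
             else MvPolynomial.X j.castSucc.succ ^ κ j.castSucc +
               MvPolynomial.X 0 * MvPolynomial.X j.castSucc.succ ^ (κ j.castSucc - 1)))
      = ∑ κ ∈ Box.filter (fun κ => SnapAux.baseN rk κ),
          (MvPolynomial.X (Fin.last m).succ : MvPolynomial (Fin (m + 2)) ℚ) ^ κ (Fin.last m) *
            ∏ j : Fin m,
              (if κ j.castSucc = 0 then 1
               else MvPolynomial.X j.castSucc.succ ^ κ j.castSucc +
                 MvPolynomial.X 0 * MvPolynomial.X j.castSucc.succ ^ (κ j.castSucc - 1)) := by
    apply finsum_cond_eq_sum_of_cond_iff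
    intro κ _
    rw [SnapAux.base_iff, Finset.mem_filter]
    exact ⟨fun h => ⟨sumBound (le_of_eq (baseSum h)), h⟩, fun h => h.2⟩
  rw [hLConv, hBConv]
  -- expand the left side into the double sum
  have stepL : (∑ κ ∈ Box.filter (fun κ => (∑ i, κ i) ≤ r),
        MvPolynomial.monomial
          (Finsupp.equivFunOnFinite.symm (Fin.cons (r - ∑ i, κ i) κ)) ((a κ : ℚ)))
      = ∑ κ ∈ Box, ∑ T ∈ (Finset.univ : Finset (Fin m)).powerset,
          (if SnapAux.baseN rk (SnapAux.add1 κ (SnapAux.embT T)) then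
            SnapAux.Mn T.card κ else 0) := by
    have e5 : ∀ κ ∈ Box.filter (fun κ => (∑ i, κ i) ≤ r),
        MvPolynomial.monomial
          (Finsupp.equivFunOnFinite.symm (Fin.cons (r - ∑ i, κ i) κ)) ((a κ : ℚ))
        = ∑ T ∈ (Finset.univ : Finset (Fin m)).powerset,
            (if SnapAux.baseN rk (SnapAux.add1 κ (SnapAux.embT T)) then
              SnapAux.Mn T.card κ else 0) := by
      intro κ hκ
      rw [Finset.mem_filter] at hκ
      have e6 : MvPolynomial.monomial
          (Finsupp.equivFunOnFinite.symm (Fin.cons (r - ∑ i, κ i) κ)) ((a κ : ℚ))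
          = (Nq κ) • SnapAux.Mn (r - ∑ i, κ i) κ := by
        rw [hNa κ hκ.2, SnapAux.Mn, smul_eq_C_mul, MvPolynomial.C_mul_monomial, mul_one]
      rw [e6, hNq, Finset.sum_smul]
      apply Finset.sum_congr rfl
      intro T _
      by_cases h : SnapAux.baseN rk (SnapAux.add1 κ (SnapAux.embT T))
      · rw [if_pos h, if_pos h, one_smul]
        have h1 := baseSum h
        rw [SnapAux.sum_add1, SnapAux.card_embT] at h1
        have h2 : r - (∑ i, κ i) = T.card := by omega
        rw [h2]
      · rw [if_neg h, if_neg h, zero_smul]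
    rw [Finset.sum_congr rfl e5, Finset.sum_filter]
    apply Finset.sum_congr rfl
    intro κ _
    by_cases h : (∑ i, κ i) ≤ r
    · rw [if_pos h]
    · rw [if_neg h]
      symm
      apply Finset.sum_eq_zero
      intro T _
      rw [if_neg]
      intro hb
      have h1 := baseSum hb
      rw [SnapAux.sum_add1] at h1
      omega
  rw [stepL]
  -- expand the right side via `rhs_expand`
  have stepR : (∑ κ ∈ Box.filter (fun κ => SnapAux.baseN rk κ),
        (MvPolynomial.X (Fin.last m).succ : MvPolynomial (Fin (m + 2)) ℚ) ^ κ (Fin.last m) *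
          ∏ j : Fin m,
            (if κ j.castSucc = 0 then 1
             else MvPolynomial.X j.castSucc.succ ^ κ j.castSucc +
               MvPolynomial.X 0 * MvPolynomial.X j.castSucc.succ ^ (κ j.castSucc - 1)))
      = ∑ κ ∈ Box.filter (fun κ => SnapAux.baseN rk κ),
          ∑ T ∈ (Finset.univ : Finset (Fin m)).powerset,
            (if ∀ j ∈ T, κ j.castSucc ≠ 0 then
              SnapAux.Mn T.card (SnapAux.sub1 κ (SnapAux.embT T)) else 0) :=
    Finset.sum_congr rfl (fun β _ => SnapAux.rhs_expand β)
  rw [stepR]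
  -- final reindexing
  rw [Finset.sum_comm]
  conv_rhs => rw [Finset.sum_comm]
  apply Finset.sum_congr rfl
  intro T _
  rw [← Finset.sum_filter, ← Finset.sum_filter]
  refine Finset.sum_bij' (fun lam _ => SnapAux.add1 lam (SnapAux.embT T))
    (fun β _ => SnapAux.sub1 β (SnapAux.embT T)) ?_ ?_ ?_ ?_ ?_
  · intro lam hlam
    simp only [Finset.mem_filter] at hlam ⊢
    obtain ⟨hlamB, hlamb⟩ := hlam
    refine ⟨⟨(mem_Box _).mpr (fun i => SnapAux.coord_le_of_indepN hmono hrank hlamb.2 i),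
      hlamb⟩, ?_⟩
    intro j hj
    exact SnapAux.add1_ne_zero lam (SnapAux.embT T) (SnapAux.mem_embT.mpr hj)
  · intro β hβ
    simp only [Finset.mem_filter] at hβ ⊢
    obtain ⟨⟨hβB, hβb⟩, hβ0⟩ := hβ
    have hall : ∀ i ∈ SnapAux.embT T, β i ≠ 0 := by
      intro i hi
      rw [SnapAux.embT, Finset.mem_map] at hi
      obtain ⟨j, hj, rfl⟩ := hi
      exact hβ0 j hj
    refine ⟨(mem_Box _).mpr (fun i => le_trans (SnapAux.sub1_le β (SnapAux.embT T) i)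
      ((mem_Box β).mp hβB i)), ?_⟩
    rwa [SnapAux.add1_sub1 β (SnapAux.embT T) hall]
  · intro lam _
    exact SnapAux.sub1_add1 lam (SnapAux.embT T)
  · intro β hβ
    simp only [Finset.mem_filter] at hβ
    have hall : ∀ i ∈ SnapAux.embT T, β i ≠ 0 := by
      intro i hi
      rw [SnapAux.embT, Finset.mem_map] at hi
      obtain ⟨j, hj, rfl⟩ := hi
      exact hβ.2 j hj
    exact SnapAux.add1_sub1 β (SnapAux.embT T) hall
  · intro lam _
    rw [SnapAux.sub1_add1 lam (SnapAux.embT T)]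
end

section
/- Let d ≥ 0 be an integer, let p ∈ ℚ[q] be a polynomial of degree at most d, and let h_0,…,h_d ∈ ℚ. Then the identity of formal power series Σ_{j≥0} p(j) q^j = (h_0 + h_1 q + ⋯ + h_d q^d)/(1−q)^{d+1} holds in ℚ[[q]] if and only if p(q) = Σ_{k=0}^{d} h_k · binom(q+d−k, d) as polynomials in q. -/
open Polynomial PowerSeries

/-- `binomShift d k` is the polynomial `binom(q + d - k, d) = (q+d-k)(q+d-k-1)⋯(q-k+1)/d!`
in the variable `q`. -/
noncomputable def binomShift (d k : ℕ) : Polynomial ℚ :=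
  (d.factorial : ℚ)⁻¹ • ∏ l ∈ Finset.range d, (Polynomial.X + Polynomial.C ((d : ℚ) - k - l))

lemma binomShift_eval (d k j : ℕ) (hk : k ≤ d) :
    (binomShift d k).eval (j : ℚ) =
      if k ≤ j then (((j + d - k).choose d : ℕ) : ℚ) else 0 := by
  rw [binomShift, eval_smul, smul_eq_mul, eval_prod]
  by_cases hkj : k ≤ j
  · rw [if_pos hkj]
    have hm : ∀ l ∈ Finset.range d, (Polynomial.X + Polynomial.C ((d : ℚ) - k - l)).eval (j : ℚ)
        = ((j + d - k - l : ℕ) : ℚ) := by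
      intro l hl
      have hl' : l < d := Finset.mem_range.mp hl
      have h1 : k ≤ j + d := le_trans hkj (Nat.le_add_right _ _)
      have h2 : l ≤ j + d - k := by omega
      rw [eval_add, eval_X, eval_C]
      push_cast [Nat.cast_sub h1, Nat.cast_sub h2]
      ring
    rw [Finset.prod_congr rfl hm, ← Nat.cast_prod, ← Nat.descFactorial_eq_prod_range,
      Nat.descFactorial_eq_factorial_mul_choose]
    push_cast
    rw [← mul_assoc, inv_mul_cancel₀ (by exact_mod_cast d.factorial_ne_zero), one_mul]
  · rw [if_neg hkj]
    have hmem : j + d - k ∈ Finset.range d := Finset.mem_range.mpr (by omega)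
    rw [Finset.prod_eq_zero hmem, mul_zero]
    have h1 : k ≤ j + d := by omega
    rw [eval_add, eval_X, eval_C]
    have : ((j + d - k : ℕ) : ℚ) = (j : ℚ) + d - k := by
      rw [Nat.cast_sub h1]; push_cast; ring
    linarith [this]

/-- For a polynomial `p` of degree at most `d` and rationals `h_0, …, h_d`, the identity
`Σ_{j≥0} p(j) q^j = (h_0 + h_1 q + ⋯ + h_d q^d) · (1-q)^{-(d+1)}` of formal power series
(where `(1-q)^{-(d+1)} = Σ_{j≥0} binom(j+d, d) q^j`) holds if and only if
`p(q) = Σ_{k=0}^d h_k · binom(q+d-k, d)` as polynomials. -/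
theorem hilbert_series_expansion_iff_binomial_expansion
    (d : ℕ) (p : Polynomial ℚ) (hp : p.natDegree ≤ d) (h : ℕ → ℚ) :
    (PowerSeries.mk (fun j => p.eval (j : ℚ)) =
        (∑ k ∈ Finset.range (d + 1), PowerSeries.C (h k) * PowerSeries.X ^ k) *
          PowerSeries.mk (fun j => ((j + d).choose d : ℚ))) ↔
      p = ∑ k ∈ Finset.range (d + 1), Polynomial.C (h k) * binomShift d k := by
  set q := ∑ k ∈ Finset.range (d + 1), Polynomial.C (h k) * binomShift d k with hq
  have key : ∀ j : ℕ,
      (PowerSeries.coeff j)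
        ((∑ k ∈ Finset.range (d + 1), PowerSeries.C (h k) * PowerSeries.X ^ k) *
          PowerSeries.mk (fun j => ((j + d).choose d : ℚ))) = q.eval (j : ℚ) := by
    intro j
    rw [Finset.sum_mul, map_sum, hq, eval_finset_sum]
    refine Finset.sum_congr rfl fun k hk => ?_
    have hk' : k ≤ d := Nat.lt_succ_iff.mp (Finset.mem_range.mp hk)
    rw [eval_mul, eval_C, binomShift_eval d k j hk']
    rw [mul_comm (PowerSeries.C (h k)) (PowerSeries.X ^ k), mul_assoc,
      PowerSeries.coeff_X_pow_mul']
    by_cases hkj : k ≤ j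
    · rw [if_pos hkj, if_pos hkj, PowerSeries.coeff_C_mul, PowerSeries.coeff_mk]
      have : j + d - k = j - k + d := by omega
      rw [this]
    · rw [if_neg hkj, if_neg hkj, mul_zero]
  constructor
  · intro heq
    apply Polynomial.eq_of_infinite_eval_eq
    apply Set.infinite_of_injective_forall_mem
      (f := fun n : ℕ => (n : ℚ)) (Nat.cast_injective)
    intro n
    have := congrArg (PowerSeries.coeff n) heq
    rw [PowerSeries.coeff_mk] at this
    simpa [key n] using this
  · intro heq
    ext j
    rw [PowerSeries.coeff_mk, key j, ← heq]
end

section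
/- Fix m ≥ 1. The function assigning to each polymatroid P on [m] the polynomial Σ_{k ∈ I(P)∩ℤ^m} Π_{i=1}^m binom(t_i+k_i−1, k_i) ∈ ℚ[t_1,…,t_m] is valuative: whenever P_1,…,P_s are polymatroids on [m] and c_1,…,c_s are integers such that Σ_{i=1}^s c_i · 1_{B(P_i)} = 0 as a function ℝ^m → ℤ, one has Σ_{i=1}^s c_i · Σ_{k ∈ I(P_i)∩ℤ^m} Π_{j=1}^m binom(t_j+k_j−1, k_j) = 0 in ℚ[t_1,…,t_m]. -/
open MvPolynomial Finset

lemma convex_compact_eq_Icc {S : Set ℝ} (hc : Convex ℝ S) (hk : IsCompact S) (hne : S.Nonempty) :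
    S = Set.Icc (sInf S) (sSup S) := by
  apply subset_antisymm
  · intro x hx
    exact ⟨csInf_le hk.bddBelow hx, le_csSup hk.bddAbove hx⟩
  · exact hc.isPreconnected.Icc_subset (hk.sInf_mem hne) (hk.sSup_mem hne)

lemma exists_gap (A : Finset ℝ) : ∃ ε : ℝ, 0 < ε ∧ ∀ a ∈ A, ∀ b ∈ A, a < b → ε < b - a := by
  classical
  by_cases h : (((A ×ˢ A).image fun p => p.1 - p.2).filter (fun d => 0 < d)).Nonempty
  · refine ⟨(((A ×ˢ A).image fun p => p.1 - p.2).filter (fun d => 0 < d)).min' (by exact h) / 2, ?_, ?_⟩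
    · have := Finset.min'_mem _ h
      have := (Finset.mem_filter.mp this).2
      linarith
    · intro a ha b hb hab
      have hmem : b - a ∈ ((A ×ˢ A).image fun p => p.1 - p.2).filter (fun d => 0 < d) :=
        Finset.mem_filter.mpr ⟨Finset.mem_image.mpr ⟨(b, a), Finset.mem_product.mpr ⟨hb, ha⟩, rfl⟩,
          by linarith⟩
      have h1 := Finset.min'_le _ _ hmem
      have h2 := (Finset.mem_filter.mp (Finset.min'_mem _ h)).2
      linarith
  · refine ⟨1, one_pos, ?_⟩
    intro a ha b hb hab
    exact absurd ⟨b - a, Finset.mem_filter.mpr ⟨Finset.mem_image.mpr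
      ⟨(b, a), Finset.mem_product.mpr ⟨hb, ha⟩, rfl⟩, by linarith⟩⟩ h

open scoped Classical in
lemma euler_dim_one (s : ℕ) (S : Fin s → Set ℝ) (c : Fin s → ℤ)
    (hconv : ∀ i, Convex ℝ (S i)) (hcomp : ∀ i, IsCompact (S i))
    (hrel : ∀ t : ℝ, ∑ i, c i * (if t ∈ S i then 1 else 0) = 0) :
    ∑ i, c i * (if (S i).Nonempty then 1 else 0) = 0 := by
  classical
  set A : Finset ℝ :=
    (Finset.univ.image fun i => sInf (S i)) ∪ (Finset.univ.image fun i => sSup (S i)) with hA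
  obtain ⟨ε, hεpos, hgap⟩ := exists_gap A
  have h1 : ∑ i, c i * ∑ a ∈ A, ((if a ∈ S i then (1:ℤ) else 0)
      - (if a - ε ∈ S i then 1 else 0)) = 0 := by
    simp only [Finset.mul_sum, mul_sub]
    rw [Finset.sum_comm]
    apply Finset.sum_eq_zero
    intro a _
    rw [Finset.sum_sub_distrib, hrel a, hrel (a - ε), sub_zero]
  calc ∑ i, c i * (if (S i).Nonempty then 1 else 0)
      = ∑ i, c i * ∑ a ∈ A, ((if a ∈ S i then (1:ℤ) else 0)
          - (if a - ε ∈ S i then 1 else 0)) := by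
        apply Finset.sum_congr rfl
        intro i _
        congr 1
        by_cases hne : (S i).Nonempty
        · rw [if_pos hne]
          have hIcc := convex_compact_eq_Icc (hconv i) (hcomp i) hne
          set α := sInf (S i) with hα
          set β := sSup (S i) with hβ
          have hαA : α ∈ A := by
            rw [hA]
            exact Finset.mem_union_left _ (Finset.mem_image.mpr ⟨i, Finset.mem_univ i, rfl⟩)
          have hβA : β ∈ A := by
            rw [hA]
            exact Finset.mem_union_right _ (Finset.mem_image.mpr ⟨i, Finset.mem_univ i, rfl⟩)
          have hαβ : α ≤ β := by
            obtain ⟨x, hx⟩ := hne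
            rw [hIcc] at hx
            exact le_trans hx.1 hx.2
          have key : ∀ a ∈ A, ((if a ∈ S i then (1:ℤ) else 0) - (if a - ε ∈ S i then 1 else 0))
              = if a = α then 1 else 0 := by
            intro a ha
            rw [hIcc]
            by_cases haα : a = α
            · have t1 : a ∈ Set.Icc α β := by rw [haα]; exact ⟨le_rfl, hαβ⟩
              have t2 : a - ε ∉ Set.Icc α β := by
                rw [haα]; intro h; have := h.1; linarith
              rw [if_pos haα, if_pos t1, if_neg t2]
              ring
            · rw [if_neg haα]
              by_cases hmem : a ∈ Set.Icc α β
              · have hlt : α < a := lt_of_le_of_ne hmem.1 (Ne.symm haα)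
                have := hgap α hαA a ha hlt
                have t3 : a - ε ∈ Set.Icc α β := ⟨by linarith, by linarith [hmem.2]⟩
                rw [if_pos hmem, if_pos t3]
                ring
              · rw [if_neg hmem, if_neg ?_]
                · ring
                intro hmem'
                obtain ⟨h1', h2'⟩ := hmem'
                simp only [Set.mem_Icc, not_and_or, not_le] at hmem
                rcases hmem with h | h
                · linarith
                · have := hgap β hβA a ha h
                  linarith
          calc (1:ℤ) = ∑ a ∈ A, (if a = α then (1:ℤ) else 0) := by
                rw [Finset.sum_ite_eq' A α (fun _ => (1:ℤ)), if_pos hαA]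
            _ = ∑ a ∈ A, ((if a ∈ S i then (1:ℤ) else 0) - (if a - ε ∈ S i then 1 else 0)) :=
                (Finset.sum_congr rfl key).symm
        · rw [if_neg hne]
          rw [Set.not_nonempty_iff_eq_empty] at hne
          symm
          apply Finset.sum_eq_zero
          intro a _
          simp [hne]
    _ = 0 := h1

open scoped Classical in
lemma rel_congr_ite {s : ℕ} (c : Fin s → ℤ) (P Q : Fin s → Prop)
    (h : ∀ i, Q i ↔ P i) (h0 : ∑ i, c i * (if P i then 1 else 0) = 0) :
    ∑ i, c i * (if Q i then 1 else 0) = 0 := by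
  calc ∑ i, c i * (if Q i then (1:ℤ) else 0)
      = ∑ i, c i * (if P i then 1 else 0) :=
        Finset.sum_congr rfl (fun i _ => by rw [if_congr (h i) rfl rfl])
    _ = 0 := h0

open scoped Classical in
lemma euler_nonempty (n : ℕ) : ∀ (s : ℕ) (K : Fin s → Set (Fin n → ℝ)) (c : Fin s → ℤ),
    (∀ i, Convex ℝ (K i)) → (∀ i, IsCompact (K i)) →
    (∀ x, ∑ i, c i * (if x ∈ K i then 1 else 0) = 0) →
    ∑ i, c i * (if (K i).Nonempty then 1 else 0) = 0 := by
  induction n with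
  | zero =>
    intro s K c _ _ hrel
    apply rel_congr_ite c (fun i => (fun j => (0:ℝ)) ∈ K i) _ _ (hrel (fun j => 0))
    intro i
    constructor
    · rintro ⟨y, hy⟩
      have he : (fun j => (0:ℝ)) = y := Subsingleton.elim _ _
      rw [he]
      exact hy
    · intro hy
      exact ⟨_, hy⟩
  | succ n ih =>
    intro s K c hconv hcomp hrel
    -- project away the last coordinate
    set π : (Fin (n+1) → ℝ) → (Fin n → ℝ) := fun y => y ∘ Fin.castSucc with hπ
    have hπcont : Continuous π := by
      apply continuous_pi
      intro j
      exact continuous_apply _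
    have hπlin : IsLinearMap ℝ π := ⟨fun x y => rfl, fun c x => rfl⟩
    have himg : ∀ i (x' : Fin n → ℝ), x' ∈ π '' K i ↔ ∃ t, Fin.snoc x' t ∈ K i := by
      intro i x'
      constructor
      · rintro ⟨y, hy, rfl⟩
        refine ⟨y (Fin.last n), ?_⟩
        show (Fin.snoc (π y) (y (Fin.last n)) : Fin (n+1) → ℝ) ∈ K i
        convert hy using 1
        funext j
        refine Fin.lastCases ?_ ?_ j
        · simp [Fin.snoc_last]
        · intro j
          simp [Fin.snoc_castSucc, hπ]
      · rintro ⟨t, ht⟩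
        refine ⟨(Fin.snoc x' t : Fin (n+1) → ℝ), ht, ?_⟩
        funext j
        simp [hπ, Fin.snoc_castSucc]
    have key : ∀ x' : Fin n → ℝ, ∑ i, c i * (if x' ∈ π '' K i then 1 else 0) = 0 := by
      intro x'
      -- slices
      set S : Fin s → Set ℝ := fun i => {t | (Fin.snoc x' t : Fin (n+1) → ℝ) ∈ K i} with hS
      have hSconv : ∀ i, Convex ℝ (S i) := by
        intro i t1 ht1 t2 ht2 a b ha hb hab
        show (Fin.snoc x' (a • t1 + b • t2) : Fin (n+1) → ℝ) ∈ K i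
        have : (Fin.snoc x' (a • t1 + b • t2) : Fin (n+1) → ℝ)
            = a • (Fin.snoc x' t1 : Fin (n+1) → ℝ) + b • (Fin.snoc x' t2 : Fin (n+1) → ℝ) := by
          funext j
          refine Fin.lastCases ?_ ?_ j
          · simp [Fin.snoc_last]
          · intro j
            simp only [Fin.snoc_castSucc, Pi.add_apply, Pi.smul_apply, smul_eq_mul]
            rw [← add_mul, hab, one_mul]
        rw [this]
        exact hconv i ht1 ht2 ha hb hab
      have hScomp : ∀ i, IsCompact (S i) := by
        intro i
        have hcont : Continuous (fun t : ℝ => (Fin.snoc x' t : Fin (n+1) → ℝ)) := by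
          apply continuous_pi
          intro j
          refine Fin.lastCases ?_ ?_ j
          · simp only [Fin.snoc_last]
            exact continuous_id
          · intro j
            simp only [Fin.snoc_castSucc]
            exact continuous_const
        have hclosed : IsClosed (S i) := (hcomp i).isClosed.preimage hcont
        have hsub : S i ⊆ (fun y : Fin (n+1) → ℝ => y (Fin.last n)) '' K i := by
          intro t ht
          exact ⟨(Fin.snoc x' t : Fin (n+1) → ℝ), ht, by simp [Fin.snoc_last]⟩
        exact ((hcomp i).image (continuous_apply _)).of_isClosed_subset hclosed hsub
      have hSrel : ∀ t : ℝ, ∑ i, c i * (if t ∈ S i then 1 else 0) = 0 := fun t =>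
        hrel (Fin.snoc x' t)
      apply rel_congr_ite c _ _ _ (euler_dim_one s S c hSconv hScomp hSrel)
      intro i
      rw [himg i x']
      exact ⟨fun ⟨t, ht⟩ => ⟨t, ht⟩, fun ⟨t, ht⟩ => ⟨t, ht⟩⟩
    apply rel_congr_ite c (fun i => (π '' K i).Nonempty) _ _
      (ih s (fun i => π '' K i) c (fun i => (hconv i).is_linear_image hπlin)
        (fun i => (hcomp i).image hπcont) key)
    intro i
    constructor
    · rintro ⟨y, hy⟩
      exact ⟨π y, y, hy, rfl⟩
    · rintro ⟨x', y, hy, rfl⟩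
      exact ⟨y, hy⟩

lemma tight_union {m : ℕ} {rk : Finset (Fin m) → ℕ} (hP : IsPolymatroid rk)
    {y : Fin m → ℝ} (hfeas : ∀ I, (∑ j ∈ I, y j) ≤ (rk I : ℝ))
    {A B : Finset (Fin m)} (hA : ∑ j ∈ A, y j = (rk A : ℝ)) (hB : ∑ j ∈ B, y j = (rk B : ℝ)) :
    ∑ j ∈ A ∪ B, y j = (rk (A ∪ B) : ℝ) := by
  have hsub : (rk (A ∩ B) : ℝ) + (rk (A ∪ B) : ℝ) ≤ (rk A : ℝ) + (rk B : ℝ) := by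
    exact_mod_cast hP.2.2 A B
  have hsum : ∑ j ∈ A ∪ B, y j + ∑ j ∈ A ∩ B, y j = ∑ j ∈ A, y j + ∑ j ∈ B, y j :=
    Finset.sum_union_inter
  have h1 := hfeas (A ∩ B)
  have h2 := hfeas (A ∪ B)
  linarith

lemma exists_base_ge {m : ℕ} {rk : Finset (Fin m) → ℕ} (hP : IsPolymatroid rk)
    (x : Fin m → ℝ) (hx : x ∈ indepPolytope rk) :
    ∃ y ∈ basePolytope rk, ∀ j, x j ≤ y j := by
  classical
  have key : ∀ S : Finset (Fin m), ∃ y : Fin m → ℝ, (∀ j, 0 ≤ y j) ∧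
      (∀ I, (∑ j ∈ I, y j) ≤ (rk I : ℝ)) ∧ (∀ j, x j ≤ y j) ∧
      ∀ j ∈ S, ∃ T, j ∈ T ∧ ∑ t ∈ T, y t = (rk T : ℝ) := by
    intro S
    induction S using Finset.induction with
    | empty =>
      exact ⟨x, hx.1, hx.2, fun j => le_rfl, fun j hj => absurd hj (Finset.notMem_empty j)⟩
    | @insert a S ha ih =>
      obtain ⟨y, hy0, hyfeas, hyx, hytight⟩ := ih
      -- minimize rk T - ∑_T y over T containing a
      obtain ⟨T₀, hT₀mem, hT₀min⟩ := Finset.exists_min_image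
        (Finset.univ.filter fun T : Finset (Fin m) => a ∈ T)
        (fun T => (rk T : ℝ) - ∑ t ∈ T, y t)
        ⟨{a}, Finset.mem_filter.mpr ⟨Finset.mem_univ _, Finset.mem_singleton_self a⟩⟩
      have haT₀ : a ∈ T₀ := (Finset.mem_filter.mp hT₀mem).2
      set δ : ℝ := (rk T₀ : ℝ) - ∑ t ∈ T₀, y t with hδ
      have hδ0 : 0 ≤ δ := by
        have := hyfeas T₀
        rw [hδ]
        linarith
      have hδle : ∀ T : Finset (Fin m), a ∈ T → δ ≤ (rk T : ℝ) - ∑ t ∈ T, y t := by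
        intro T haT
        exact hT₀min T (Finset.mem_filter.mpr ⟨Finset.mem_univ _, haT⟩)
      set y' : Fin m → ℝ := fun j => y j + (if j = a then δ else 0) with hy'
      have hsum' : ∀ I : Finset (Fin m),
          ∑ j ∈ I, y' j = ∑ j ∈ I, y j + (if a ∈ I then δ else 0) := by
        intro I
        rw [hy']
        rw [Finset.sum_add_distrib, Finset.sum_ite_eq' I a (fun _ => δ)]
      refine ⟨y', ?_, ?_, ?_, ?_⟩
      · intro j
        have := hy0 j
        show 0 ≤ y j + (if j = a then δ else 0)
        split_ifs <;> linarith
      · intro I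
        rw [hsum' I]
        by_cases haI : a ∈ I
        · rw [if_pos haI]
          have := hδle I haI
          linarith
        · rw [if_neg haI, add_zero]
          exact hyfeas I
      · intro j
        have := hyx j
        show x j ≤ y j + (if j = a then δ else 0)
        split_ifs <;> linarith
      · intro j hj
        rcases Finset.mem_insert.mp hj with rfl | hjS
        · refine ⟨T₀, haT₀, ?_⟩
          rw [hsum' T₀, if_pos haT₀, hδ]
          ring
        · obtain ⟨T, hjT, hTtight⟩ := hytight j hjS
          refine ⟨T, hjT, ?_⟩
          rw [hsum' T]
          by_cases haT : a ∈ T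
          · have h1 := hδle T haT
            rw [hTtight] at h1
            have : δ = 0 := by linarith
            rw [if_pos haT, this, add_zero, hTtight]
          · rw [if_neg haT, add_zero, hTtight]
  obtain ⟨y, hy0, hyfeas, hyx, hytight⟩ := key Finset.univ
  -- union of tight sets covering univ
  have cover : ∀ S : Finset (Fin m), ∃ U : Finset (Fin m), S ⊆ U ∧
      ∑ t ∈ U, y t = (rk U : ℝ) := by
    intro S
    induction S using Finset.induction with
    | empty =>
      refine ⟨∅, subset_rfl, ?_⟩
      rw [Finset.sum_empty, hP.1]
      norm_num
    | @insert a S ha ih =>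
      obtain ⟨U, hSU, hU⟩ := ih
      obtain ⟨T, haT, hT⟩ := hytight a (Finset.mem_univ a)
      refine ⟨U ∪ T, ?_, tight_union hP hyfeas hU hT⟩
      intro j hj
      rcases Finset.mem_insert.mp hj with rfl | hjS
      · exact Finset.mem_union_right _ haT
      · exact Finset.mem_union_left _ (hSU hjS)
  obtain ⟨U, hUuniv, hU⟩ := cover Finset.univ
  have : U = Finset.univ := Finset.univ_subset_iff.mp hUuniv
  rw [this] at hU
  exact ⟨y, ⟨hy0, hU, hyfeas⟩, hyx⟩

section Pointwise
variable {m : ℕ}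

/-- the truncated base polytope -/
def truncBase (rk : Finset (Fin m) → ℕ) (κ : Fin m → ℕ) : Set (Fin m → ℝ) :=
  basePolytope rk ∩ {y | ∀ j, (κ j : ℝ) ≤ y j}

lemma truncBase_convex (rk : Finset (Fin m) → ℕ) (κ : Fin m → ℕ) :
    Convex ℝ (truncBase rk κ) := by
  apply Convex.inter
  · intro u hu v hv a b ha hb hab
    refine ⟨?_, ?_, ?_⟩
    · intro i
      have := hu.1 i
      have := hv.1 i
      have : 0 ≤ a * u i + b * v i := by positivity
      simpa using this
    · have : ∑ i, (a * u i + b * v i) = a * ∑ i, u i + b * ∑ i, v i := by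
        rw [Finset.sum_add_distrib, Finset.mul_sum, Finset.mul_sum]
      simp only [Pi.add_apply, Pi.smul_apply, smul_eq_mul]
      rw [this, hu.2.1, hv.2.1]
      have : a * (rk Finset.univ : ℝ) + b * (rk Finset.univ : ℝ) = (a + b) * rk Finset.univ := by
        ring
      rw [this, hab, one_mul]
    · intro I
      have h1 := hu.2.2 I
      have h2 := hv.2.2 I
      simp only [Pi.add_apply, Pi.smul_apply, smul_eq_mul]
      rw [Finset.sum_add_distrib, ← Finset.mul_sum, ← Finset.mul_sum]
      calc a * ∑ i ∈ I, u i + b * ∑ i ∈ I, v i ≤ a * rk I + b * rk I := by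
            apply add_le_add
            · exact mul_le_mul_of_nonneg_left h1 ha
            · exact mul_le_mul_of_nonneg_left h2 hb
        _ = (a + b) * rk I := by ring
        _ = rk I := by rw [hab, one_mul]
  · intro u hu v hv a b ha hb hab
    intro j
    simp only [Pi.add_apply, Pi.smul_apply, smul_eq_mul]
    calc (κ j : ℝ) = (a + b) * κ j := by rw [hab, one_mul]
      _ = a * κ j + b * κ j := by ring
      _ ≤ a * u j + b * v j := by
          apply add_le_add
          · exact mul_le_mul_of_nonneg_left (hu j) ha
          · exact mul_le_mul_of_nonneg_left (hv j) hb

lemma truncBase_isCompact (rk : Finset (Fin m) → ℕ) (κ : Fin m → ℕ) :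
    IsCompact (truncBase rk κ) := by
  have hclosed : IsClosed (truncBase rk κ) := by
    have h1 : IsClosed (basePolytope rk) := by
      have : basePolytope rk = (⋂ j, {x : Fin m → ℝ | 0 ≤ x j}) ∩
          ({x : Fin m → ℝ | ∑ j, x j = (rk Finset.univ : ℝ)} ∩
            ⋂ I : Finset (Fin m), {x : Fin m → ℝ | ∑ j ∈ I, x j ≤ (rk I : ℝ)}) := by
        ext x
        simp only [basePolytope, Set.mem_inter_iff, Set.mem_iInter, Set.mem_setOf_eq]
      rw [this]
      refine IsClosed.inter (isClosed_iInter fun j => ?_) (IsClosed.inter ?_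
        (isClosed_iInter fun I => ?_))
      · exact isClosed_le continuous_const (continuous_apply j)
      · exact isClosed_eq (continuous_finset_sum _ fun j _ => continuous_apply j) continuous_const
      · exact isClosed_le (continuous_finset_sum _ fun j _ => continuous_apply j) continuous_const
    have h2 : IsClosed {y : Fin m → ℝ | ∀ j, (κ j : ℝ) ≤ y j} := by
      have : {y : Fin m → ℝ | ∀ j, (κ j : ℝ) ≤ y j} =
          ⋂ j, {y : Fin m → ℝ | (κ j : ℝ) ≤ y j} := by
        ext y
        simp [Set.mem_iInter]
      rw [this]
      exact isClosed_iInter fun j => isClosed_le continuous_const (continuous_apply j)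
    exact h1.inter h2
  have hsub : truncBase rk κ ⊆ Set.pi Set.univ fun _ : Fin m => Set.Icc (0:ℝ) (rk Finset.univ) := by
    rintro x ⟨hxB, -⟩
    intro j _
    refine ⟨hxB.1 j, ?_⟩
    calc x j ≤ ∑ i, x i := Finset.single_le_sum (fun k _ => hxB.1 k) (Finset.mem_univ j)
      _ = (rk Finset.univ : ℝ) := hxB.2.1
  exact (isCompact_univ_pi fun _ => isCompact_Icc).of_isClosed_subset hclosed hsub

lemma truncBase_nonempty_iff {rk : Finset (Fin m) → ℕ} (hP : IsPolymatroid rk) (κ : Fin m → ℕ) :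
    (truncBase rk κ).Nonempty ↔ (fun j => (κ j : ℝ)) ∈ indepPolytope rk := by
  constructor
  · rintro ⟨y, hyB, hyQ⟩
    refine ⟨fun j => Nat.cast_nonneg _, fun I => ?_⟩
    calc ∑ j ∈ I, (κ j : ℝ) ≤ ∑ j ∈ I, y j := Finset.sum_le_sum fun j _ => hyQ j
      _ ≤ (rk I : ℝ) := hyB.2.2 I
  · intro hκ
    obtain ⟨y, hyB, hyx⟩ := exists_base_ge hP _ hκ
    exact ⟨y, hyB, hyx⟩

open scoped Classical in
lemma pointwise_valuative {m : ℕ} (s : ℕ) (rk : Fin s → Finset (Fin m) → ℕ)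
    (hP : ∀ i, IsPolymatroid (rk i)) (c : Fin s → ℤ)
    (hval : ∀ x : Fin m → ℝ,
      ∑ i, c i * Set.indicator (basePolytope (rk i)) (fun _ => (1 : ℤ)) x = 0)
    (κ : Fin m → ℕ) :
    ∑ i, c i * (if (fun j => (κ j : ℝ)) ∈ indepPolytope (rk i) then 1 else 0) = 0 := by
  apply rel_congr_ite c (fun i => (truncBase (rk i) κ).Nonempty)
  · intro i
    exact (truncBase_nonempty_iff (hP i) κ).symm
  apply euler_nonempty m s _ c (fun i => truncBase_convex (rk i) κ)
    (fun i => truncBase_isCompact (rk i) κ)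
  intro x
  by_cases hxQ : ∀ j, (κ j : ℝ) ≤ x j
  · apply rel_congr_ite c (fun i => x ∈ basePolytope (rk i))
    · intro i
      constructor
      · rintro ⟨h, -⟩
        exact h
      · intro h
        exact ⟨h, hxQ⟩
    · have := hval x
      calc ∑ i, c i * (if x ∈ basePolytope (rk i) then (1:ℤ) else 0)
          = ∑ i, c i * Set.indicator (basePolytope (rk i)) (fun _ => (1:ℤ)) x := by
            apply Finset.sum_congr rfl
            intro i _
            rw [Set.indicator_apply]
        _ = 0 := hval x
  · apply Finset.sum_eq_zero
    intro i _
    rw [if_neg, mul_zero]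
    rintro ⟨-, hQ⟩
    exact hxQ hQ
end Pointwise


/-- The assignment `P ↦ Σ_{κ ∈ I(P)∩ℤ^m} Π_i binom(t_i + κ_i - 1, κ_i)` on polymatroids on
`[m]` is valuative: it kills every linear relation among indicator functions of base
polytopes. -/
theorem snapper_polynomial_is_valuative
    {m : ℕ} (hm : 1 ≤ m) (s : ℕ) (rk : Fin s → Finset (Fin m) → ℕ)
    (hP : ∀ i, IsPolymatroid (rk i)) (c : Fin s → ℤ)
    (hval : ∀ x : Fin m → ℝ,
      ∑ i, c i * Set.indicator (basePolytope (rk i)) (fun _ => (1 : ℤ)) x = 0) :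
    ∑ i, (c i : ℚ) •
        (∑ᶠ (κ : Fin m → ℕ) (_ : (fun j => (κ j : ℝ)) ∈ indepPolytope (rk i)),
          ∏ j, binomLower (MvPolynomial.X j : MvPolynomial (Fin m) ℚ) (κ j)) = 0 := by
  classical
  set F : (Fin m → ℕ) → MvPolynomial (Fin m) ℚ :=
    fun κ => ∏ j, binomLower (MvPolynomial.X j : MvPolynomial (Fin m) ℚ) (κ j) with hF
  set N : ℕ := Finset.univ.sup fun i : Fin s => rk i Finset.univ with hN
  set box : Finset (Fin m → ℕ) := Fintype.piFinset fun _ => Finset.range (N+1) with hbox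
  have hsupp : ∀ i : Fin s, ∀ κ : Fin m → ℕ,
      (fun j => (κ j : ℝ)) ∈ indepPolytope (rk i) → κ ∈ box := by
    intro i κ hκ
    rw [hbox, Fintype.mem_piFinset]
    intro j
    rw [Finset.mem_range]
    have h1 : (κ j : ℝ) ≤ (rk i {j} : ℝ) := by
      have := hκ.2 {j}
      simpa using this
    have h2 : κ j ≤ rk i {j} := by exact_mod_cast h1
    have h3 : rk i {j} ≤ rk i Finset.univ := (hP i).2.1 _ _ (Finset.subset_univ _)
    have h4 : rk i Finset.univ ≤ N := by
      rw [hN]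
      exact Finset.le_sup (f := fun i : Fin s => rk i Finset.univ) (Finset.mem_univ i)
    omega
  have hre : ∀ i : Fin s,
      (∑ᶠ (κ : Fin m → ℕ) (_ : (fun j => (κ j : ℝ)) ∈ indepPolytope (rk i)), F κ)
        = ∑ κ ∈ box, if (fun j => (κ j : ℝ)) ∈ indepPolytope (rk i) then F κ else 0 := by
    intro i
    have hset : {κ : Fin m → ℕ | (fun j => (κ j : ℝ)) ∈ indepPolytope (rk i)} =
        ↑(box.filter fun κ => (fun j => (κ j : ℝ)) ∈ indepPolytope (rk i)) := by
      ext κ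
      simp only [Set.mem_setOf_eq, Finset.coe_filter, Finset.mem_coe]
      constructor
      · intro h
        exact ⟨hsupp i κ h, h⟩
      · exact fun h => h.2
    calc (∑ᶠ (κ : Fin m → ℕ) (_ : (fun j => (κ j : ℝ)) ∈ indepPolytope (rk i)), F κ)
        = ∑ᶠ κ ∈ {κ : Fin m → ℕ | (fun j => (κ j : ℝ)) ∈ indepPolytope (rk i)}, F κ := rfl
      _ = ∑ᶠ κ ∈ ((box.filter fun κ => (fun j => (κ j : ℝ)) ∈ indepPolytope (rk i)) :
            Set (Fin m → ℕ)), F κ := by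
          rw [hset]
      _ = ∑ κ ∈ box.filter (fun κ => (fun j => (κ j : ℝ)) ∈ indepPolytope (rk i)), F κ :=
          finsum_mem_coe_finset _ _
      _ = ∑ κ ∈ box, if (fun j => (κ j : ℝ)) ∈ indepPolytope (rk i) then F κ else 0 :=
          Finset.sum_filter _ _
  calc ∑ i, (c i : ℚ) •
        (∑ᶠ (κ : Fin m → ℕ) (_ : (fun j => (κ j : ℝ)) ∈ indepPolytope (rk i)), F κ)
      = ∑ i, ∑ κ ∈ box, (c i : ℚ) •
          (if (fun j => (κ j : ℝ)) ∈ indepPolytope (rk i) then F κ else 0) := by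
        apply Finset.sum_congr rfl
        intro i _
        rw [hre i, Finset.smul_sum]
    _ = ∑ κ ∈ box, ∑ i, (c i : ℚ) •
          (if (fun j => (κ j : ℝ)) ∈ indepPolytope (rk i) then F κ else 0) := Finset.sum_comm
    _ = 0 := by
        apply Finset.sum_eq_zero
        intro κ _
        have hpt := pointwise_valuative s rk hP c hval κ
        calc ∑ i, (c i : ℚ) •
              (if (fun j => (κ j : ℝ)) ∈ indepPolytope (rk i) then F κ else 0)
            = ∑ i, ((c i : ℚ) * (if (fun j => (κ j : ℝ)) ∈ indepPolytope (rk i)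
                then 1 else 0)) • F κ := by
              apply Finset.sum_congr rfl
              intro i _
              by_cases h : (fun j => (κ j : ℝ)) ∈ indepPolytope (rk i)
              · rw [if_pos h, if_pos h, mul_one]
              · rw [if_neg h, if_neg h, mul_zero, zero_smul, smul_zero]
          _ = (∑ i, (c i : ℚ) * (if (fun j => (κ j : ℝ)) ∈ indepPolytope (rk i)
                then 1 else 0)) • F κ := by rw [Finset.sum_smul]
          _ = 0 := by
              have h1 : (∑ i, (c i : ℚ) * (if (fun j => (κ j : ℝ)) ∈ indepPolytope (rk i)
                  then 1 else 0)) = ((∑ i, c i * (if (fun j => (κ j : ℝ)) ∈ indepPolytope (rk i)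
                  then 1 else 0) : ℤ) : ℚ) := by
                rw [Int.cast_sum]
                apply Finset.sum_congr rfl
                intro i _
                split_ifs <;> simp
              rw [h1, hpt]
              norm_num
end

section
/- Fix m ≥ 1 and a ∈ ℤ_{≥0}^m. For a polymatroid P on [m] with cage a, define integers c_b(P) for each b ∈ ℤ^m with 0 ≤ b_i ≤ a_i (for all i) by downward induction on |b| = Σ_i b_i: c_b(P) = 0 if |b| > rk_P([m]); c_b(P) = 1 if |b| = rk_P([m]) and b ∈ B(P), and c_b(P) = 0 if |b| = rk_P([m]) and b ∉ B(P); and c_b(P) = 1 − Σ_{b'} c_{b'}(P) if |b| < rk_P([m]), where the sum is over b' with b ≤ b' ≤ a coordinatewise and b' ≠ b. Then for each such b, the function P ↦ c_b(P) on polymatroids on [m] with cage a is valuative: whenever P_1,…,P_s have cage a and integers c_1,…,c_s satisfy Σ_i c_i · 1_{B(P_i)} = 0 as a function ℝ^m → ℤ, one has Σ_i c_i · c_b(P_i) = 0. -/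
open Finset

attribute [local instance] Classical.propDecidable

/-- `c` satisfies Knutson's downward recursion for the polymatroid `rk` with cage `a`:
`c b = 0` if `|b| > rk([m])`; `c b` is the indicator of `b ∈ B(P)` if `|b| = rk([m])`; and
`c b = 1 - Σ_{b < b' ≤ a} c b'` if `|b| < rk([m])`. -/
def KnutsonCoeffs {m : ℕ} (a : Fin m → ℕ) (rk : Finset (Fin m) → ℕ)
    (c : (Fin m → ℕ) → ℤ) : Prop :=
  ∀ b : Fin m → ℕ, (∀ i, b i ≤ a i) →
    ((rk Finset.univ < ∑ i, b i → c b = 0) ∧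
      (∑ i, b i = rk Finset.univ →
        c b = if (fun i => (b i : ℝ)) ∈ basePolytope rk then 1 else 0) ∧
      (∑ i, b i < rk Finset.univ →
        c b = 1 - ∑ᶠ (b' : Fin m → ℕ)
          (_ : (∀ i, b i ≤ b' i ∧ b' i ≤ a i) ∧ b' ≠ b), c b'))


private lemma basePolytope_convex {m : ℕ} (rk : Finset (Fin m) → ℕ) :
    Convex ℝ (basePolytope rk) := by
  rintro x ⟨hx0, hx1, hx2⟩ y ⟨hy0, hy1, hy2⟩ p q hp hq hpq
  refine ⟨fun i => ?_, ?_, fun I => ?_⟩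
  · simp only [Pi.add_apply, Pi.smul_apply, smul_eq_mul]
    exact add_nonneg (mul_nonneg hp (hx0 i)) (mul_nonneg hq (hy0 i))
  · simp only [Pi.add_apply, Pi.smul_apply, smul_eq_mul]
    rw [Finset.sum_add_distrib, ← Finset.mul_sum, ← Finset.mul_sum, hx1, hy1]
    nlinarith [hpq]
  · simp only [Pi.add_apply, Pi.smul_apply, smul_eq_mul]
    rw [Finset.sum_add_distrib, ← Finset.mul_sum, ← Finset.mul_sum]
    calc p * ∑ i ∈ I, x i + q * ∑ i ∈ I, y i
        ≤ p * (rk I : ℝ) + q * (rk I : ℝ) :=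
          add_le_add (mul_le_mul_of_nonneg_left (hx2 I) hp)
            (mul_le_mul_of_nonneg_left (hy2 I) hq)
      _ = (rk I : ℝ) := by rw [← add_mul, hpq, one_mul]


private lemma basePolytope_isCompact {m : ℕ} (rk : Finset (Fin m) → ℕ) :
    IsCompact (basePolytope rk) := by
  have hclosed : IsClosed (basePolytope rk) := by
    have he : basePolytope rk = (⋂ i, {x : Fin m → ℝ | 0 ≤ x i}) ∩
        ({x : Fin m → ℝ | (∑ i, x i) = (rk Finset.univ : ℝ)} ∩
          ⋂ I : Finset (Fin m), {x : Fin m → ℝ | (∑ i ∈ I, x i) ≤ (rk I : ℝ)}) := by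
      ext x
      simp only [basePolytope, Set.mem_setOf_eq, Set.mem_inter_iff, Set.mem_iInter]
    rw [he]
    refine IsClosed.inter (isClosed_iInter fun i =>
        isClosed_le continuous_const (continuous_apply i))
      (IsClosed.inter
        (isClosed_eq (continuous_finset_sum _ fun i _ => continuous_apply i) continuous_const)
        (isClosed_iInter fun I =>
          isClosed_le (continuous_finset_sum _ fun i _ => continuous_apply i) continuous_const))
  refine IsCompact.of_isClosed_subset
    (isCompact_univ_pi fun i => isCompact_Icc (a := (0:ℝ)) (b := (rk {i} : ℝ))) hclosed ?_
  rintro x ⟨h0, -, h2⟩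
  rw [Set.mem_univ_pi]
  intro i
  refine ⟨h0 i, ?_⟩
  have := h2 {i}
  simpa using this


private lemma basePolytope_nonempty {m : ℕ} (rk : Finset (Fin m) → ℕ)
    (h : IsPolymatroid rk) : (basePolytope rk).Nonempty := by
  classical
  set x : Fin m → ℝ := fun k => (rk (Finset.Iic k) : ℝ) - (rk (Finset.Iio k) : ℝ) with hxdef
  have htel : ∀ n, n ≤ m →
      ∑ k ∈ univ.filter (fun k : Fin m => (k : ℕ) < n), x k
        = (rk (univ.filter (fun k : Fin m => (k : ℕ) < n)) : ℝ) := by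
    intro n
    induction n with
    | zero => simp [h.1]
    | succ n ihn =>
      intro hn
      have hn' : n < m := hn
      set kn : Fin m := ⟨n, hn'⟩ with hkn
      have h1 : univ.filter (fun k : Fin m => (k : ℕ) < n + 1)
          = insert kn (univ.filter (fun k : Fin m => (k : ℕ) < n)) := by
        ext l
        simp only [mem_filter, mem_univ, true_and, mem_insert, hkn, Fin.ext_iff]
        omega
      have h2 : Finset.Iio kn = univ.filter (fun k : Fin m => (k : ℕ) < n) := by
        ext l; simp only [Finset.mem_Iio, mem_filter, mem_univ, true_and, Fin.lt_def, hkn, Fin.val_mk]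
      have h3 : Finset.Iic kn = univ.filter (fun k : Fin m => (k : ℕ) < n + 1) := by
        ext l; simp only [Finset.mem_Iic, mem_filter, mem_univ, true_and, Fin.le_def, hkn, Fin.val_mk]; omega
      rw [h1, Finset.sum_insert (by simp [hkn]), ihn (Nat.le_of_succ_le hn)]
      rw [hxdef]
      simp only
      rw [h2, h3, h1]
      ring
  have hineq : ∀ I : Finset (Fin m), ∑ k ∈ I, x k ≤ (rk I : ℝ) := by
    intro I
    induction I using Finset.strongInduction with
    | _ I ih =>
      rcases I.eq_empty_or_nonempty with rfl | hI
      · simp [h.1]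
      · set k := I.max' hI with hk
        have hkI : k ∈ I := I.max'_mem hI
        have hiu : Finset.Iio k ∪ I = Finset.Iic k := by
          ext l
          simp only [Finset.mem_union, Finset.mem_Iio, Finset.mem_Iic]
          constructor
          · rintro (hl | hl)
            · exact le_of_lt hl
            · exact Finset.le_max' I l hl
          · intro hl
            rcases lt_or_eq_of_le hl with hl' | hl'
            · exact Or.inl hl'
            · exact Or.inr (hl' ▸ hkI)
        have hii : Finset.Iio k ∩ I = I.erase k := by
          ext l
          simp only [Finset.mem_inter, Finset.mem_Iio, Finset.mem_erase]
          constructor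
          · rintro ⟨hl1, hl2⟩; exact ⟨ne_of_lt hl1, hl2⟩
          · rintro ⟨hl1, hl2⟩
            exact ⟨lt_of_le_of_ne (Finset.le_max' I l hl2) hl1, hl2⟩
        have hsub := h.2.2 (Finset.Iio k) I
        rw [hii, hiu] at hsub
        have hih := ih (I.erase k) (Finset.erase_ssubset hkI)
        have hcast : (rk (I.erase k) : ℝ) + (rk (Finset.Iic k) : ℝ)
            ≤ (rk (Finset.Iio k) : ℝ) + (rk I : ℝ) := by exact_mod_cast hsub
        rw [← Finset.sum_erase_add I x hkI]
        have hx : x k = (rk (Finset.Iic k) : ℝ) - (rk (Finset.Iio k) : ℝ) := rfl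
        linarith
  refine ⟨x, fun k => ?_, ?_, hineq⟩
  · have : rk (Finset.Iio k) ≤ rk (Finset.Iic k) :=
      h.2.1 _ _ (Finset.Iio_subset_Iic_self)
    have : (rk (Finset.Iio k) : ℝ) ≤ (rk (Finset.Iic k) : ℝ) := by exact_mod_cast this
    simp only [hxdef]
    linarith
  · have h4 : univ.filter (fun k : Fin m => (k : ℕ) < m) = (univ : Finset (Fin m)) := by
      ext l; simp [l.isLt]
    have := htel m le_rfl
    rw [h4] at this
    exact this

private def Cyl {m : ℕ} (j : ℕ) (T : Set (Fin m → ℝ)) : Set (Fin m → ℝ) :=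
  {x | ∃ y ∈ T, ∀ k : Fin m, j ≤ (k : ℕ) → x k = y k}

private lemma euler_char {m : ℕ} {ι : Type*} (s : Finset ι) (c : ι → ℤ)
    (K : ι → Set (Fin m → ℝ))
    (hcv : ∀ i ∈ s, Convex ℝ (K i)) (hcp : ∀ i ∈ s, IsCompact (K i))
    (hne : ∀ i ∈ s, (K i).Nonempty)
    (hval : ∀ x, ∑ i ∈ s, c i * (if x ∈ K i then 1 else 0) = 0) :
    ∑ i ∈ s, c i = 0 := by
  classical
  have A : ∀ j, j ≤ m → ∀ x, ∑ i ∈ s, c i * (if x ∈ Cyl j (K i) then 1 else 0) = 0 := by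
    intro j
    induction j with
    | zero =>
      intro _ x
      have h0 : ∀ T : Set (Fin m → ℝ), Cyl 0 T = T := by
        intro T; ext z
        constructor
        · rintro ⟨y, hy, hz⟩
          have : z = y := funext fun k => hz k (Nat.zero_le _)
          rwa [this]
        · intro hz; exact ⟨z, hz, fun _ _ => rfl⟩
      simp only [h0]
      exact hval x
    | succ j ihj =>
      intro hj x
      have hjm : j < m := hj
      have ihj' := ihj (Nat.le_of_succ_le hj)
      set jf : Fin m := ⟨j, hjm⟩ with hjf
      set S : ι → Set ℝ := fun i => {t | Function.update x jf t ∈ Cyl j (K i)} with hS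
      set A' : Set (Fin m → ℝ) := {y | ∀ k : Fin m, j + 1 ≤ (k : ℕ) → y k = x k} with hA'
      have hF1 : ∀ i, S i = (fun y : Fin m → ℝ => y jf) '' (K i ∩ A') := by
        intro i; ext t
        simp only [hS, Set.mem_setOf_eq, Set.mem_image, Set.mem_inter_iff, Cyl, hA']
        constructor
        · rintro ⟨y, hy, hagree⟩
          refine ⟨y, ⟨hy, fun k hk => ?_⟩, ?_⟩
          · have hkj : k ≠ jf := by
              intro hkk
              rw [hkk, hjf] at hk
              simp at hk
            have h1 := hagree k (by omega)
            rw [Function.update_of_ne hkj] at h1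
            exact h1.symm
          · have h1 := hagree jf (by simp [hjf])
            rw [Function.update_self] at h1
            exact h1.symm
        · rintro ⟨y, ⟨hy, hagree⟩, hyt⟩
          refine ⟨y, hy, fun k hk => ?_⟩
          by_cases hkj : k = jf
          · subst hkj; rw [Function.update_self]; exact hyt.symm
          · rw [Function.update_of_ne hkj]
            have hk1 : j + 1 ≤ (k : ℕ) := by
              rcases Nat.lt_or_ge (k : ℕ) (j + 1) with h | h
              · exfalso
                apply hkj
                apply Fin.ext
                rw [hjf]
                show (k : ℕ) = j
                omega
              · exact h
            exact (hagree k hk1).symm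
      have hF3 : ∀ i, (S i).Nonempty ↔ x ∈ Cyl (j + 1) (K i) := by
        intro i
        rw [hF1 i]
        constructor
        · rintro ⟨t, y, ⟨hy, hagree⟩, -⟩
          exact ⟨y, hy, fun k hk => (hagree k hk).symm⟩
        · rintro ⟨y, hy, hagree⟩
          exact ⟨y jf, y, ⟨hy, fun k hk => (hagree k hk).symm⟩, rfl⟩
      have hAclosed : IsClosed A' := by
        have he : A' = ⋂ k : Fin m, {y : Fin m → ℝ | j + 1 ≤ (k : ℕ) → y k = x k} := by
          ext y; simp only [hA', Set.mem_iInter, Set.mem_setOf_eq]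
        rw [he]
        refine isClosed_iInter fun k => ?_
        by_cases hk : j + 1 ≤ (k : ℕ)
        · have he2 : {y : Fin m → ℝ | j + 1 ≤ (k : ℕ) → y k = x k} = {y | y k = x k} := by
            ext y; simp [hk]
          rw [he2]
          exact isClosed_eq (continuous_apply k) continuous_const
        · have he2 : {y : Fin m → ℝ | j + 1 ≤ (k : ℕ) → y k = x k} = Set.univ := by
            ext y; simp [hk]
          rw [he2]; exact isClosed_univ
      have hAconv : Convex ℝ A' := by
        intro y hy z hz p q hp hq hpq
        intro k hk
        have h1 := hy k hk
        have h2 := hz k hk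
        simp only [Pi.add_apply, Pi.smul_apply, smul_eq_mul]
        rw [h1, h2, ← add_mul, hpq, one_mul]
      have hScomp : ∀ i ∈ s, IsCompact (S i) := by
        intro i hi
        rw [hF1 i]
        exact ((hcp i hi).inter_right hAclosed).image (continuous_apply jf)
      have hSconv : ∀ i ∈ s, Convex ℝ (S i) := by
        intro i hi
        rw [hF1 i]
        rintro t1 ⟨y1, hy1, rfl⟩ t2 ⟨y2, hy2, rfl⟩ p q hp hq hpq
        exact ⟨p • y1 + q • y2, ((hcv i hi).inter hAconv) hy1 hy2 hp hq hpq, by simp⟩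
      have hF4 : ∀ t : ℝ, ∑ i ∈ s, c i * (if t ∈ S i then 1 else 0) = 0 := by
        intro t
        have := ihj' (Function.update x jf t)
        exact this
      set N := s.filter (fun i => (S i).Nonempty) with hN
      have hIcc : ∀ i ∈ N, S i = Set.Icc (sInf (S i)) (sSup (S i)) ∧ sInf (S i) ≤ sSup (S i) := by
        intro i hi
        rw [hN, Finset.mem_filter] at hi
        obtain ⟨his, hne'⟩ := hi
        have hc := hScomp i his
        have hv := hSconv i his
        have h1 : sInf (S i) ∈ S i := hc.sInf_mem hne'
        have h2 : sSup (S i) ∈ S i := hc.sSup_mem hne'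
        have hsub : S i ⊆ Set.Icc (sInf (S i)) (sSup (S i)) := fun t ht =>
          ⟨csInf_le hc.bddBelow ht, le_csSup hc.bddAbove ht⟩
        exact ⟨Set.Subset.antisymm hsub (hv.ordConnected.out h1 h2),
          csInf_le hc.bddBelow h2⟩
      have hkey : ∀ t : ℝ, ∑ i ∈ N, c i * (if sSup (S i) = t then 1 else 0) = 0 := by
        intro t
        by_cases hNe : N.Nonempty
        swap
        · rw [Finset.not_nonempty_iff_eq_empty] at hNe
          simp [hNe]
        set δ : ι → ℝ := fun i => if t < sInf (S i) then sInf (S i) - t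
          else if t < sSup (S i) then sSup (S i) - t else 1 with hδ
        have hδpos : ∀ i, 0 < δ i := by
          intro i
          rw [hδ]
          simp only
          split_ifs with h1 h2
          · linarith
          · linarith
          · norm_num
        set ε : ℝ := N.inf' hNe δ with hε
        have hεpos : 0 < ε := by
          rw [hε, Finset.lt_inf'_iff]
          exact fun i _ => hδpos i
        set s₀ : ℝ := t + ε / 2 with hs₀
        have hts₀ : t < s₀ := by rw [hs₀]; linarith
        have hεle : ∀ i ∈ N, ε ≤ δ i := fun i hi => Finset.inf'_le δ hi
        have hmatch : ∀ i ∈ N, (if s₀ ∈ S i then (1 : ℤ) else 0)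
            = (if sInf (S i) ≤ t ∧ t < sSup (S i) then 1 else 0) := by
          intro i hi
          obtain ⟨hicc, hpq⟩ := hIcc i hi
          have hδle := hεle i hi
          rcases lt_or_ge t (sInf (S i)) with h1 | h1
          · have hδi : δ i = sInf (S i) - t := if_pos h1
            rw [hδi] at hδle
            have hs₀lt : s₀ < sInf (S i) := by rw [hs₀]; linarith
            rw [if_neg, if_neg]
            · rintro ⟨hc1, -⟩; linarith
            · intro hc
              rw [hicc, Set.mem_Icc] at hc
              linarith [hc.1]
          · rcases lt_or_ge t (sSup (S i)) with h2 | h2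
            · have hδi : δ i = sSup (S i) - t := by
                rw [hδ]; simp only
                rw [if_neg (not_lt.mpr h1), if_pos h2]
              rw [hδi] at hδle
              have hs₀lt : s₀ < sSup (S i) := by rw [hs₀]; linarith
              rw [if_pos, if_pos ⟨h1, h2⟩]
              rw [hicc, Set.mem_Icc]
              constructor <;> linarith
            · rw [if_neg, if_neg]
              · rintro ⟨-, hc⟩; linarith
              · intro hc
                rw [hicc, Set.mem_Icc] at hc
                linarith [hc.2]
        have hsum_ext : ∀ u : ℝ, ∑ i ∈ N, c i * (if u ∈ S i then 1 else 0) = 0 := by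
          intro u
          calc ∑ i ∈ N, c i * (if u ∈ S i then (1 : ℤ) else 0)
              = ∑ i ∈ s, c i * (if u ∈ S i then (1 : ℤ) else 0) := by
                apply Finset.sum_subset (Finset.filter_subset _ _)
                intro i his hiN
                rw [Finset.mem_filter] at hiN
                push_neg at hiN
                have hu : u ∉ S i := by
                  rw [hiN his]
                  exact Set.notMem_empty u
                rw [if_neg hu, mul_zero]
            _ = 0 := hF4 u
        have e1 : ∑ i ∈ N, c i * (if sInf (S i) ≤ t ∧ t < sSup (S i) then 1 else 0) = 0 := by
          calc ∑ i ∈ N, c i * (if sInf (S i) ≤ t ∧ t < sSup (S i) then (1 : ℤ) else 0)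
              = ∑ i ∈ N, c i * (if s₀ ∈ S i then (1 : ℤ) else 0) :=
                Finset.sum_congr rfl fun i hi => by rw [hmatch i hi]
            _ = 0 := hsum_ext s₀
        have e2 : ∑ i ∈ N, c i * (if t ∈ S i then 1 else 0) = 0 := hsum_ext t
        have e3 : ∀ i ∈ N, (if sSup (S i) = t then (1 : ℤ) else 0)
            = (if t ∈ S i then 1 else 0) - (if sInf (S i) ≤ t ∧ t < sSup (S i) then 1 else 0) := by
          intro i hi
          obtain ⟨hicc, hpq⟩ := hIcc i hi
          have hm : t ∈ S i ↔ sInf (S i) ≤ t ∧ t ≤ sSup (S i) := by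
            conv_lhs => rw [hicc]
            exact Set.mem_Icc
          by_cases h1 : sSup (S i) = t
          · have hmem : t ∈ S i := hm.mpr ⟨by linarith [h1.le], h1.ge⟩
            rw [if_pos h1, if_pos hmem, if_neg]
            · norm_num
            · rintro ⟨-, hc⟩; linarith [h1.ge]
          · by_cases h2 : t ∈ S i
            · have h3 := hm.mp h2
              rw [if_neg h1, if_pos h2,
                if_pos ⟨h3.1, lt_of_le_of_ne h3.2 fun hc => h1 hc.symm⟩]
              norm_num
            · rw [if_neg h1, if_neg h2, if_neg]
              · norm_num
              · rintro ⟨hc1, hc2⟩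
                exact h2 (hm.mpr ⟨hc1, le_of_lt hc2⟩)
        calc ∑ i ∈ N, c i * (if sSup (S i) = t then (1 : ℤ) else 0)
            = ∑ i ∈ N, (c i * (if t ∈ S i then 1 else 0)
                - c i * (if sInf (S i) ≤ t ∧ t < sSup (S i) then 1 else 0)) := by
              refine Finset.sum_congr rfl fun i hi => ?_
              rw [e3 i hi, mul_sub]
          _ = 0 := by rw [Finset.sum_sub_distrib, e1, e2]; ring
      have hfinal : ∑ i ∈ N, c i = 0 := by
        set T := N.image (fun i => sSup (S i)) with hT
        have hone : ∀ i ∈ N, (∑ t ∈ T, if sSup (S i) = t then (1 : ℤ) else 0) = 1 := by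
          intro i hi
          rw [Finset.sum_ite_eq, if_pos (Finset.mem_image_of_mem _ hi)]
        calc ∑ i ∈ N, c i = ∑ i ∈ N, c i * (∑ t ∈ T, if sSup (S i) = t then (1 : ℤ) else 0) := by
              refine Finset.sum_congr rfl fun i hi => ?_
              rw [hone i hi, mul_one]
          _ = ∑ t ∈ T, ∑ i ∈ N, c i * (if sSup (S i) = t then (1 : ℤ) else 0) := by
              rw [Finset.sum_comm]
              refine Finset.sum_congr rfl fun i _ => Finset.mul_sum _ _ _
          _ = 0 := by
              refine Finset.sum_eq_zero fun t _ => hkey t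
      have hconv_if : ∀ i ∈ s, c i * (if x ∈ Cyl (j + 1) (K i) then (1 : ℤ) else 0)
          = (if (S i).Nonempty then c i else 0) := by
        intro i hi
        by_cases h : (S i).Nonempty
        · rw [if_pos h, if_pos ((hF3 i).mp h), mul_one]
        · rw [if_neg h, if_neg (fun hc => h ((hF3 i).mpr hc)), mul_zero]
      calc ∑ i ∈ s, c i * (if x ∈ Cyl (j + 1) (K i) then (1 : ℤ) else 0)
          = ∑ i ∈ s, (if (S i).Nonempty then c i else 0) :=
            Finset.sum_congr rfl hconv_if
        _ = ∑ i ∈ N, c i := (Finset.sum_filter _ _).symm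
        _ = 0 := hfinal
  have hAm := A m le_rfl (fun _ => 0)
  have hmem : ∀ i ∈ s, (fun _ => (0 : ℝ)) ∈ Cyl m (K i) := by
    intro i hi
    obtain ⟨y, hy⟩ := hne i hi
    exact ⟨y, hy, fun k hk => absurd hk (by omega)⟩
  calc ∑ i ∈ s, c i
      = ∑ i ∈ s, c i * (if (fun _ => (0 : ℝ)) ∈ Cyl m (K i) then 1 else 0) := by
        refine Finset.sum_congr rfl fun i hi => ?_
        rw [if_pos (hmem i hi), mul_one]
    _ = 0 := hAm

/-- For each `b ≤ a`, the Knutson coefficient `c_b(P)` of a polymatroid `P` with cage `a` is a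
valuative function of `P`. -/
theorem knutson_coefficient_is_valuative
    {m : ℕ} (hm : 1 ≤ m) (a : Fin m → ℕ) (s : ℕ)
    (rk : Fin s → Finset (Fin m) → ℕ) (hP : ∀ i, IsPolymatroid (rk i))
    (hcage : ∀ i (j : Fin m), rk i {j} ≤ a j)
    (cb : Fin s → (Fin m → ℕ) → ℤ) (hcb : ∀ i, KnutsonCoeffs a (rk i) (cb i))
    (b : Fin m → ℕ) (hb : ∀ j, b j ≤ a j)
    (c : Fin s → ℤ)
    (hval : ∀ x : Fin m → ℝ,
      ∑ i, c i * Set.indicator (basePolytope (rk i)) (fun _ => (1 : ℤ)) x = 0) :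
    ∑ i, c i * cb i b = 0 := by
  classical
  have hval' : ∀ x : Fin m → ℝ,
      ∑ i, c i * (if x ∈ basePolytope (rk i) then (1 : ℤ) else 0) = 0 := by
    intro x
    have h := hval x
    calc ∑ i, c i * (if x ∈ basePolytope (rk i) then (1 : ℤ) else 0)
        = ∑ i, c i * Set.indicator (basePolytope (rk i)) (fun _ => (1 : ℤ)) x := by
          refine Finset.sum_congr rfl fun i _ => ?_
          rw [Set.indicator_apply]
      _ = 0 := h
  have main : ∀ d : ℕ, ∀ b : Fin m → ℕ, (∀ j, b j ≤ a j) → (∑ j, (a j - b j)) = d →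
      ∑ i, c i * cb i b = 0 := by
    intro d
    induction d using Nat.strong_induction_on with
    | _ d ih =>
      intro b hb hd
      set box := (Fintype.piFinset fun j => Finset.Icc (b j) (a j)).filter (· ≠ b) with hboxd
      have hbox_mem : ∀ b' ∈ box, (∀ j, b j ≤ b' j ∧ b' j ≤ a j) ∧ b' ≠ b := by
        intro b' hb'
        rw [hboxd, Finset.mem_filter, Fintype.mem_piFinset] at hb'
        exact ⟨fun j => Finset.mem_Icc.mp (hb'.1 j), hb'.2⟩
      have hsum_lt : ∀ b' ∈ box, ∑ j, b j < ∑ j, b' j := by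
        intro b' hb'
        obtain ⟨hle, hne'⟩ := hbox_mem b' hb'
        have hex : ∃ j, b j < b' j := by
          by_contra h
          push_neg at h
          exact hne' (funext fun j => le_antisymm (h j) ((hle j).1))
        obtain ⟨j0, hj0⟩ := hex
        exact Finset.sum_lt_sum (fun j _ => (hle j).1) ⟨j0, Finset.mem_univ _, hj0⟩
      have hfin_eq : ∀ i, (∑ᶠ (b' : Fin m → ℕ)
          (_ : (∀ j, b j ≤ b' j ∧ b' j ≤ a j) ∧ b' ≠ b), cb i b') = ∑ b' ∈ box, cb i b' := by
        intro i
        refine finsum_cond_eq_sum_of_cond_iff _ ?_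
        intro b' _
        rw [hboxd, Finset.mem_filter, Fintype.mem_piFinset]
        constructor
        · rintro ⟨h1, h2⟩
          exact ⟨fun j => Finset.mem_Icc.mpr (h1 j), h2⟩
        · rintro ⟨h1, h2⟩
          exact ⟨fun j => Finset.mem_Icc.mp (h1 j), h2⟩
      have hmem_sum : ∀ i : Fin s, (fun j => (b j : ℝ)) ∈ basePolytope (rk i) →
          (∑ j, b j) = rk i Finset.univ := by
        intro i hmemb
        obtain ⟨-, h2, -⟩ := hmemb
        have : ((∑ j, b j : ℕ) : ℝ) = (rk i Finset.univ : ℝ) := by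
          push_cast
          simpa using h2
        exact_mod_cast this
      have hvanish : ∀ i : Fin s, rk i Finset.univ ≤ ∑ j, b j →
          ∀ b' ∈ box, cb i b' = 0 := by
        intro i hRi b' hb'
        exact (hcb i b' fun j => ((hbox_mem b' hb').1 j).2).1
          (lt_of_le_of_lt hRi (hsum_lt b' hb'))
      have hkey : ∀ i : Fin s, cb i b =
          (if (fun j => (b j : ℝ)) ∈ basePolytope (rk i) then 1 else 0)
          + (if (∑ j, b j) < rk i Finset.univ then 1 else 0)
          - ∑ b' ∈ box, cb i b' := by
        intro i
        obtain ⟨hgt, hceq, hclt⟩ := hcb i b hb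
        rcases lt_trichotomy (∑ j, b j) (rk i Finset.univ) with h | h | h
        · rw [hclt h, hfin_eq i]
          rw [if_neg, if_pos h]
          · ring
          · intro hc
            exact absurd (hmem_sum i hc) (Nat.ne_of_lt h)
        · rw [hceq h, if_neg (not_lt.mpr h.ge), Finset.sum_eq_zero (hvanish i h.ge)]
          ring
        · rw [hgt h, if_neg, if_neg (not_lt.mpr h.le), Finset.sum_eq_zero (hvanish i h.le)]
          · ring
          · intro hc
            exact absurd (hmem_sum i hc) (Nat.ne_of_gt h)
      have hgroup : ∑ i : Fin s, c i * (if (∑ j, b j) < rk i Finset.univ then (1 : ℤ) else 0)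
          = 0 := by
        have h1 : ∑ i : Fin s, c i * (if (∑ j, b j) < rk i Finset.univ then (1 : ℤ) else 0)
            = ∑ i ∈ Finset.univ.filter (fun i : Fin s => (∑ j, b j) < rk i Finset.univ), c i := by
          rw [Finset.sum_filter]
          refine Finset.sum_congr rfl fun i _ => ?_
          rw [mul_ite, mul_one, mul_zero]
        rw [h1]
        refine euler_char _ c (fun i => basePolytope (rk i))
          (fun i _ => basePolytope_convex (rk i)) (fun i _ => basePolytope_isCompact (rk i))
          (fun i _ => basePolytope_nonempty (rk i) (hP i)) ?_
        intro x
        by_cases hx : ((∑ j, b j : ℕ) : ℝ) < ∑ j, x j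
        · calc ∑ i ∈ Finset.univ.filter (fun i : Fin s => (∑ j, b j) < rk i Finset.univ),
              c i * (if x ∈ basePolytope (rk i) then (1 : ℤ) else 0)
              = ∑ i : Fin s, c i * (if x ∈ basePolytope (rk i) then (1 : ℤ) else 0) := by
                apply Finset.sum_subset (Finset.filter_subset _ _)
                intro i _ hiN
                rw [Finset.mem_filter] at hiN
                push_neg at hiN
                have hle : rk i Finset.univ ≤ ∑ j, b j := hiN (Finset.mem_univ i)
                rw [if_neg, mul_zero]
                intro hc
                obtain ⟨-, h2, -⟩ := hc
                have : (rk i Finset.univ : ℝ) ≤ ((∑ j, b j : ℕ) : ℝ) := by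
                  exact_mod_cast hle
                rw [h2] at hx
                linarith
            _ = 0 := hval' x
        · refine Finset.sum_eq_zero fun i hi => ?_
          rw [Finset.mem_filter] at hi
          rw [if_neg, mul_zero]
          intro hc
          obtain ⟨-, h2, -⟩ := hc
          have h3 : ((∑ j, b j : ℕ) : ℝ) < (rk i Finset.univ : ℝ) := by
            exact_mod_cast hi.2
          rw [h2] at hx
          linarith
      have hthird : ∑ i : Fin s, c i * ∑ b' ∈ box, cb i b' = 0 := by
        calc ∑ i : Fin s, c i * ∑ b' ∈ box, cb i b'
            = ∑ b' ∈ box, ∑ i : Fin s, c i * cb i b' := by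
              rw [Finset.sum_comm]
              refine Finset.sum_congr rfl fun i _ => Finset.mul_sum _ _ _
          _ = 0 := by
            refine Finset.sum_eq_zero fun b' hb' => ?_
            obtain ⟨hle, -⟩ := hbox_mem b' hb'
            have h1 : ∑ j, (a j - b' j) + ∑ j, b' j = ∑ j, a j := by
              rw [← Finset.sum_add_distrib]
              refine Finset.sum_congr rfl fun j _ => ?_
              have := (hle j).2
              omega
            have h2 : ∑ j, (a j - b j) + ∑ j, b j = ∑ j, a j := by
              rw [← Finset.sum_add_distrib]
              refine Finset.sum_congr rfl fun j _ => ?_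
              have := hb j
              omega
            have h3 := hsum_lt b' hb'
            exact ih (∑ j, (a j - b' j)) (by omega) b' (fun j => (hle j).2) rfl
      calc ∑ i : Fin s, c i * cb i b
          = ∑ i : Fin s, (c i * (if (fun j => (b j : ℝ)) ∈ basePolytope (rk i) then 1 else 0)
              + c i * (if (∑ j, b j) < rk i Finset.univ then 1 else 0)
              - c i * ∑ b' ∈ box, cb i b') := by
            refine Finset.sum_congr rfl fun i _ => ?_
            rw [hkey i]
            ring
        _ = (∑ i : Fin s, c i * (if (fun j => (b j : ℝ)) ∈ basePolytope (rk i) then 1 else 0))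
            + (∑ i : Fin s, c i * (if (∑ j, b j) < rk i Finset.univ then 1 else 0))
            - ∑ i : Fin s, c i * ∑ b' ∈ box, cb i b' := by
            rw [Finset.sum_sub_distrib, Finset.sum_add_distrib]
        _ = 0 := by
            rw [hval' _, hgroup, hthird]
            ring
  exact main (∑ j, (a j - b j)) b hb rfl
end

section
/- Let M be a loopless matroid of rank r ≥ 1 with rank function rk_M on a finite ground set E, and let 𝒮 denote the set of nonempty subsets of E. Then the set D = {κ ∈ ℤ_{≥0}^{𝒮} : Σ_{S∈𝒮} κ_S = r−1, and rk_M(∪_{S∈I} S) ≥ 1 + Σ_{S∈I} κ_S for every nonempty finite I ⊆ 𝒮} is the set of lattice points of the base polytope of a polymatroid on 𝒮; that is, there exists a polymatroid Q on the finite set 𝒮 with B(Q) ∩ ℤ^{𝒮} = D. -/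
open Finset

/-- The rank-function axioms of a matroid on a finite ground set: a matroid is a polymatroid
with cage `(1, …, 1)`. -/
def IsMatroidRank {α : Type*} [Fintype α] [DecidableEq α] (rk : Finset α → ℕ) : Prop :=
  rk ∅ = 0 ∧ (∀ I J : Finset α, I ⊆ J → rk I ≤ rk J) ∧
    (∀ I J : Finset α, rk (I ∩ J) + rk (I ∪ J) ≤ rk I + rk J) ∧
    ∀ e : α, rk {e} ≤ 1

section Uncross
variable {γ : Type*} [DecidableEq γ]

/-- Double counting: the sum of `κ` over a set covered by a family of blocks is at most
the total of the block sums. -/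
lemma dhr_cover_sum_le (κ : γ → ℕ) :
    ∀ (P : Multiset (Finset γ)) (I : Finset γ), (∀ x ∈ I, ∃ B ∈ P, x ∈ B) →
      ∑ x ∈ I, κ x ≤ (P.map (fun B => ∑ x ∈ B, κ x)).sum := by
  intro P
  induction P using Multiset.induction_on with
  | empty =>
    intro I h
    have : I = ∅ := by
      by_contra hne
      obtain ⟨x, hx⟩ := Finset.nonempty_iff_ne_empty.mpr hne
      obtain ⟨B, hB, _⟩ := h x hx
      exact absurd hB (Multiset.notMem_zero B)
    simp [this]
  | cons B P ih =>
    intro I h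
    rw [Multiset.map_cons, Multiset.sum_cons]
    have hsplit : ∑ x ∈ I ∩ B, κ x + ∑ x ∈ I \ B, κ x = ∑ x ∈ I, κ x :=
      Finset.sum_inter_add_sum_sdiff I B κ
    have h1 : ∑ x ∈ I ∩ B, κ x ≤ ∑ x ∈ B, κ x :=
      Finset.sum_le_sum_of_subset (Finset.inter_subset_right)
    have h2 : ∑ x ∈ I \ B, κ x ≤ (P.map (fun B => ∑ x ∈ B, κ x)).sum := by
      apply ih
      intro x hx
      rw [Finset.mem_sdiff] at hx
      obtain ⟨C, hC, hxC⟩ := h x hx.1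
      rcases Multiset.mem_cons.mp hC with rfl | hC'
      · exact absurd hxC hx.2
      · exact ⟨C, hC', hxC⟩
    omega

/-- Splitting a laminar multiset family into a part covering everything covered once
and a part covering everything covered twice. -/
lemma dhr_laminar_split (R : Multiset (Finset γ))
    (hlam : ∀ B ∈ R, ∀ C ∈ R, (B ∩ C).Nonempty → B ⊆ C ∨ C ⊆ B) :
    ∃ A B' : Multiset (Finset γ), A + B' = R ∧
      (∀ x : γ, 1 ≤ R.countP (fun B => x ∈ B) → ∃ B ∈ A, x ∈ B) ∧
      (∀ x : γ, 2 ≤ R.countP (fun B => x ∈ B) → ∃ B ∈ B', x ∈ B) := by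
  classical
  set maxl : Finset γ → Prop := fun B => ∀ C ∈ R, B ⊆ C → B = C with hmaxl
  set A : Multiset (Finset γ) := (R.toFinset.filter maxl).val with hA
  have hAle : A ≤ R := by
    rw [hA, Finset.filter_val]
    exact le_trans (Multiset.filter_le _ _) (Multiset.dedup_le R)
  have hmemA : ∀ B, B ∈ A ↔ B ∈ R ∧ maxl B := by
    intro B
    rw [hA, Finset.filter_val, Multiset.mem_filter]
    rw [show R.toFinset.val = R.dedup from rfl, Multiset.mem_dedup]
  -- every member of R is contained in some maximal member
  have hexmax : ∀ B ∈ R, ∃ M ∈ R, B ⊆ M ∧ maxl M := by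
    intro B hB
    have hne : (R.toFinset.filter (fun C => B ⊆ C)).Nonempty :=
      ⟨B, Finset.mem_filter.mpr ⟨Multiset.mem_toFinset.mpr hB, subset_rfl⟩⟩
    obtain ⟨M, hM, hMmax⟩ := Finset.exists_maximal hne
    replace hM : M ∈ R.toFinset.filter (fun C => B ⊆ C) := hM
    rw [Finset.mem_filter, Multiset.mem_toFinset] at hM
    refine ⟨M, hM.1, hM.2, ?_⟩
    intro C hC hMC
    by_contra hne'
    exact hne' (le_antisymm hMC (hMmax (Finset.mem_filter.mpr ⟨Multiset.mem_toFinset.mpr hC, hM.2.trans hMC⟩)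
      hMC))
  refine ⟨A, R - A, add_tsub_cancel_of_le hAle, ?_, ?_⟩
  · intro x hx
    obtain ⟨B, hB, hxB⟩ := Multiset.countP_pos.mp hx
    obtain ⟨M, hM, hBM, hMmax⟩ := hexmax B hB
    exact ⟨M, (hmemA M).mpr ⟨hM, hMmax⟩, hBM hxB⟩
  · intro x hx
    have hsum : R.countP (fun B => x ∈ B) =
        A.countP (fun B => x ∈ B) + (R - A).countP (fun B => x ∈ B) := by
      conv_lhs => rw [← add_tsub_cancel_of_le hAle]
      exact Multiset.countP_add _ _ _
    have hAcount : A.countP (fun B => x ∈ B) ≤ 1 := by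
      have : A.countP (fun B => x ∈ B) =
          ((R.toFinset.filter maxl).filter (fun B => x ∈ B)).card := by
        rw [hA, Multiset.countP_eq_card_filter]
        rfl
      rw [this]
      apply Finset.card_le_one.mpr
      intro B hB C hC
      rw [Finset.mem_filter, Finset.mem_filter, Multiset.mem_toFinset] at hB hC
      have hBR := hB.1.1
      have hCR := hC.1.1
      have hint : (B ∩ C).Nonempty := ⟨x, Finset.mem_inter.mpr ⟨hB.2, hC.2⟩⟩
      rcases hlam B hBR C hCR hint with hsub | hsub
      · exact hB.1.2 C hCR hsub
      · exact (hC.1.2 B hBR hsub).symm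
    have h1 : 1 ≤ (R - A).countP (fun B => x ∈ B) := by omega
    exact Multiset.countP_pos.mp h1

/-- The uncrossing lemma: from a multiset family covering `U` once and `V` twice, one can
extract (without increasing cost w.r.t. an intersecting-submodular `f`) a family covering `U`
and a family covering `V`. -/
lemma dhr_uncross [Fintype γ] (f : Finset γ → ℕ)
    (hf : ∀ B C : Finset γ, (B ∩ C).Nonempty → f (B ∩ C) + f (B ∪ C) ≤ f B + f C)
    (U V : Finset γ) :
    ∀ (n : ℕ) (R : Multiset (Finset γ)),
      (R.map (fun B => (Fintype.card γ + 1) * (Fintype.card γ + 1) - B.card * B.card)).sum ≤ n →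
      (∀ x ∈ U, 1 ≤ R.countP (fun B => x ∈ B)) →
      (∀ x ∈ V, 2 ≤ R.countP (fun B => x ∈ B)) →
      ∃ A B' : Multiset (Finset γ),
        (∀ x ∈ U, ∃ B ∈ A, x ∈ B) ∧ (∀ x ∈ V, ∃ B ∈ B', x ∈ B) ∧
        (A.map f).sum + (B'.map f).sum ≤ (R.map f).sum := by
  classical
  set N := Fintype.card γ with hN
  set φ : Finset γ → ℕ := fun B => (N + 1) * (N + 1) - B.card * B.card with hφ
  intro n
  induction n using Nat.strong_induction_on with
  | _ n ih =>
    intro R hm hU hV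
    by_cases hcross : ∃ B ∈ R, ∃ C ∈ R, B ≠ C ∧ (B ∩ C).Nonempty ∧ ¬ B ⊆ C ∧ ¬ C ⊆ B
    · obtain ⟨B, hB, C, hC, hne, hint, hnBC, hnCB⟩ := hcross
      have hC' : C ∈ R.erase B := Multiset.mem_erase_of_ne (Ne.symm hne) |>.mpr hC
      set rest := (R.erase B).erase C with hrest
      have hR : R = B ::ₘ C ::ₘ rest := by
        rw [hrest, Multiset.cons_erase hC', Multiset.cons_erase hB]
      set R' := (B ∩ C) ::ₘ (B ∪ C) ::ₘ rest with hR'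
      -- counts are preserved
      have hcount : ∀ x : γ, R'.countP (fun B => x ∈ B) = R.countP (fun B => x ∈ B) := by
        intro x
        rw [hR, hR']
        rw [Multiset.countP_cons, Multiset.countP_cons, Multiset.countP_cons,
          Multiset.countP_cons]
        by_cases hxB : x ∈ B <;> by_cases hxC : x ∈ C <;>
          simp [Finset.mem_inter, Finset.mem_union, hxB, hxC]
      -- the measure strictly decreases
      have hcards : (B ∩ C).card + (B ∪ C).card = B.card + C.card :=
        Finset.card_inter_add_card_union B C
      have hlt1 : (B ∩ C).card < B.card := by
        apply Finset.card_lt_card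
        exact lt_of_le_of_ne Finset.inter_subset_left
          (fun h => hnBC (Finset.inter_eq_left.mp h))
      have hlt2 : (B ∩ C).card < C.card := by
        apply Finset.card_lt_card
        exact lt_of_le_of_ne Finset.inter_subset_right
          (fun h => hnCB (Finset.inter_eq_right.mp h))
      have hsq : B.card * B.card + C.card * C.card <
          (B ∩ C).card * (B ∩ C).card + (B ∪ C).card * (B ∪ C).card := by
        obtain ⟨e, he⟩ : ∃ e, B.card = (B ∩ C).card + e + 1 := ⟨B.card - (B ∩ C).card - 1, by omega⟩
        obtain ⟨g, hg⟩ : ∃ g, C.card = (B ∩ C).card + g + 1 := ⟨C.card - (B ∩ C).card - 1, by omega⟩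
        have hd : (B ∪ C).card = (B ∩ C).card + e + g + 2 := by omega
        rw [he, hg, hd]
        nlinarith [Nat.zero_le ((B ∩ C).card)]
      have hBcard : B.card ≤ N := Finset.card_le_univ B
      have hCcard : C.card ≤ N := Finset.card_le_univ C
      have hUcard : (B ∪ C).card ≤ N := Finset.card_le_univ _
      have hIcard : (B ∩ C).card ≤ N := Finset.card_le_univ _
      have hφlt : φ (B ∩ C) + φ (B ∪ C) < φ B + φ C := by
        rw [hφ]
        simp only
        have h1 : B.card * B.card ≤ (N+1)*(N+1) := by nlinarith
        have h2 : C.card * C.card ≤ (N+1)*(N+1) := by nlinarith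
        have h3 : (B ∪ C).card * (B ∪ C).card ≤ (N+1)*(N+1) := by nlinarith
        have h4 : (B ∩ C).card * (B ∩ C).card ≤ (N+1)*(N+1) := by nlinarith
        omega
      have hmR : (R.map φ).sum = φ B + φ C + (rest.map φ).sum := by
        rw [hR]; simp [Multiset.map_cons, Multiset.sum_cons]; ring
      have hmR' : (R'.map φ).sum = φ (B ∩ C) + φ (B ∪ C) + (rest.map φ).sum := by
        rw [hR']; simp [Multiset.map_cons, Multiset.sum_cons]; ring
      have hmlt : (R'.map φ).sum < (R.map φ).sum := by omega
      obtain ⟨A, B'', hA, hB'', hcost⟩ := ih ((R'.map φ).sum) (by omega) R' le_rfl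
        (fun x hx => by rw [hcount x]; exact hU x hx)
        (fun x hx => by rw [hcount x]; exact hV x hx)
      refine ⟨A, B'', hA, hB'', le_trans hcost ?_⟩
      have hfR : (R.map f).sum = f B + f C + (rest.map f).sum := by
        rw [hR]; simp [Multiset.map_cons, Multiset.sum_cons]; ring
      have hfR' : (R'.map f).sum = f (B ∩ C) + f (B ∪ C) + (rest.map f).sum := by
        rw [hR']; simp [Multiset.map_cons, Multiset.sum_cons]; ring
      have := hf B C hint
      omega
    · push_neg at hcross
      have hlam : ∀ B ∈ R, ∀ C ∈ R, (B ∩ C).Nonempty → B ⊆ C ∨ C ⊆ B := by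
        intro B hB C hC hint
        by_cases hBC : B = C
        · exact Or.inl (hBC ▸ subset_rfl)
        · by_cases hsub : B ⊆ C
          · exact Or.inl hsub
          · exact Or.inr (hcross B hB C hC hBC hint hsub)
      obtain ⟨A, B', hAB, h1, h2⟩ := dhr_laminar_split R hlam
      refine ⟨A, B', fun x hx => h1 x (hU x hx), fun x hx => h2 x (hV x hx), ?_⟩
      rw [← hAB, Multiset.map_add, Multiset.sum_add]

end Uncross

section DHR

variable {α : Type} [Fintype α] [DecidableEq α]

/-- The cost function of the dragon Hall–Rado polymatroid. -/
def dhrF (rk : Finset α → ℕ) (B : Finset {S : Finset α // S.Nonempty}) : ℕ :=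
  rk (B.biUnion Subtype.val) - 1

/-- The rank function of the dragon Hall–Rado polymatroid: the minimum cost of a cover. -/
noncomputable def dhrRk (rk : Finset α → ℕ) (I : Finset {S : Finset α // S.Nonempty}) : ℕ :=
  sInf {n | ∃ P : Multiset (Finset {S : Finset α // S.Nonempty}),
    (∀ x ∈ I, ∃ B ∈ P, x ∈ B) ∧ (P.map (dhrF rk)).sum = n}

lemma dhrRk_set_nonempty (rk : Finset α → ℕ) (I : Finset {S : Finset α // S.Nonempty}) :
    {n | ∃ P : Multiset (Finset {S : Finset α // S.Nonempty}),
      (∀ x ∈ I, ∃ B ∈ P, x ∈ B) ∧ (P.map (dhrF rk)).sum = n}.Nonempty :=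
  ⟨dhrF rk I, {I}, fun x hx => ⟨I, Multiset.mem_singleton_self I, hx⟩, by simp⟩

lemma dhrRk_le_of_cover (rk : Finset α → ℕ) (I : Finset {S : Finset α // S.Nonempty})
    (P : Multiset (Finset {S : Finset α // S.Nonempty})) (hP : ∀ x ∈ I, ∃ B ∈ P, x ∈ B) :
    dhrRk rk I ≤ (P.map (dhrF rk)).sum :=
  Nat.sInf_le ⟨P, hP, rfl⟩

lemma dhrRk_spec (rk : Finset α → ℕ) (I : Finset {S : Finset α // S.Nonempty}) :
    ∃ P : Multiset (Finset {S : Finset α // S.Nonempty}),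
      (∀ x ∈ I, ∃ B ∈ P, x ∈ B) ∧ (P.map (dhrF rk)).sum = dhrRk rk I :=
  Nat.sInf_mem (dhrRk_set_nonempty rk I)

end DHR

/-- For a loopless matroid `M` of rank `r ≥ 1`, the set of tuples `κ ∈ ℤ_{≥0}^{𝒮}` (indexed by
the nonempty subsets `𝒮` of the ground set) with `Σ κ_S = r - 1` satisfying the dragon
Hall–Rado condition is the set of lattice points of the base polytope of a polymatroid on
`𝒮`: the dragon-Hall–Rado polymatroid of `M`. -/
theorem dragon_hall_rado_polymatroid_exists
    {α : Type} [Fintype α] [DecidableEq α] {r : ℕ}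
    (rk : Finset α → ℕ) (hM : IsMatroidRank rk) (hloopless : ∀ e : α, rk {e} = 1)
    (hrank : rk Finset.univ = r) (hr : 1 ≤ r) :
    ∃ rkQ : Finset {S : Finset α // S.Nonempty} → ℕ, IsPolymatroid rkQ ∧
      ∀ κ : {S : Finset α // S.Nonempty} → ℕ,
        ((fun S => (κ S : ℝ)) ∈ basePolytope rkQ ↔
          ((∑ S, κ S = r - 1) ∧
            ∀ I : Finset {S : Finset α // S.Nonempty}, I.Nonempty →
              1 + ∑ S ∈ I, κ S ≤ rk (I.biUnion Subtype.val))) := by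
  classical
  obtain ⟨hrk0, hrkmono, hrksub, -⟩ := hM
  set f := dhrF rk with hf
  -- basic facts about rk and f
  have hrk_pos : ∀ (I : Finset {S : Finset α // S.Nonempty}), I.Nonempty → 1 ≤ rk (I.biUnion Subtype.val) := by
    intro I ⟨S, hS⟩
    obtain ⟨e, he⟩ := S.2
    have hsub : {e} ⊆ I.biUnion Subtype.val := by
      intro x hx
      rw [Finset.mem_singleton] at hx
      exact Finset.mem_biUnion.mpr ⟨S, hS, hx ▸ he⟩
    calc 1 = rk {e} := (hloopless e).symm
    _ ≤ rk (I.biUnion Subtype.val) := hrkmono _ _ hsub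
  have hf_mono : ∀ (I J : Finset {S : Finset α // S.Nonempty}), I ⊆ J → f I ≤ f J := by
    intro I J hIJ
    exact Nat.sub_le_sub_right (hrkmono _ _ (Finset.biUnion_subset_biUnion_of_subset_left _ hIJ)) 1
  have hf_intsub : ∀ B C : Finset {S : Finset α // S.Nonempty}, (B ∩ C).Nonempty → f (B ∩ C) + f (B ∪ C) ≤ f B + f C := by
    intro B C hint
    obtain ⟨S, hS⟩ := hint
    rw [Finset.mem_inter] at hS
    set X := B.biUnion Subtype.val
    set Y := C.biUnion Subtype.val
    have hBCun : (B ∪ C).biUnion Subtype.val = X ∪ Y := by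
      ext e
      simp only [X, Y, Finset.mem_biUnion, Finset.mem_union]
      constructor
      · rintro ⟨T, hT | hT, heT⟩
        exacts [Or.inl ⟨T, hT, heT⟩, Or.inr ⟨T, hT, heT⟩]
      · rintro (⟨T, hT, heT⟩ | ⟨T, hT, heT⟩)
        exacts [⟨T, Or.inl hT, heT⟩, ⟨T, Or.inr hT, heT⟩]
    have hBCin : (B ∩ C).biUnion Subtype.val ⊆ X ∩ Y := by
      intro e he
      rw [Finset.mem_biUnion] at he
      obtain ⟨T, hT, heT⟩ := he
      rw [Finset.mem_inter] at hT
      exact Finset.mem_inter.mpr ⟨Finset.mem_biUnion.mpr ⟨T, hT.1, heT⟩,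
        Finset.mem_biUnion.mpr ⟨T, hT.2, heT⟩⟩
    have h1 : f (B ∩ C) ≤ rk (X ∩ Y) - 1 :=
      Nat.sub_le_sub_right (hrkmono _ _ hBCin) 1
    have hsub := hrksub X Y
    -- positivity facts
    obtain ⟨e, he⟩ := S.2
    have heX : e ∈ X := Finset.mem_biUnion.mpr ⟨S, hS.1, he⟩
    have heY : e ∈ Y := Finset.mem_biUnion.mpr ⟨S, hS.2, he⟩
    have h1X : 1 ≤ rk (X ∩ Y) := by
      calc 1 = rk {e} := (hloopless e).symm
      _ ≤ rk (X ∩ Y) := by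
          apply hrkmono
          intro x hx
          rw [Finset.mem_singleton] at hx
          subst hx
          exact Finset.mem_inter.mpr ⟨heX, heY⟩
    have h2X : rk (X ∩ Y) ≤ rk X := hrkmono _ _ Finset.inter_subset_left
    have h3X : rk (X ∩ Y) ≤ rk Y := hrkmono _ _ Finset.inter_subset_right
    have hfB : f B = rk X - 1 := rfl
    have hfC : f C = rk Y - 1 := rfl
    have hfBC : f (B ∪ C) = rk (X ∪ Y) - 1 := by rw [hf]; unfold dhrF; rw [hBCun]
    omega
  -- the rank function
  set rkQ := dhrRk rk with hrkQ
  -- rkQ of empty set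
  have hQ0 : rkQ ∅ = 0 := by
    have := dhrRk_le_of_cover rk ∅ 0 (by intro x hx; exact absurd hx (Finset.notMem_empty x))
    simpa using Nat.le_zero.mp (by simpa using this)
  -- monotonicity
  have hQmono : ∀ I J : Finset {S : Finset α // S.Nonempty}, I ⊆ J → rkQ I ≤ rkQ J := by
    intro I J hIJ
    obtain ⟨P, hP, hPsum⟩ := dhrRk_spec rk J
    rw [hrkQ, ← hPsum]
    exact dhrRk_le_of_cover rk I P (fun x hx => hP x (hIJ hx))
  -- rkQ at most f
  have hQ_le_f : ∀ I : Finset {S : Finset α // S.Nonempty}, rkQ I ≤ f I := by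
    intro I
    have := dhrRk_le_of_cover rk I {I} (fun x hx => ⟨I, Multiset.mem_singleton_self I, hx⟩)
    simpa using this
  -- submodularity
  have hQsub : ∀ I J : Finset {S : Finset α // S.Nonempty}, rkQ (I ∩ J) + rkQ (I ∪ J) ≤ rkQ I + rkQ J := by
    intro I J
    obtain ⟨P, hP, hPsum⟩ := dhrRk_spec rk I
    obtain ⟨Q, hQ, hQsum⟩ := dhrRk_spec rk J
    set R := P + Q with hR
    have hU : ∀ x ∈ I ∪ J, 1 ≤ R.countP (fun B => x ∈ B) := by
      intro x hx
      rcases Finset.mem_union.mp hx with hx | hx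
      · obtain ⟨B, hB, hxB⟩ := hP x hx
        exact Multiset.countP_pos.mpr ⟨B, Multiset.mem_add.mpr (Or.inl hB), hxB⟩
      · obtain ⟨B, hB, hxB⟩ := hQ x hx
        exact Multiset.countP_pos.mpr ⟨B, Multiset.mem_add.mpr (Or.inr hB), hxB⟩
    have hV : ∀ x ∈ I ∩ J, 2 ≤ R.countP (fun B => x ∈ B) := by
      intro x hx
      rw [Finset.mem_inter] at hx
      obtain ⟨B, hB, hxB⟩ := hP x hx.1
      obtain ⟨C, hC, hxC⟩ := hQ x hx.2
      rw [hR, Multiset.countP_add]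
      have h1 : 0 < P.countP (fun B => x ∈ B) := Multiset.countP_pos.mpr ⟨B, hB, hxB⟩
      have h2 : 0 < Q.countP (fun B => x ∈ B) := Multiset.countP_pos.mpr ⟨C, hC, hxC⟩
      omega
    obtain ⟨A, B', hA, hB', hcost⟩ := dhr_uncross f hf_intsub (I ∪ J) (I ∩ J)
      ((R.map (fun B => (Fintype.card {S : Finset α // S.Nonempty} + 1) * (Fintype.card {S : Finset α // S.Nonempty} + 1) - B.card * B.card)).sum)
      R le_rfl hU hV
    have hcostR : (R.map f).sum = rkQ I + rkQ J := by
      rw [hR, Multiset.map_add, Multiset.sum_add, hPsum, hQsum]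
    have h1 : rkQ (I ∪ J) ≤ (A.map f).sum := dhrRk_le_of_cover rk _ A hA
    have h2 : rkQ (I ∩ J) ≤ (B'.map f).sum := dhrRk_le_of_cover rk _ B' hB'
    omega
  -- rkQ of univ
  have huniv_biUnion : (Finset.univ : Finset {S : Finset α // S.Nonempty}).biUnion Subtype.val = Finset.univ := by
    ext e
    simp only [Finset.mem_univ, iff_true]
    exact Finset.mem_biUnion.mpr ⟨⟨{e}, Finset.singleton_nonempty e⟩, Finset.mem_univ _,
      Finset.mem_singleton_self e⟩
  have hα_ne : (Finset.univ : Finset α).Nonempty := by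
    rw [Finset.nonempty_iff_ne_empty]
    intro h
    rw [h, hrk0] at hrank
    omega
  have hβuniv_ne : (Finset.univ : Finset {S : Finset α // S.Nonempty}).Nonempty := by
    obtain ⟨e, -⟩ := hα_ne
    exact ⟨⟨{e}, Finset.singleton_nonempty e⟩, Finset.mem_univ _⟩
  have hQuniv : rkQ Finset.univ = r - 1 := by
    apply le_antisymm
    · have := hQ_le_f Finset.univ
      rw [hf] at this
      unfold dhrF at this
      rw [huniv_biUnion, hrank] at this
      exact this
    · -- any cover has cost at least r - 1
      apply le_csInf (dhrRk_set_nonempty rk Finset.univ)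
      rintro n ⟨P, hP, rfl⟩
      set Stop : {S : Finset α // S.Nonempty} := ⟨Finset.univ, hα_ne⟩
      obtain ⟨B, hB, hSB⟩ := hP Stop (Finset.mem_univ _)
      have hfB : r - 1 ≤ f B := by
        rw [hf]
        unfold dhrF
        have : (Finset.univ : Finset α) ⊆ B.biUnion Subtype.val := by
          intro e _
          exact Finset.mem_biUnion.mpr ⟨Stop, hSB, Finset.mem_univ e⟩
        have := hrkmono _ _ this
        rw [hrank] at this
        omega
      calc r - 1 ≤ f B := hfB
      _ ≤ (P.map f).sum := Multiset.single_le_sum (fun x _ => Nat.zero_le x) _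
          (Multiset.mem_map_of_mem f hB)
  -- assemble
  refine ⟨rkQ, ⟨hQ0, hQmono, hQsub⟩, ?_⟩
  intro κ
  constructor
  · rintro ⟨-, hsum, hineq⟩
    constructor
    · rw [hQuniv] at hsum
      have : ((∑ S, κ S : ℕ) : ℝ) = ((r - 1 : ℕ) : ℝ) := by push_cast at hsum ⊢; linarith
      exact_mod_cast this
    · intro I hI
      have hc := hineq I
      have hκI : ∑ S ∈ I, κ S ≤ rkQ I := by exact_mod_cast (show ∑ S ∈ I, (κ S : ℝ) ≤ (rkQ I : ℝ) from hc)
      have h2 := hQ_le_f I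
      rw [hf] at h2
      unfold dhrF at h2
      have h3 := hrk_pos I hI
      omega
  · rintro ⟨hsum, hdhr⟩
    have hκf : ∀ B : Finset {S : Finset α // S.Nonempty}, ∑ S ∈ B, κ S ≤ f B := by
      intro B
      rcases Finset.eq_empty_or_nonempty B with rfl | hB
      · simp
      · have := hdhr B hB
        have h3 := hrk_pos B hB
        rw [hf]
        unfold dhrF
        omega
    have hκQ : ∀ I : Finset {S : Finset α // S.Nonempty}, ∑ S ∈ I, κ S ≤ rkQ I := by
      intro I
      obtain ⟨P, hP, hPsum⟩ := dhrRk_spec rk I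
      calc ∑ S ∈ I, κ S ≤ (P.map (fun B => ∑ x ∈ B, κ x)).sum := dhr_cover_sum_le κ P I hP
      _ ≤ (P.map f).sum := by
          apply Multiset.sum_map_le_sum_map
          intro B _
          exact hκf B
      _ = rkQ I := hPsum
    refine ⟨fun S => Nat.cast_nonneg _, ?_, ?_⟩
    · rw [hQuniv]
      rw [← hsum]
      push_cast [Nat.cast_sub hr] at *
      · norm_cast
    · intro I
      exact (show ∑ S ∈ I, (κ S : ℝ) ≤ (rkQ I : ℝ) by exact_mod_cast hκQ I)
end

section
/- Let M be a loopless matroid with rank function rk_M on a finite ground set E = [n], and let M* be its dual matroid, with rank function rk_{M*}(S) = |S| − rk_M(E) + rk_M(E∖S). Then the following identity holds in the Chow ring A(M): Σ_{F nonempty flat of M} (rk_{M*}(E∖F) − rk_{M*}(E))·z_F = Σ_{F} c_F·h_F, where the right-hand sum is over connected flats F of M with rk_M(F) ≥ 2, c_F = Σ_{S ⊆ E with cl_M(S) = F} (−1)^{|S| − rk_M(S) + 1}·β(M|_S), cl_M denotes the closure operator of M, M|_S denotes the restriction of M to S, and β is Crapo's β-invariant. -/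
open Finset

attribute [local instance] Classical.propDecidable

/-- A flat of a matroid: a subset closed under the closure operator. -/
def IsFlat {α : Type*} [Fintype α] [DecidableEq α] (rk : Finset α → ℕ) (F : Finset α) : Prop :=
  ∀ e : α, rk (insert e F) = rk F → e ∈ F

/-- The closure of a subset in a matroid. -/
def matroidCl {α : Type*} [Fintype α] [DecidableEq α] (rk : Finset α → ℕ) (S : Finset α) :
    Finset α :=
  Finset.univ.filter fun e => rk (insert e S) = rk S

/-- The restriction `M|S` is a connected matroid: `S` is nonempty and admits no separation
`S = A ⊔ (S∖A)` into nonempty parts with `rk A + rk (S∖A) = rk S`. -/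
def IsConnRes {α : Type*} [Fintype α] [DecidableEq α] (rk : Finset α → ℕ) (S : Finset α) :
    Prop :=
  S.Nonempty ∧ ∀ A ⊆ S, A.Nonempty → A ≠ S → rk A + rk (S \ A) ≠ rk S

/-- Crapo's beta invariant of the restriction `M|S`:
`β(M|S) = (-1)^{rk S} Σ_{T ⊆ S} (-1)^{|T|} rk T`. -/
def betaRes {α : Type*} [Fintype α] [DecidableEq α] (rk : Finset α → ℕ) (S : Finset α) : ℤ :=
  (-1) ^ rk S * ∑ T ∈ S.powerset, (-1) ^ T.card * (rk T : ℤ)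

/-- The rank function of the dual matroid, `rk_{M*}(S) = |S| - rk(E) + rk(E ∖ S)`. -/
def rkDual {α : Type*} [Fintype α] [DecidableEq α] (rk : Finset α → ℕ) (S : Finset α) : ℤ :=
  (S.card : ℤ) - (rk Finset.univ : ℤ) + (rk (Finset.univ \ S) : ℤ)

/-- The nonempty flats of a matroid, indexing the Chow ring generators `z_F`. -/
def NonemptyFlat {α : Type*} [Fintype α] [DecidableEq α] (rk : Finset α → ℕ) : Type _ :=
  {F : Finset α // F.Nonempty ∧ IsFlat rk F}

noncomputable instance {α : Type*} [Fintype α] [DecidableEq α] (rk : Finset α → ℕ) :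
    Fintype (NonemptyFlat rk) :=
  Fintype.ofFinite {F : Finset α // F.Nonempty ∧ IsFlat rk F}

/-- The defining ideal of the Chow ring `A(M)` of a matroid: generated by the products
`z_F z_{F'}` over incomparable pairs of nonempty flats, and the linear forms `Σ_{F ∋ i} z_F`
for ground set elements `i`. -/
noncomputable def chowIdealZ {α : Type*} [Fintype α] [DecidableEq α] (rk : Finset α → ℕ) :
    Ideal (MvPolynomial (NonemptyFlat rk) ℤ) :=
  Ideal.span
    ({p | ∃ F F' : NonemptyFlat rk, ¬F.1 ⊆ F'.1 ∧ ¬F'.1 ⊆ F.1 ∧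
        p = MvPolynomial.X F * MvPolynomial.X F'} ∪
      {p | ∃ i : α,
        p = ∑ F : NonemptyFlat rk, if i ∈ F.1 then MvPolynomial.X F else 0})

/-- The simplicial class `h_S = -Σ_{F ⊇ S} z_F`, as a polynomial representative. -/
noncomputable def hPolyZ {α : Type*} [Fintype α] [DecidableEq α] (rk : Finset α → ℕ)
    (S : Finset α) : MvPolynomial (NonemptyFlat rk) ℤ :=
  -∑ F : NonemptyFlat rk, if S ⊆ F.1 then MvPolynomial.X F else 0

section Basics
variable {α : Type*} [Fintype α] [DecidableEq α] {rk : Finset α → ℕ}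

lemma mem_cl_iff {S : Finset α} {e : α} :
    e ∈ matroidCl rk S ↔ rk (insert e S) = rk S := by
  simp [matroidCl]

lemma subset_cl (S : Finset α) : S ⊆ matroidCl rk S := fun e he =>
  mem_cl_iff.2 (by rw [Finset.insert_eq_self.2 he])

lemma rk_union_of_subset_cl (hM : IsMatroidRank rk) (S : Finset α) :
    ∀ T : Finset α, T ⊆ matroidCl rk S → rk (S ∪ T) = rk S := by
  intro T
  induction T using Finset.induction_on with
  | empty => simp
  | @insert e T' hx ih =>
    intro h
    have he : rk (insert e S) = rk S := mem_cl_iff.1 (h (mem_insert_self e T'))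
    have hT' : rk (S ∪ T') = rk S := ih (fun x hx => h (mem_insert_of_mem hx))
    have hsub := hM.2.2.1 (insert e S) (S ∪ T')
    have h1 : insert e S ∪ (S ∪ T') = insert e (S ∪ T') := by
      ext x; simp [or_assoc]
    have h2 : S ⊆ insert e S ∩ (S ∪ T') := by
      intro x hx; simp [hx]
    have h3 : rk S ≤ rk (insert e S ∩ (S ∪ T')) := hM.2.1 _ _ h2
    have h4 : rk (S ∪ T') ≤ rk (insert e (S ∪ T')) :=
      hM.2.1 _ _ (subset_insert _ _)
    have h5 : S ∪ insert e T' = insert e (S ∪ T') := by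
      ext x; simp
    rw [h1] at hsub
    rw [h5]
    omega

lemma rk_cl (hM : IsMatroidRank rk) (S : Finset α) : rk (matroidCl rk S) = rk S := by
  have := rk_union_of_subset_cl hM S (matroidCl rk S) (subset_refl _)
  rwa [Finset.union_eq_right.2 (subset_cl S)] at this

lemma cl_flat (hM : IsMatroidRank rk) (S : Finset α) : IsFlat rk (matroidCl rk S) := by
  intro e he
  rw [rk_cl hM] at he
  have h1 : rk S ≤ rk (insert e S) := hM.2.1 _ _ (subset_insert _ _)
  have h2 : rk (insert e S) ≤ rk (insert e (matroidCl rk S)) :=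
    hM.2.1 _ _ (insert_subset_insert _ (subset_cl S))
  exact mem_cl_iff.2 (by omega)

lemma cl_subset_of_subset_flat (hM : IsMatroidRank rk) {S G : Finset α}
    (hG : IsFlat rk G) (h : S ⊆ G) : matroidCl rk S ⊆ G := by
  intro e he
  have he' : rk (insert e S) = rk S := mem_cl_iff.1 he
  have hsub := hM.2.2.1 (insert e S) G
  have h1 : insert e S ∪ G = insert e G := by
    ext x; simp
    constructor
    · rintro (h' | h' | h')
      · exact Or.inl h'
      · exact Or.inr (h h')
      · exact Or.inr h'
    · rintro (h' | h')
      · exact Or.inl h'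
      · exact Or.inr (Or.inr h')
  have h2 : rk S ≤ rk (insert e S ∩ G) := by
    apply hM.2.1; intro x hx; simp [mem_insert_of_mem hx, h hx]
  have h3 : rk G ≤ rk (insert e G) := hM.2.1 _ _ (subset_insert _ _)
  rw [h1] at hsub
  exact hG e (by omega)

lemma flat_cl_eq (hM : IsMatroidRank rk) {G : Finset α} (hG : IsFlat rk G) :
    matroidCl rk G = G :=
  le_antisymm (cl_subset_of_subset_flat hM hG (subset_refl _)) (subset_cl G)

lemma rk_le_card (hM : IsMatroidRank rk) (S : Finset α) : rk S ≤ S.card := by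
  induction S using Finset.induction_on with
  | empty => simp [hM.1]
  | @insert e T hx ih =>
    have hsub := hM.2.2.1 {e} T
    have h1 : {e} ∪ T = insert e T := by ext x; simp
    rw [h1] at hsub
    have := hM.2.2.2 e
    rw [card_insert_of_notMem hx]
    omega

lemma rk_pos (hM : IsMatroidRank rk) (hl : ∀ e : α, rk {e} = 1) {S : Finset α}
    (h : S.Nonempty) : 1 ≤ rk S := by
  obtain ⟨e, he⟩ := h
  calc 1 = rk {e} := (hl e).symm
    _ ≤ rk S := hM.2.1 _ _ (singleton_subset_iff.2 he)

lemma eq_empty_of_rk_eq_zero (hM : IsMatroidRank rk) (hl : ∀ e : α, rk {e} = 1)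
    {S : Finset α} (h : rk S = 0) : S = ∅ := by
  by_contra hne
  have := rk_pos hM hl (nonempty_iff_ne_empty.2 hne)
  omega
end Basics

section Sep
variable {α : Type*} [Fintype α] [DecidableEq α] {rk : Finset α → ℕ}

lemma defect_step (hM : IsMatroidRank rk) (A T : Finset α) (e : α) :
    rk (T ∩ A) + rk (T \ A) + rk (insert e T) ≤
      rk (insert e T ∩ A) + rk (insert e T \ A) + rk T := by
  by_cases heA : e ∈ A
  · have h1 : insert e T ∩ A = insert e (T ∩ A) := by
      ext x; by_cases hxe : x = e <;> simp [hxe, heA]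
    have h2 : insert e T \ A = T \ A := by
      ext x; by_cases hxe : x = e <;> simp [hxe, heA]
    have hsub := hM.2.2.1 (insert e (T ∩ A)) T
    have hu : insert e (T ∩ A) ∪ T = insert e T := by ext x; simp; tauto
    have hi : T ∩ A ⊆ insert e (T ∩ A) ∩ T := by intro x hx; simp at hx ⊢; tauto
    have := hM.2.1 _ _ hi
    rw [hu] at hsub
    rw [h1, h2]
    omega
  · have h1 : insert e T ∩ A = T ∩ A := by
      ext x; by_cases hxe : x = e <;> simp [hxe, heA]
    have h2 : insert e T \ A = insert e (T \ A) := by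
      ext x; by_cases hxe : x = e <;> simp [hxe, heA]
    have hsub := hM.2.2.1 (insert e (T \ A)) T
    have hu : insert e (T \ A) ∪ T = insert e T := by ext x; simp; tauto
    have hi : T \ A ⊆ insert e (T \ A) ∩ T := by intro x hx; simp at hx ⊢; tauto
    have := hM.2.1 _ _ hi
    rw [hu] at hsub
    rw [h1, h2]
    omega

lemma defect_le (hM : IsMatroidRank rk) (A T : Finset α) :
    ∀ U : Finset α, rk (T ∩ A) + rk (T \ A) + rk (T ∪ U) ≤
      rk ((T ∪ U) ∩ A) + rk ((T ∪ U) \ A) + rk T := by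
  intro U
  induction U using Finset.induction_on with
  | empty => simp
  | @insert e U hx ih =>
    have h1 : T ∪ insert e U = insert e (T ∪ U) := by ext x; simp [or_left_comm]
    have := defect_step hM A (T ∪ U) e
    rw [h1]
    omega

lemma rk_add_of_sep (hM : IsMatroidRank rk) {S A T : Finset α} (hA : A ⊆ S)
    (hT : T ⊆ S) (hsep : rk A + rk (S \ A) = rk S) :
    rk (T ∩ A) + rk (T \ A) = rk T := by
  have hle := defect_le hM A T S
  rw [Finset.union_eq_right.2 hT, Finset.inter_eq_right.2 hA] at hle
  have hge := hM.2.2.1 (T ∩ A) (T \ A)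
  have hi : (T ∩ A) ∩ (T \ A) = ∅ := by ext x; simp
  have hu : (T ∩ A) ∪ (T \ A) = T := by ext x; simp [em]; tauto
  rw [hi, hu, hM.1] at hge
  omega
end Sep

section Beta
variable {α : Type*} [Fintype α] [DecidableEq α] {rk : Finset α → ℕ}

lemma innerSum_sep_zero (hM : IsMatroidRank rk) {S A : Finset α} (hA : A ⊆ S)
    (hAne : A.Nonempty) (hSAne : (S \ A).Nonempty) (hsep : rk A + rk (S \ A) = rk S) :
    ∑ T ∈ S.powerset, (-1 : ℤ) ^ T.card * (rk T : ℤ) = 0 := by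
  have hbij : ∑ T ∈ S.powerset, (-1 : ℤ) ^ T.card * (rk T : ℤ) =
      ∑ p ∈ A.powerset ×ˢ (S \ A).powerset,
        (-1 : ℤ) ^ (p.1.card + p.2.card) * ((rk p.1 : ℤ) + (rk p.2 : ℤ)) := by
    refine Finset.sum_bij' (fun T _ => (T ∩ A, T \ A)) (fun p _ => p.1 ∪ p.2) ?_ ?_ ?_ ?_ ?_
    · intro T hT
      rw [mem_product]
      exact ⟨mem_powerset.2 inter_subset_right,
        mem_powerset.2 (sdiff_subset_sdiff (mem_powerset.1 hT) (subset_refl _))⟩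
    · intro p hp
      rw [mem_product] at hp
      exact mem_powerset.2 (union_subset ((mem_powerset.1 hp.1).trans hA)
        ((mem_powerset.1 hp.2).trans sdiff_subset))
    · intro T _
      ext x; simp only [mem_union, mem_inter, mem_sdiff]; tauto
    · intro p hp
      rw [mem_product] at hp
      have hp1 := mem_powerset.1 hp.1
      have hp2 := mem_powerset.1 hp.2
      have h1 : (p.1 ∪ p.2) ∩ A = p.1 := by
        ext x; simp only [mem_inter, mem_union]
        constructor
        · rintro ⟨h | h, hA'⟩
          · exact h
          · exact absurd hA' (mem_sdiff.1 (hp2 h)).2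
        · intro h; exact ⟨Or.inl h, hp1 h⟩
      have h2 : (p.1 ∪ p.2) \ A = p.2 := by
        ext x; simp only [mem_sdiff, mem_union]
        constructor
        · rintro ⟨h | h, hA'⟩
          · exact absurd (hp1 h) hA'
          · exact h
        · intro h; exact ⟨Or.inr h, (mem_sdiff.1 (hp2 h)).2⟩
      exact Prod.ext h1 h2
    · intro T hT
      have hc : (T ∩ A).card + (T \ A).card = T.card := card_inter_add_card_sdiff T A
      have hr : rk (T ∩ A) + rk (T \ A) = rk T :=
        rk_add_of_sep hM hA (mem_powerset.1 hT) hsep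
      rw [hc, ← Nat.cast_add, hr]
  rw [hbij, Finset.sum_product]
  have hz : (∑ y ∈ (S \ A).powerset, (-1 : ℤ) ^ y.card) = 0 :=
    sum_powerset_neg_one_pow_card_of_nonempty hSAne
  have hzA : (∑ x ∈ A.powerset, (-1 : ℤ) ^ x.card) = 0 :=
    sum_powerset_neg_one_pow_card_of_nonempty hAne
  have hin : ∀ x : Finset α,
      (∑ y ∈ (S \ A).powerset, (-1 : ℤ) ^ (x.card + y.card) * ((rk x : ℤ) + (rk y : ℤ)))
        = (-1 : ℤ) ^ x.card * ∑ y ∈ (S \ A).powerset, (-1 : ℤ) ^ y.card * (rk y : ℤ) := by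
    intro x
    have hterm : ∀ y : Finset α, (-1 : ℤ) ^ (x.card + y.card) * ((rk x : ℤ) + (rk y : ℤ))
        = (-1 : ℤ) ^ x.card * ((rk x : ℤ) * (-1 : ℤ) ^ y.card)
          + (-1 : ℤ) ^ x.card * ((-1 : ℤ) ^ y.card * (rk y : ℤ)) := by
      intro y; rw [pow_add]; ring
    rw [Finset.sum_congr rfl (fun y _ => hterm y), Finset.sum_add_distrib,
      ← Finset.mul_sum, ← Finset.mul_sum, ← Finset.mul_sum, hz]
    ring
  rw [Finset.sum_congr rfl (fun x _ => hin x), ← Finset.sum_mul, hzA, zero_mul]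

lemma betaRes_sep_zero (hM : IsMatroidRank rk) {S A : Finset α} (hA : A ⊆ S)
    (hAne : A.Nonempty) (hSAne : (S \ A).Nonempty) (hsep : rk A + rk (S \ A) = rk S) :
    betaRes rk S = 0 := by
  rw [betaRes, innerSum_sep_zero hM hA hAne hSAne hsep, mul_zero]

lemma betaRes_zero_of_not_conn_cl (hM : IsMatroidRank rk) (hl : ∀ e : α, rk {e} = 1)
    {S : Finset α} (h2 : 2 ≤ rk S) (hnc : ¬ IsConnRes rk (matroidCl rk S)) :
    betaRes rk S = 0 := by
  have hSne : S.Nonempty := by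
    rcases S.eq_empty_or_nonempty with h | h
    · rw [h, hM.1] at h2; omega
    · exact h
  have hclne : (matroidCl rk S).Nonempty := hSne.mono (subset_cl S)
  rw [IsConnRes, not_and] at hnc
  push_neg at hnc
  obtain ⟨A, hAcl, hAne, hAneq, hsep⟩ := hnc hclne
  have hrkcl : rk (matroidCl rk S) = rk S := rk_cl hM S
  have hsplit : rk (S ∩ A) + rk (S \ A) = rk S :=
    rk_add_of_sep hM hAcl (subset_cl S) hsep
  have hb1 : rk (S ∩ A) ≤ rk A := hM.2.1 _ _ inter_subset_right
  have hb2 : rk (S \ A) ≤ rk (matroidCl rk S \ A) :=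
    hM.2.1 _ _ (sdiff_subset_sdiff (subset_cl S) (subset_refl _))
  have hA1 : 1 ≤ rk A := rk_pos hM hl hAne
  have hcne : (matroidCl rk S \ A).Nonempty := by
    rw [sdiff_nonempty]
    intro hsub
    exact hAneq (le_antisymm hAcl hsub)
  have hc1 : 1 ≤ rk (matroidCl rk S \ A) := rk_pos hM hl hcne
  have hSA1 : 1 ≤ rk (S ∩ A) := by omega
  have hSA2 : 1 ≤ rk (S \ A) := by omega
  have hne1 : (S ∩ A).Nonempty := by
    rw [nonempty_iff_ne_empty]
    intro h
    rw [h, hM.1] at hSA1; omega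
  have hne2 : (S \ A).Nonempty := by
    rw [nonempty_iff_ne_empty]
    intro h
    rw [h, hM.1] at hSA2; omega
  have hsd : S \ (S ∩ A) = S \ A := by ext x; simp only [mem_sdiff, mem_inter]; tauto
  exact betaRes_sep_zero hM inter_subset_left hne1 (by rwa [hsd]) (by rwa [hsd])

lemma innerSum_rank_one (hM : IsMatroidRank rk) (hl : ∀ e : α, rk {e} = 1)
    {S : Finset α} (h1 : rk S = 1) :
    ∑ T ∈ S.powerset, (-1 : ℤ) ^ T.card * (rk T : ℤ) = -1 := by
  have hSne : S.Nonempty := by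
    rw [nonempty_iff_ne_empty]
    intro h; rw [h, hM.1] at h1; omega
  have hterm : ∀ T ∈ S.powerset,
      (-1 : ℤ) ^ T.card * (rk T : ℤ) = (-1 : ℤ) ^ T.card - (if T = ∅ then 1 else 0) := by
    intro T hT
    by_cases hTe : T = ∅
    · subst hTe; simp [hM.1]
    · have hr : rk T = 1 := le_antisymm (h1 ▸ hM.2.1 _ _ (mem_powerset.1 hT))
        (rk_pos hM hl (nonempty_iff_ne_empty.2 hTe))
      simp [hr, hTe]
  rw [Finset.sum_congr rfl hterm, Finset.sum_sub_distrib,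
    sum_powerset_neg_one_pow_card_of_nonempty hSne,
    Finset.sum_ite_eq' S.powerset (∅ : Finset α) (fun _ => (1 : ℤ)),
    if_pos (empty_mem_powerset S)]
  ring
end Beta

section Mobius
variable {α : Type*} [Fintype α] [DecidableEq α] {rk : Finset α → ℕ}

lemma mobius_inner {G T : Finset α} (hT : T ⊆ G) :
    ∑ S ∈ G.powerset.filter (fun S => T ⊆ S), (-1 : ℤ) ^ (S.card + 1)
      = (-1 : ℤ) ^ (T.card + 1) * (if T = G then 1 else 0) := by
  have hbij : ∑ S ∈ G.powerset.filter (fun S => T ⊆ S), (-1 : ℤ) ^ (S.card + 1)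
      = ∑ R ∈ (G \ T).powerset, (-1 : ℤ) ^ (T.card + 1 + R.card) := by
    refine Finset.sum_bij' (fun S _ => S \ T) (fun R _ => T ∪ R) ?_ ?_ ?_ ?_ ?_
    · intro S hS
      rw [mem_filter, mem_powerset] at hS
      exact mem_powerset.2 (sdiff_subset_sdiff hS.1 (subset_refl _))
    · intro R hR
      rw [mem_powerset] at hR
      rw [mem_filter, mem_powerset]
      exact ⟨union_subset hT (hR.trans sdiff_subset), subset_union_left⟩
    · intro S hS
      rw [mem_filter] at hS
      exact union_sdiff_of_subset hS.2
    · intro R hR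
      rw [mem_powerset] at hR
      refine union_sdiff_cancel_left ?_
      rw [disjoint_left]
      intro x hx hxR
      exact (mem_sdiff.1 (hR hxR)).2 hx
    · intro S hS
      rw [mem_filter] at hS
      have h := card_sdiff_add_card_eq_card hS.2
      show (-1 : ℤ) ^ (S.card + 1) = (-1 : ℤ) ^ (T.card + 1 + (S \ T).card)
      congr 1
      omega
  rw [hbij]
  have : ∀ R : Finset α, (-1 : ℤ) ^ (T.card + 1 + R.card)
      = (-1 : ℤ) ^ (T.card + 1) * (-1 : ℤ) ^ R.card := fun R => pow_add _ _ _
  rw [Finset.sum_congr rfl (fun R _ => this R), ← Finset.mul_sum,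
    sum_powerset_neg_one_pow_card]
  congr 1
  have : G \ T = ∅ ↔ T = G := by
    rw [sdiff_eq_empty_iff_subset]
    constructor
    · intro h; exact le_antisymm hT h
    · intro h; rw [h]
  simp [this]

lemma mobius (hM : IsMatroidRank rk) (G : Finset α) :
    ∑ S ∈ G.powerset, (-1 : ℤ) ^ (S.card + 1) *
        (∑ T ∈ S.powerset, (-1 : ℤ) ^ T.card * (rk T : ℤ)) = -(rk G : ℤ) := by
  have hexp : ∀ S ∈ G.powerset, (-1 : ℤ) ^ (S.card + 1) *
      (∑ T ∈ S.powerset, (-1 : ℤ) ^ T.card * (rk T : ℤ))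
      = ∑ T ∈ S.powerset, (-1 : ℤ) ^ (S.card + 1) * ((-1 : ℤ) ^ T.card * (rk T : ℤ)) :=
    fun S _ => Finset.mul_sum _ _ _
  rw [Finset.sum_congr rfl hexp]
  rw [Finset.sum_comm' (s' := fun T => G.powerset.filter (fun S => T ⊆ S))
    (t' := G.powerset) (fun S T => by
      simp only [mem_filter, mem_powerset]
      constructor
      · rintro ⟨hS, hT⟩; exact ⟨⟨hS, hT⟩, hT.trans hS⟩
      · rintro ⟨⟨hS, hT⟩, _⟩; exact ⟨hS, hT⟩)]
  have hterm : ∀ T ∈ G.powerset,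
      (∑ S ∈ G.powerset.filter (fun S => T ⊆ S),
        (-1 : ℤ) ^ (S.card + 1) * ((-1 : ℤ) ^ T.card * (rk T : ℤ)))
      = if T = G then -(rk T : ℤ) else 0 := by
    intro T hT
    rw [← Finset.sum_mul, mobius_inner (mem_powerset.1 hT)]
    by_cases hTG : T = G
    · rw [if_pos hTG, if_pos hTG, mul_one, ← mul_assoc, ← pow_add]
      have he : T.card + 1 + T.card = 2 * T.card + 1 := by ring
      rw [he, Odd.neg_one_pow ⟨T.card, by ring⟩]
      ring
    · rw [if_neg hTG, if_neg hTG, mul_zero, zero_mul]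
  rw [Finset.sum_congr rfl hterm, Finset.sum_ite_eq' G.powerset G (fun T => -(rk T : ℤ)),
    if_pos (mem_powerset_self G)]
end Mobius

noncomputable def flatPick {α : Type*} (P : Finset α) : Option α :=
  if h : P.Nonempty then some h.choose else none

noncomputable def bInt {α : Type*} [Fintype α] [DecidableEq α] (rk : Finset α → ℕ) (i : α) :
    ℤ :=
  if flatPick (matroidCl rk {i}) = some i then 1 else 0

section RankOne
variable {α : Type*} [Fintype α] [DecidableEq α] {rk : Finset α → ℕ}

lemma cl_eq_of_rank_one (hM : IsMatroidRank rk) (hl : ∀ e : α, rk {e} = 1)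
    {P T : Finset α} (hPf : IsFlat rk P) (hP1 : rk P = 1) (hTP : T ⊆ P)
    (hTne : T.Nonempty) : matroidCl rk T = P := by
  refine le_antisymm (cl_subset_of_subset_flat hM hPf hTP) ?_
  intro e heP
  have hrkT : rk T = 1 := le_antisymm (hP1 ▸ hM.2.1 _ _ hTP) (rk_pos hM hl hTne)
  have h1 : rk (insert e T) ≤ 1 := hP1 ▸ hM.2.1 _ _ (insert_subset heP hTP)
  have h2 : rk T ≤ rk (insert e T) := hM.2.1 _ _ (subset_insert _ _)
  exact mem_cl_iff.2 (by omega)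

lemma rank_one_part (hM : IsMatroidRank rk) (hl : ∀ e : α, rk {e} = 1)
    {G : Finset α} (hGf : IsFlat rk G) :
    ∑ T ∈ G.powerset.filter (fun T => rk T = 1), (-1 : ℤ) ^ T.card
      = - ∑ i ∈ G, bInt rk i := by
  classical
  set t1 : Finset (Finset α) :=
    Finset.univ.powerset.filter (fun P => (IsFlat rk P ∧ rk P = 1) ∧ P ⊆ G) with ht1
  have hmaps1 : ∀ T ∈ G.powerset.filter (fun T => rk T = 1), matroidCl rk T ∈ t1 := by
    intro T hT
    rw [mem_filter, mem_powerset] at hT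
    rw [ht1, mem_filter, mem_powerset]
    exact ⟨subset_univ _, ⟨cl_flat hM T, by rw [rk_cl hM]; exact hT.2⟩,
      cl_subset_of_subset_flat hM hGf hT.1⟩
  have hL : ∑ T ∈ G.powerset.filter (fun T => rk T = 1), (-1 : ℤ) ^ T.card
      = ∑ P ∈ t1, ∑ T ∈ (G.powerset.filter (fun T => rk T = 1)).filter
          (fun T => matroidCl rk T = P), (-1 : ℤ) ^ T.card :=
    (Finset.sum_fiberwise_of_maps_to hmaps1 _).symm
  have hmaps2 : ∀ i ∈ G, matroidCl rk {i} ∈ t1 := by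
    intro i hi
    rw [ht1, mem_filter, mem_powerset]
    exact ⟨subset_univ _, ⟨cl_flat hM _, by rw [rk_cl hM]; exact hl i⟩,
      cl_subset_of_subset_flat hM hGf (singleton_subset_iff.2 hi)⟩
  have hR : ∑ i ∈ G, bInt rk i
      = ∑ P ∈ t1, ∑ i ∈ G.filter (fun i => matroidCl rk {i} = P), bInt rk i :=
    (Finset.sum_fiberwise_of_maps_to hmaps2 _).symm
  rw [hL, hR, ← Finset.sum_neg_distrib]
  refine Finset.sum_congr rfl ?_
  intro P hP
  rw [ht1, mem_filter, mem_powerset] at hP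
  obtain ⟨-, ⟨hPf, hP1⟩, hPG⟩ := hP
  have hPne : P.Nonempty := by
    rw [nonempty_iff_ne_empty]
    intro h; rw [h, hM.1] at hP1; omega
  -- left fiber
  have hfib : (G.powerset.filter (fun T => rk T = 1)).filter
      (fun T => matroidCl rk T = P) = P.powerset.erase ∅ := by
    ext T
    simp only [mem_filter, mem_powerset, mem_erase]
    constructor
    · rintro ⟨⟨hTG, hrk⟩, hcl⟩
      refine ⟨?_, hcl ▸ subset_cl T⟩
      intro h; rw [h, hM.1] at hrk; omega
    · rintro ⟨hTne', hTP⟩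
      have hTne : T.Nonempty := nonempty_iff_ne_empty.2 hTne'
      have hrk : rk T = 1 := le_antisymm (hP1 ▸ hM.2.1 _ _ hTP) (rk_pos hM hl hTne)
      exact ⟨⟨hTP.trans hPG, hrk⟩, cl_eq_of_rank_one hM hl hPf hP1 hTP hTne⟩
  have hsum1 : ∑ T ∈ P.powerset.erase ∅, (-1 : ℤ) ^ T.card = -1 := by
    have h0 := Finset.sum_erase_add P.powerset (fun T => (-1 : ℤ) ^ T.card)
      (empty_mem_powerset P)
    rw [sum_powerset_neg_one_pow_card_of_nonempty hPne] at h0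
    simp only [card_empty, pow_zero] at h0
    linarith
  -- right fiber
  have hpick : flatPick P = some hPne.choose := dif_pos hPne
  have hc : hPne.choose ∈ P := hPne.choose_spec
  have hfib2 : ∑ i ∈ G.filter (fun i => matroidCl rk {i} = P), bInt rk i = 1 := by
    have hcongr : ∀ i ∈ G.filter (fun i => matroidCl rk {i} = P),
        bInt rk i = if i = hPne.choose then 1 else 0 := by
      intro i hi
      rw [mem_filter] at hi
      rw [bInt, hi.2, hpick]
      simp [eq_comm]
    rw [Finset.sum_congr rfl hcongr, Finset.sum_ite_eq' _ hPne.choose (fun _ => (1 : ℤ))]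
    rw [if_pos]
    rw [mem_filter]
    exact ⟨hPG hc, cl_eq_of_rank_one hM hl hPf hP1 (singleton_subset_iff.2 hc)
      (singleton_nonempty _)⟩
  rw [hfib, hsum1, hfib2]
end RankOne
section Key
variable {α : Type*} [Fintype α] [DecidableEq α] {rk : Finset α → ℕ}

lemma betaRes_empty (hM : IsMatroidRank rk) : betaRes rk (∅ : Finset α) = 0 := by
  rw [betaRes]
  rw [powerset_empty, Finset.sum_singleton]
  simp [hM.1]

lemma key_lemma (hM : IsMatroidRank rk) (hl : ∀ e : α, rk {e} = 1)
    {G : Finset α} (hGf : IsFlat rk G) :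
    ∑ F ∈ Finset.univ.filter
        (fun F : NonemptyFlat rk => (2 ≤ rk F.1 ∧ IsConnRes rk F.1) ∧ F.1 ⊆ G),
      (∑ T ∈ Finset.univ.powerset.filter (fun T : Finset α => matroidCl rk T = F.1),
        (-1 : ℤ) ^ (T.card - rk T + 1) * betaRes rk T)
      = (∑ i ∈ G, bInt rk i) - (rk G : ℤ) := by
  classical
  set tval : Finset α → ℤ := fun T => (-1 : ℤ) ^ (T.card - rk T + 1) * betaRes rk T with htval
  set t : Finset (Finset α) := Finset.univ.powerset.filter
    (fun P => ((P.Nonempty ∧ IsFlat rk P) ∧ (2 ≤ rk P ∧ IsConnRes rk P)) ∧ P ⊆ G) with ht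
  -- Step 1 : sum over subtype = sum over t
  have h1 : ∑ F ∈ Finset.univ.filter
        (fun F : NonemptyFlat rk => (2 ≤ rk F.1 ∧ IsConnRes rk F.1) ∧ F.1 ⊆ G),
      (∑ T ∈ Finset.univ.powerset.filter (fun T : Finset α => matroidCl rk T = F.1), tval T)
      = ∑ P ∈ t, ∑ T ∈ Finset.univ.powerset.filter
          (fun T : Finset α => matroidCl rk T = P), tval T := by
    refine Finset.sum_bij' (fun F _ => F.1)
      (fun P hP => ⟨P, (Finset.mem_filter.1 hP).2.1.1⟩) ?_ ?_ ?_ ?_ ?_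
    · intro F hF
      rw [Finset.mem_filter] at hF
      rw [ht, Finset.mem_filter]
      exact ⟨Finset.mem_powerset.2 (Finset.subset_univ _), ⟨F.2, hF.2.1⟩, hF.2.2⟩
    · intro P hP
      rw [ht, Finset.mem_filter] at hP
      apply Finset.mem_filter.2
      exact ⟨Finset.mem_univ _, hP.2.1.2, hP.2.2⟩
    · intro F _; rfl
    · intro P _; rfl
    · intro F _; rfl
  rw [h1]
  -- Step 2 : group by closure
  set s : Finset (Finset α) :=
    Finset.univ.powerset.filter (fun T => matroidCl rk T ∈ t) with hs
  have h2 : ∑ P ∈ t, ∑ T ∈ Finset.univ.powerset.filter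
      (fun T : Finset α => matroidCl rk T = P), tval T = ∑ T ∈ s, tval T := by
    have hfibeq : ∀ P ∈ t, Finset.univ.powerset.filter
        (fun T : Finset α => matroidCl rk T = P)
        = s.filter (fun T => matroidCl rk T = P) := by
      intro P hP
      rw [hs, Finset.filter_filter]
      apply Finset.filter_congr
      intro T _
      constructor
      · intro hc; exact ⟨hc ▸ hP, hc⟩
      · intro hc; exact hc.2
    rw [Finset.sum_congr rfl (fun P hP => by rw [hfibeq P hP])]
    exact Finset.sum_fiberwise_of_maps_to (fun T hT => (Finset.mem_filter.1 hT).2) tval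
  rw [h2]
  -- Step 3 : identify s
  have h3 : s = G.powerset.filter (fun T => 2 ≤ rk T ∧ IsConnRes rk (matroidCl rk T)) := by
    ext T
    rw [hs, ht]
    simp only [Finset.mem_filter, Finset.mem_powerset, Finset.subset_univ, true_and]
    constructor
    · rintro ⟨⟨⟨hne, hfl⟩, h2c, hconn⟩, hsubG⟩
      exact ⟨(subset_cl T).trans hsubG, by rw [← rk_cl hM T]; exact h2c, hconn⟩
    · rintro ⟨hTG, h2c, hconn⟩
      have hTne : T.Nonempty := by
        rw [nonempty_iff_ne_empty]
        intro h; rw [h, hM.1] at h2c; omega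
      exact ⟨⟨⟨hTne.mono (subset_cl T), cl_flat hM T⟩,
        by rw [rk_cl hM T]; exact h2c, hconn⟩,
        cl_subset_of_subset_flat hM hGf hTG⟩
  rw [h3]
  -- Step 4 : drop the connectivity condition
  have h4 : ∑ T ∈ G.powerset.filter (fun T => 2 ≤ rk T ∧ IsConnRes rk (matroidCl rk T)),
      tval T = ∑ T ∈ G.powerset.filter (fun T => 2 ≤ rk T), tval T := by
    apply Finset.sum_subset
    · intro T hT
      rw [Finset.mem_filter] at hT ⊢
      exact ⟨hT.1, hT.2.1⟩
    · intro T hT hT'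
      rw [Finset.mem_filter] at hT
      have hnc : ¬ IsConnRes rk (matroidCl rk T) := by
        intro hc
        exact hT' (Finset.mem_filter.2 ⟨hT.1, hT.2, hc⟩)
      rw [htval]
      simp only
      rw [betaRes_zero_of_not_conn_cl hM hl hT.2 hnc, mul_zero]
  rw [h4]
  -- Step 5 : split the full sum
  have h5 := Finset.sum_filter_add_sum_filter_not G.powerset (fun T => 2 ≤ rk T) tval
  -- Step 6 : total sum via Möbius
  have h6 : ∑ T ∈ G.powerset, tval T = -(rk G : ℤ) := by
    have hterm : ∀ T ∈ G.powerset, tval T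
        = (-1 : ℤ) ^ (T.card + 1) * (∑ T' ∈ T.powerset, (-1 : ℤ) ^ T'.card * (rk T' : ℤ)) := by
      intro T _
      rw [htval]
      simp only [betaRes]
      rw [← mul_assoc, ← pow_add]
      have he : T.card - rk T + 1 + rk T = T.card + 1 := by
        have := rk_le_card hM T
        omega
      rw [he]
    rw [Finset.sum_congr rfl hterm]
    exact mobius hM G
  -- Step 7 : the small-rank part
  have h7 : ∑ T ∈ G.powerset.filter (fun T => ¬ 2 ≤ rk T), tval T
      = - ∑ i ∈ G, bInt rk i := by
    have h7a : ∑ T ∈ G.powerset.filter (fun T => rk T = 1), tval T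
        = ∑ T ∈ G.powerset.filter (fun T => ¬ 2 ≤ rk T), tval T := by
      apply Finset.sum_subset
      · intro T hT
        rw [Finset.mem_filter] at hT ⊢
        exact ⟨hT.1, by omega⟩
      · intro T hT hT'
        rw [Finset.mem_filter] at hT
        have hr0 : rk T = 0 := by
          by_contra h
          exact hT' (Finset.mem_filter.2 ⟨hT.1, by omega⟩)
        have hTe : T = ∅ := eq_empty_of_rk_eq_zero hM hl hr0
        rw [htval]
        simp only
        rw [hTe, betaRes_empty hM, mul_zero]
    have h7b : ∀ T ∈ G.powerset.filter (fun T => rk T = 1), tval T = (-1 : ℤ) ^ T.card := by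
      intro T hT
      rw [Finset.mem_filter] at hT
      rw [htval]
      simp only [betaRes]
      rw [innerSum_rank_one hM hl hT.2]
      have hle := rk_le_card hM T
      have he : T.card - rk T + 1 = T.card := by omega
      rw [he, hT.2, pow_one]
      ring
    rw [← h7a, Finset.sum_congr rfl h7b]
    exact rank_one_part hM hl hGf
  have := h5
  rw [h6] at this
  rw [h7] at this
  linarith
end Key

section Alg
variable {α : Type*} [Fintype α] [DecidableEq α] {rk : Finset α → ℕ}

lemma rkDual_diff (hM : IsMatroidRank rk) (G : Finset α) :
    rkDual rk (Finset.univ \ G) - rkDual rk Finset.univ = (rk G : ℤ) - (G.card : ℤ) := by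
  rw [rkDual, rkDual, Finset.sdiff_self, Finset.sdiff_sdiff_self_left, Finset.univ_inter,
    Finset.card_sdiff_of_subset (subset_univ G), hM.1]
  rw [Nat.cast_sub (Finset.card_le_card (Finset.subset_univ G))]
  push_cast
  ring
end Alg


/-- For a loopless matroid on `E`, the first Chern class of `L_{B(M*)}`, namely
`Σ_F (rk_{M*}(E∖F) - rk_{M*}(E)) z_F`, equals `Σ_F c_F h_F` in the Chow ring `A(M)`, the sum
over connected flats `F` of rank at least `2`, with
`c_F = Σ_{cl(S) = F} (-1)^{|S| - rk S + 1} β(M|S)`. -/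
theorem dual_base_polytope_class_eq_simplicial_combination
    {α : Type} [Fintype α] [DecidableEq α]
    (rk : Finset α → ℕ) (hM : IsMatroidRank rk) (hloopless : ∀ e : α, rk {e} = 1) :
    Ideal.Quotient.mk (chowIdealZ rk)
        (∑ F : NonemptyFlat rk,
          (rkDual rk (Finset.univ \ F.1) - rkDual rk Finset.univ) • MvPolynomial.X F) =
      Ideal.Quotient.mk (chowIdealZ rk)
        (∑ F ∈ Finset.univ.filter
            (fun F : NonemptyFlat rk => 2 ≤ rk F.1 ∧ IsConnRes rk F.1),
          (∑ T ∈ Finset.univ.powerset.filter (fun T : Finset α => matroidCl rk T = F.1),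
              (-1 : ℤ) ^ (T.card - rk T + 1) * betaRes rk T) • hPolyZ rk F.1) := by
  classical
  set cc : NonemptyFlat rk → ℤ := fun F =>
    ∑ T ∈ Finset.univ.powerset.filter (fun T : Finset α => matroidCl rk T = F.1),
      (-1 : ℤ) ^ (T.card - rk T + 1) * betaRes rk T with hcc
  set ff : Finset (NonemptyFlat rk) :=
    Finset.univ.filter (fun F : NonemptyFlat rk => 2 ≤ rk F.1 ∧ IsConnRes rk F.1) with hff
  set Q : MvPolynomial (NonemptyFlat rk) ℤ :=
    ∑ i : α, (bInt rk i - 1) •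
      (∑ F : NonemptyFlat rk, if i ∈ F.1 then MvPolynomial.X F else 0) with hQdef
  have hQmem : Q ∈ chowIdealZ rk := by
    rw [hQdef]
    apply Ideal.sum_mem
    intro i _
    have hL : (∑ F : NonemptyFlat rk, if i ∈ F.1 then MvPolynomial.X F else 0)
        ∈ chowIdealZ rk := Ideal.subset_span (Or.inr ⟨i, rfl⟩)
    rw [MvPolynomial.smul_eq_C_mul]
    exact Ideal.mul_mem_left _ _ hL
  have hP2 : ∑ F ∈ ff, cc F • hPolyZ rk F.1
      = ∑ G : NonemptyFlat rk,
          (-(∑ F ∈ ff.filter (fun F => F.1 ⊆ G.1), cc F)) • MvPolynomial.X G := by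
    have hterm : ∀ F ∈ ff, cc F • hPolyZ rk F.1
        = ∑ G : NonemptyFlat rk,
            (if F.1 ⊆ G.1 then -(cc F) else 0) • MvPolynomial.X G := by
      intro F _
      rw [hPolyZ, smul_neg, ← neg_smul, Finset.smul_sum]
      refine Finset.sum_congr rfl fun G _ => ?_
      by_cases h : F.1 ⊆ G.1 <;> simp [h]
    rw [Finset.sum_congr rfl hterm, Finset.sum_comm]
    refine Finset.sum_congr rfl fun G _ => ?_
    rw [← Finset.sum_smul]
    congr 1
    rw [← Finset.sum_filter, ← Finset.sum_neg_distrib]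
  have hQ2 : Q = ∑ G : NonemptyFlat rk,
      (∑ i ∈ G.1, (bInt rk i - 1)) • MvPolynomial.X G := by
    rw [hQdef]
    have hterm : ∀ i : α, (bInt rk i - 1) •
        (∑ F : NonemptyFlat rk,
          if i ∈ F.1 then (MvPolynomial.X F : MvPolynomial (NonemptyFlat rk) ℤ) else 0)
        = ∑ F : NonemptyFlat rk,
            (if i ∈ F.1 then bInt rk i - 1 else 0) • MvPolynomial.X F := by
      intro i
      rw [Finset.smul_sum]
      refine Finset.sum_congr rfl fun F _ => ?_
      by_cases h : i ∈ F.1 <;> simp [h]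
    rw [Finset.sum_congr rfl (fun i _ => hterm i), Finset.sum_comm]
    refine Finset.sum_congr rfl fun G _ => ?_
    rw [← Finset.sum_smul]
    congr 1
    rw [Finset.sum_ite_mem, Finset.univ_inter]
  have hpoly : (∑ F : NonemptyFlat rk,
        (rkDual rk (Finset.univ \ F.1) - rkDual rk Finset.univ) • MvPolynomial.X F)
      = (∑ F ∈ ff, cc F • hPolyZ rk F.1) + Q := by
    rw [hP2, hQ2, ← Finset.sum_add_distrib]
    refine Finset.sum_congr rfl fun G _ => ?_
    rw [← add_smul]
    congr 1
    have hkey := key_lemma hM hloopless (G := G.1) G.2.2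
    have hfil : ff.filter (fun F => F.1 ⊆ G.1)
        = Finset.univ.filter
            (fun F : NonemptyFlat rk => (2 ≤ rk F.1 ∧ IsConnRes rk F.1) ∧ F.1 ⊆ G.1) := by
      rw [hff, Finset.filter_filter]
    rw [hfil]
    have hsumb : ∑ i ∈ G.1, (bInt rk i - 1) = (∑ i ∈ G.1, bInt rk i) - (G.1.card : ℤ) := by
      rw [Finset.sum_sub_distrib, Finset.sum_const, nsmul_eq_mul, mul_one]
    rw [hsumb, rkDual_diff hM, ← hcc]
    rw [hkey]
    ring
  rw [hpoly, map_add, Ideal.Quotient.eq_zero_iff_mem.2 hQmem, add_zero]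
end
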